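/- arXiv:1511.06023 — 11 statements merged into one kernel-verified Lean document; each statement's English description precedes it below -/
import Mathlib

section
/- For every finite simple graph G, the burning number b(G) equals the minimum length k of a sequence (x_1, ..., x_k) of vertices of G satisfying only the covering condition V(G) = N^{k-1}[x_1] ∪ N^{k-2}[x_2] ∪ ... ∪ N^0[x_k]; that is, the separation condition dist(x_i, x_j) ≥ j - i in the definition of a burning sequence is redundant. -/
/-- `ball G u k` is `N^k[u]`: the set of vertices `v` reachable from `u`
with `dist_G(u,v) ≤ k`. -/
def ball {V : Type*} (G : SimpleGraph V) (u : V) (k : ℕ) : Set V :=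
  {v | G.Reachable u v ∧ G.dist u v ≤ k}

/-- The burning number of `G`: the minimum length `k` of a sequence
`(x_1, …, x_k)` of vertices with `V(G) = N^{k-1}[x_1] ∪ ⋯ ∪ N^0[x_k]`. -/
noncomputable def burningNumber {V : Type*} (G : SimpleGraph V) : ℕ :=
  sInf {k | ∃ x : Fin k → V, ∀ v : V, ∃ i : Fin k, v ∈ ball G (x i) (k - 1 - (i : ℕ))}

/-- A burning sequence: the covering condition together with the separation
condition `dist(x_i, x_j) ≥ j - i` (which holds automatically when `x_i` and `x_j`
are not reachable from each other, the distance then being infinite). -/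
def IsBurningSeq {V : Type*} (G : SimpleGraph V) {k : ℕ} (x : Fin k → V) : Prop :=
  (∀ v : V, ∃ i : Fin k, v ∈ ball G (x i) (k - 1 - (i : ℕ))) ∧
  (∀ i j : Fin k, (j : ℕ) - (i : ℕ) ≤ G.dist (x i) (x j) ∨ ¬ G.Reachable (x i) (x j))

private lemma dist_triangle' {V : Type*} {G : SimpleGraph V} {u v w : V}
    (h1 : G.Reachable u v) (h2 : G.Reachable v w) :
    G.dist u w ≤ G.dist u v + G.dist v w := by
  obtain ⟨p, hp⟩ := h1.exists_walk_length_eq_dist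
  obtain ⟨q, hq⟩ := h2.exists_walk_length_eq_dist
  rw [← hp, ← hq, ← SimpleGraph.Walk.length_append]
  exact SimpleGraph.dist_le _

private lemma key {V : Type*} (G : SimpleGraph V) (k : ℕ) (x : Fin k → V)
    (hx : ∀ v : V, ∃ i : Fin k, v ∈ ball G (x i) (k - 1 - (i : ℕ))) :
    ∃ k' ≤ k, ∃ y : Fin k' → V, IsBurningSeq G y := by
  by_cases hV : Nonempty V
  swap
  · exact ⟨0, Nat.zero_le k, fun i => i.elim0,
      fun v => absurd ⟨v⟩ hV, fun i j => i.elim0⟩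
  -- extend x to a function on ℕ
  set x' : ℕ → V := fun n => if h : n < k then x ⟨n, h⟩ else Classical.arbitrary V with hx'
  have main : ∀ i, i ≤ k →
      (∃ k' ≤ k, ∃ y : Fin k' → V, IsBurningSeq G y) ∨
      ∃ y : ℕ → V,
        (∀ a b : ℕ, a < b → b < i →
          ((b - a) ≤ G.dist (y a) (y b) ∨ ¬ G.Reachable (y a) (y b))) ∧
        (∀ v : V, ∀ m : ℕ, m < i → v ∈ ball G (x' m) (k - 1 - m) →
          ∃ j < i, v ∈ ball G (y j) (k - 1 - j)) := by
    intro i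
    induction i with
    | zero =>
      intro _
      exact Or.inr ⟨x', fun a b _ hb => absurd hb (Nat.not_lt_zero b),
        fun v m hm => absurd hm (Nat.not_lt_zero m)⟩
    | succ i IH =>
      intro hik
      have hi : i ≤ k := Nat.le_of_succ_le hik
      rcases IH hi with done | ⟨y, hsep, hcov⟩
      · exact Or.inl done
      by_cases hA : ∀ j < i, ((i - j) ≤ G.dist (y j) (x' i) ∨ ¬ G.Reachable (y j) (x' i))
      · right
        refine ⟨Function.update y i (x' i), ?_, ?_⟩
        · intro a b hab hb
          rcases Nat.lt_succ_iff_lt_or_eq.mp hb with hb' | rfl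
          · have ha : a ≠ i := by omega
            have hbne : b ≠ i := by omega
            simpa [Function.update_of_ne ha, Function.update_of_ne hbne] using hsep a b hab hb'
          · have ha : a ≠ b := Nat.ne_of_lt hab
            simpa [Function.update_of_ne ha, Function.update_self] using hA a hab
        · intro v m hm hv
          rcases Nat.lt_succ_iff_lt_or_eq.mp hm with hm' | rfl
          · obtain ⟨j, hj, hvj⟩ := hcov v m hm' hv
            exact ⟨j, by omega,
              by simpa [Function.update_of_ne (show j ≠ i by omega)] using hvj⟩
          · exact ⟨m, Nat.lt_succ_self m, by simpa [Function.update_self] using hv⟩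
      · push_neg at hA
        obtain ⟨j, hj, hdist, hreach⟩ := hA
        by_cases hB : ∃ w : V, ∀ j' < i,
            ((i - j') ≤ G.dist (y j') w ∨ ¬ G.Reachable (y j') w)
        · obtain ⟨w, hw⟩ := hB
          right
          refine ⟨Function.update y i w, ?_, ?_⟩
          · intro a b hab hb
            rcases Nat.lt_succ_iff_lt_or_eq.mp hb with hb' | rfl
            · have ha : a ≠ i := by omega
              have hbne : b ≠ i := by omega
              simpa [Function.update_of_ne ha, Function.update_of_ne hbne] using hsep a b hab hb'
            · have ha : a ≠ b := Nat.ne_of_lt hab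
              simpa [Function.update_of_ne ha, Function.update_self] using hw a hab
          · intro v m hm hv
            rcases Nat.lt_succ_iff_lt_or_eq.mp hm with hm' | rfl
            · obtain ⟨j', hj', hvj⟩ := hcov v m hm' hv
              exact ⟨j', by omega,
                by simpa [Function.update_of_ne (show j' ≠ i by omega)] using hvj⟩
            · -- the ball of x' m (m = i) is contained in the ball of y j
              obtain ⟨hr, hd⟩ := hv
              refine ⟨j, by omega, ?_, ?_⟩
              · rw [Function.update_of_ne (show j ≠ m by omega)]
                exact hreach.trans hr
              · rw [Function.update_of_ne (show j ≠ m by omega)]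
                have ht := dist_triangle' hreach hr
                omega
        · push_neg at hB
          left
          refine ⟨i, hi, fun t => y t, ?_, ?_⟩
          · intro v
            obtain ⟨j', hj', hd, hr⟩ := hB v
            exact ⟨⟨j', hj'⟩, hr, by simp only []; omega⟩
          · intro a b
            by_cases hab : (a : ℕ) < (b : ℕ)
            · exact hsep a b hab b.isLt
            · exact Or.inl (by omega)
  rcases main k le_rfl with done | ⟨y, hsep, hcov⟩
  · exact done
  refine ⟨k, le_rfl, fun t => y t, ?_, ?_⟩
  · intro v
    obtain ⟨m, hvm⟩ := hx v
    have hxm : x' (m : ℕ) = x m := by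
      simp only [hx', dif_pos m.isLt]
    obtain ⟨j, hjk, hvj⟩ := hcov v m m.isLt (by rw [hxm]; exact hvm)
    exact ⟨⟨j, hjk⟩, hvj⟩
  · intro a b
    by_cases hab : (a : ℕ) < (b : ℕ)
    · exact hsep a b hab b.isLt
    · exact Or.inl (by omega)

/-- The separation condition in the definition of the burning number is redundant:
the minimum length of a burning sequence equals the minimum length of a sequence
satisfying only the covering condition. -/
theorem burning_separation_redundant {V : Type*} [Fintype V] (G : SimpleGraph V) :
    sInf {k | ∃ x : Fin k → V, IsBurningSeq G x} = burningNumber G := by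
  unfold burningNumber
  set SC := {k | ∃ x : Fin k → V, ∀ v : V, ∃ i : Fin k, v ∈ ball G (x i) (k - 1 - (i : ℕ))}
    with hSC
  set SB := {k | ∃ x : Fin k → V, IsBurningSeq G x} with hSB
  have hsub : SB ⊆ SC := fun k ⟨x, hx⟩ => ⟨x, hx.1⟩
  by_cases hc : SC.Nonempty
  · obtain ⟨x, hx⟩ := Nat.sInf_mem hc
    obtain ⟨k', hk', y, hy⟩ := key G _ x hx
    have h1 : sInf SB ≤ sInf SC := le_trans (Nat.sInf_le ⟨y, hy⟩) hk'
    have h2 : sInf SC ≤ sInf SB := Nat.sInf_le (hsub (Nat.sInf_mem ⟨k', y, hy⟩))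
    exact le_antisymm h1 h2
  · have hb : ¬ SB.Nonempty := fun h => hc (h.mono hsub)
    rw [Set.not_nonempty_iff_eq_empty] at hc hb
    rw [hb, hc]
end

section
/- For every finite simple graph G and every nonnegative integer k such that G has a distance-k-dominating set, b(G) ≤ γ_k(G) + k, where γ_k(G) is the distance-k-domination number of G. -/
/-- `D` is a distance-`k`-dominating set of `G`. -/
def IsDistDomSet {V : Type*} (G : SimpleGraph V) (k : ℕ) (D : Finset V) : Prop :=
  ∀ v : V, ∃ u ∈ D, v ∈ ball G u k

/-- The distance-`k`-domination number of `G`. -/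
noncomputable def distDomNumber {V : Type*} (G : SimpleGraph V) (k : ℕ) : ℕ :=
  sInf {m | ∃ D : Finset V, D.card = m ∧ IsDistDomSet G k D}

theorem burning_le_distDom_add {V : Type*} [Fintype V] (G : SimpleGraph V) (k : ℕ)
    (h : ∃ D : Finset V, IsDistDomSet G k D) :
    burningNumber G ≤ distDomNumber G k + k := by
  classical
  obtain ⟨D₀, hD₀⟩ := h
  have hne : {m | ∃ D : Finset V, D.card = m ∧ IsDistDomSet G k D}.Nonempty :=
    ⟨D₀.card, D₀, rfl, hD₀⟩
  obtain ⟨D, hcard, hdom⟩ := Nat.sInf_mem hne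
  set m := distDomNumber G k with hm
  cases isEmpty_or_nonempty V with
  | inl hV =>
    have h0 : (0 : ℕ) ∈ {n | ∃ x : Fin n → V, ∀ v : V, ∃ i : Fin n,
        v ∈ ball G (x i) (n - 1 - (i : ℕ))} :=
      ⟨Fin.elim0, fun v => isEmptyElim v⟩
    calc burningNumber G ≤ 0 := Nat.sInf_le h0
    _ ≤ m + k := Nat.zero_le _
  | inr hV =>
    apply Nat.sInf_le
    refine ⟨fun i => if h : (i : ℕ) < D.card then (D.equivFin.symm ⟨i, h⟩ : V)
      else Classical.arbitrary V, fun v => ?_⟩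
    obtain ⟨u, hu, hreach, hdist⟩ := hdom v
    set j : Fin D.card := D.equivFin ⟨u, hu⟩ with hj
    have hjm : (j : ℕ) < m := by
      have := j.isLt
      exact lt_of_lt_of_eq this hcard
    refine ⟨⟨(j : ℕ), lt_of_lt_of_le hjm (Nat.le_add_right m k)⟩, ?_⟩
    have hx : (if h : (j : ℕ) < D.card then (D.equivFin.symm ⟨(j : ℕ), h⟩ : V)
        else Classical.arbitrary V) = u := by
      rw [dif_pos j.isLt]
      simp [hj]
    simp only [hx]
    exact ⟨hreach, le_trans hdist (by omega)⟩
end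

section
/- (Meir–Moon) If G is a finite connected simple graph of order n with n ≥ k + 1, where k is a nonnegative integer, then the distance-k-domination number satisfies γ_k(G) ≤ n/(k+1). -/
open SimpleGraph Finset

/-- Iterated application of a (parent) function. -/
def anc {V : Type*} (p : V → V) : V → ℕ → V
  | v, 0 => v
  | v, n + 1 => anc p (p v) n

@[simp] lemma anc_zero {V : Type*} (p : V → V) (v : V) : anc p v 0 = v := rfl

@[simp] lemma anc_succ {V : Type*} (p : V → V) (v : V) (n : ℕ) :
    anc p v (n + 1) = anc p (p v) n := rfl

lemma anc_add {V : Type*} (p : V → V) (a b : ℕ) : ∀ v : V,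
    anc p v (a + b) = anc p (anc p v a) b := by
  induction a with
  | zero => intro v; simp
  | succ a ih =>
      intro v
      have : a + 1 + b = (a + b) + 1 := by omega
      rw [this, anc_succ, anc_succ, ih]

lemma anc_fixed {V : Type*} {p : V → V} {r : V} (h : p r = r) (m : ℕ) :
    anc p r m = r := by
  induction m with
  | zero => rfl
  | succ m ih => rw [anc_succ, h, ih]

universe u

lemma meir_moon_key (k : ℕ) : ∀ (N : ℕ) (V : Type u) [Fintype V] (G : SimpleGraph V),
    Fintype.card V = N → G.Connected → k + 1 ≤ Fintype.card V →
    ∃ D : Finset V, IsDistDomSet G k D ∧ (k + 1) * D.card ≤ Fintype.card V := by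
  intro N
  induction N using Nat.strong_induction_on with
  | _ N IH =>
  intro V _ G hcard hG hn
  classical
  by_cases hecc : ∃ r : V, ∀ v : V, G.dist r v ≤ k
  · obtain ⟨r, hr⟩ := hecc
    refine ⟨{r}, fun v => ⟨r, mem_singleton_self r, hG r v, hr v⟩, ?_⟩
    simpa using hn
  · push_neg at hecc
    obtain ⟨r⟩ := hG.nonempty
    set depth : V → ℕ := fun v => G.dist r v with hdepthdef
    have hdepthr : depth r = 0 := SimpleGraph.dist_self
    obtain ⟨u, -, hu⟩ := Finset.exists_max_image Finset.univ depth ⟨r, mem_univ r⟩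
    have hu' : ∀ v : V, depth v ≤ depth u := fun v => hu v (mem_univ v)
    set e := depth u with he
    have hek : k + 1 ≤ e := by
      obtain ⟨v, hv⟩ := hecc r
      have h1 := hu' v
      have h2 : depth v = G.dist r v := rfl
      omega
    -- parent function
    have hpar : ∀ v : V, v ≠ r → ∃ p : V, G.Adj p v ∧ depth p + 1 = depth v := by
      intro v hv
      have hd0 : G.dist v r ≠ 0 := by
        intro h
        exact hv ((hG.dist_eq_zero_iff).mp h)
      obtain ⟨p, hp⟩ := (hG v r).exists_walk_length_eq_dist
      cases p with
      | nil => exact absurd rfl hv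
      | @cons _ x _ hadj q =>
          refine ⟨x, hadj.symm, ?_⟩
          have h1 : G.dist r x ≤ q.length := by
            rw [SimpleGraph.dist_comm]; exact SimpleGraph.dist_le q
          have h2 : G.dist r v ≤ G.dist r x + G.dist x v := hG.dist_triangle
          have h3 : G.dist x v = 1 := SimpleGraph.dist_eq_one_iff_adj.mpr hadj.symm
          have h4 : q.length + 1 = G.dist v r := by
            simpa using hp
          have h5 : G.dist v r = G.dist r v := SimpleGraph.dist_comm
          have h6 : depth x = G.dist r x := rfl
          have h7 : depth v = G.dist r v := rfl
          omega
    set P : V → V := fun v => if h : v = r then r else (hpar v h).choose with hPdef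
    have hPr : P r = r := by simp [hPdef]
    have hPadj : ∀ v : V, v ≠ r → G.Adj (P v) v := by
      intro v hv
      have := (hpar v hv).choose_spec.1
      simpa [hPdef, dif_neg hv] using this
    have hPdepth : ∀ v : V, v ≠ r → depth (P v) + 1 = depth v := by
      intro v hv
      have := (hpar v hv).choose_spec.2
      simpa [hPdef, dif_neg hv] using this
    have hdepth_ne : ∀ v : V, depth v ≠ 0 → v ≠ r := by
      intro v hv h; rw [h, hdepthr] at hv; exact hv rfl
    -- depth of ancestors
    have hanc_depth : ∀ m : ℕ, ∀ v : V, m ≤ depth v → depth (anc P v m) + m = depth v := by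
      intro m
      induction m with
      | zero => intro v _; simp
      | succ m ih =>
          intro v hm
          have hvr : v ≠ r := hdepth_ne v (by omega)
          have h1 := hPdepth v hvr
          have h2 := ih (P v) (by omega)
          rw [anc_succ]
          omega
    have hanc_dist : ∀ m : ℕ, ∀ v : V, G.dist (anc P v m) v ≤ m := by
      intro m
      induction m with
      | zero => intro v; simp [SimpleGraph.dist_self]
      | succ m ih =>
          intro v
          by_cases hvr : v = r
          · subst hvr
            rw [anc_succ, hPr, anc_fixed hPr, SimpleGraph.dist_self]
            omega
          · have h1 : G.dist (P v) v = 1 :=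
              SimpleGraph.dist_eq_one_iff_adj.mpr (hPadj v hvr)
            have h2 := ih (P v)
            have h3 : G.dist (anc P (P v) m) v ≤
                G.dist (anc P (P v) m) (P v) + G.dist (P v) v := hG.dist_triangle
            rw [anc_succ]
            omega
    set w : V := anc P u k with hwdef
    have hdw : depth w + k = e := hanc_depth k u (by omega)
    have hwr : w ≠ r := hdepth_ne w (by omega)
    set A : Finset V :=
      Finset.univ.filter (fun x => depth w ≤ depth x ∧ anc P x (depth x - depth w) = w)
      with hAdef
    have hmemA : ∀ x : V, x ∈ A ↔ depth w ≤ depth x ∧ anc P x (depth x - depth w) = w := by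
      intro x; simp [hAdef]
    have hAcov : ∀ x ∈ A, G.dist w x ≤ k := by
      intro x hx
      rw [hmemA] at hx
      obtain ⟨h1, h2⟩ := hx
      have h3 := hanc_dist (depth x - depth w) x
      rw [h2] at h3
      have h4 := hu' x
      omega
    have hAcard : k + 1 ≤ A.card := by
      have : (Finset.range (k + 1)).card ≤ A.card := by
        apply Finset.card_le_card_of_injOn (fun j => anc P u j)
        · intro j hj
          rw [Finset.mem_coe, Finset.mem_range] at hj
          have hj' : j ≤ k := by omega
          have hd1 : depth (anc P u j) + j = e := hanc_depth j u (by omega)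
          rw [Finset.mem_coe, hmemA]
          beta_reduce
          constructor
          · omega
          · have hsub : depth (anc P u j) - depth w = k - j := by omega
            rw [hsub, ← anc_add]
            have : j + (k - j) = k := by omega
            rw [this]
        · intro a ha b hb hab
          simp only [Finset.coe_range, Set.mem_Iio] at ha hb
          simp only at hab
          have hda : depth (anc P u a) + a = e := hanc_depth a u (by omega)
          have hdb : depth (anc P u b) + b = e := hanc_depth b u (by omega)
          rw [hab] at hda
          omega
      simpa using this
    set S : Finset V := Aᶜ with hSdef
    have hcardsum : S.card + A.card = Fintype.card V := by
      rw [hSdef, Finset.card_compl]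
      have : A.card ≤ Fintype.card V := Finset.card_le_univ A
      omega
    have hrS : r ∈ S := by
      rw [hSdef, Finset.mem_compl, hmemA]
      intro ⟨h1, _⟩
      omega
    have hclose : ∀ x : V, x ≠ r → P x ∈ A → x ∈ A := by
      intro x hxr hPx
      rw [hmemA] at hPx ⊢
      obtain ⟨h1, h2⟩ := hPx
      have h3 := hPdepth x hxr
      refine ⟨by omega, ?_⟩
      have : depth x - depth w = (depth (P x) - depth w) + 1 := by omega
      rw [this]
      rw [anc_succ]  -- anc P x (m+1) = anc P (P x) m? no: anc_succ gives anc p v (n+1) = anc p (p v) n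
      exact h2
    set sS : Set V := ↑S with hsSdef
    have hmem_sS : ∀ x : V, x ∈ sS ↔ x ∈ S := fun x => Finset.mem_coe
    -- reachability inside the induced graph
    have hreach : ∀ n : ℕ, ∀ x : V, ∀ hx : x ∈ sS, depth x = n →
        (G.induce sS).Reachable ⟨x, hx⟩ ⟨r, (hmem_sS r).mpr hrS⟩ := by
      intro n
      induction n using Nat.strong_induction_on with
      | _ n IH2 =>
      intro x hx hdx
      by_cases hxr : x = r
      · have : (⟨x, hx⟩ : sS) = ⟨r, (hmem_sS r).mpr hrS⟩ := Subtype.ext hxr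
        rw [this]
      · have hPxS : P x ∈ sS := by
          rw [hmem_sS, hSdef, Finset.mem_compl]
          intro hPxA
          have := hclose x hxr hPxA
          rw [hmem_sS, hSdef, Finset.mem_compl] at hx
          exact hx this
        have hadj' : (G.induce sS).Adj ⟨x, hx⟩ ⟨P x, hPxS⟩ := (hPadj x hxr).symm
        have hdP := hPdepth x hxr
        exact hadj'.reachable.trans (IH2 (depth (P x)) (by omega) (P x) hPxS rfl)
    have hG'conn : (G.induce sS).Connected := by
      rw [connected_iff]
      constructor
      · intro a b
        have ha := hreach (depth a.1) a.1 a.2 rfl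
        have hb := hreach (depth b.1) b.1 b.2 rfl
        exact ha.trans hb.symm
      · exact ⟨⟨r, (hmem_sS r).mpr hrS⟩⟩
    have hcard_sS : Fintype.card sS = S.card := Fintype.card_coe S
    -- transfer distances from the induced graph to G
    have htrans : ∀ a b : sS, (G.induce sS).Reachable a b →
        G.dist (a : V) (b : V) ≤ (G.induce sS).dist a b := by
      intro a b hab
      obtain ⟨p, hp⟩ := hab.exists_walk_length_eq_dist
      calc G.dist (a : V) (b : V) ≤ (p.map (SimpleGraph.Embedding.induce sS).toHom).length :=
            SimpleGraph.dist_le _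
        _ = p.length := SimpleGraph.Walk.length_map _ _
        _ = _ := hp
    by_cases hScard : k + 1 ≤ S.card
    · -- recurse on the induced graph
      have hlt : S.card < N := by omega
      obtain ⟨D', hD'dom, hD'card⟩ :=
        IH S.card hlt sS (G.induce sS) hcard_sS hG'conn (by omega : k + 1 ≤ Fintype.card sS)
      refine ⟨insert w (D'.image (Subtype.val : sS → V)), ?_, ?_⟩
      · intro v
        by_cases hv : v ∈ A
        · exact ⟨w, Finset.mem_insert_self _ _, hG w v, hAcov v hv⟩
        · have hvS : v ∈ sS := by
            rw [hmem_sS, hSdef, Finset.mem_compl]; exact hv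
          obtain ⟨u', hu'D, hu'r, hu'd⟩ := hD'dom ⟨v, hvS⟩
          refine ⟨(u' : V), ?_, hG _ v, ?_⟩
          · exact Finset.mem_insert_of_mem (Finset.mem_image.mpr ⟨u', hu'D, rfl⟩)
          · calc G.dist (u' : V) v ≤ (G.induce sS).dist u' ⟨v, hvS⟩ := htrans _ _ hu'r
              _ ≤ k := hu'd
      · have h1 : (insert w (D'.image (Subtype.val : sS → V))).card ≤ D'.card + 1 := by
          calc (insert w (D'.image (Subtype.val : sS → V))).card
              ≤ (D'.image (Subtype.val : sS → V)).card + 1 := Finset.card_insert_le _ _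
            _ ≤ D'.card + 1 := by
                have := Finset.card_image_le (s := D') (f := (Subtype.val : sS → V))
                omega
        rw [hcard_sS] at hD'card
        calc (k + 1) * (insert w (D'.image (Subtype.val : sS → V))).card
            ≤ (k + 1) * (D'.card + 1) := Nat.mul_le_mul_left _ h1
          _ = (k + 1) * D'.card + (k + 1) := Nat.mul_succ _ _
          _ ≤ S.card + A.card := Nat.add_le_add hD'card hAcard
          _ = Fintype.card V := hcardsum
    · -- S is small: w alone dominates everything
      refine ⟨{w}, ?_, by simpa using hn⟩
      intro v
      refine ⟨w, Finset.mem_singleton_self w, hG w v, ?_⟩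
      by_cases hv : v ∈ A
      · exact hAcov v hv
      · have hvS : v ∈ sS := by
          rw [hmem_sS, hSdef, Finset.mem_compl]; exact hv
        have hPwS : P w ∈ sS := by
          rw [hmem_sS, hSdef, Finset.mem_compl, hmemA]
          intro ⟨h1, _⟩
          have := hPdepth w hwr
          omega
        have hrch : (G.induce sS).Reachable ⟨v, hvS⟩ ⟨P w, hPwS⟩ := by
          have ha := hreach (depth v) v hvS rfl
          have hb := hreach (depth (P w)) (P w) hPwS rfl
          exact ha.trans hb.symm
        obtain ⟨p⟩ := hrch
        have hlen : p.toPath.1.length < Fintype.card sS := p.toPath.2.length_lt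
        have hd1 : G.dist v (P w) ≤ p.toPath.1.length := by
          calc G.dist v (P w)
              ≤ (p.toPath.1.map (SimpleGraph.Embedding.induce sS).toHom).length :=
                SimpleGraph.dist_le _
            _ = p.toPath.1.length := SimpleGraph.Walk.length_map _ _
        have hd2 : G.dist (P w) w = 1 :=
          SimpleGraph.dist_eq_one_iff_adj.mpr (hPadj w hwr)
        have hd3 : G.dist v w ≤ G.dist v (P w) + G.dist (P w) w := hG.dist_triangle
        have hcomm : G.dist w v = G.dist v w := SimpleGraph.dist_comm
        rw [hcard_sS] at hlen
        omega

/-- Meir–Moon: if `G` is connected of order `n ≥ k + 1`, then `γ_k(G) ≤ n / (k + 1)`. -/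
theorem meir_moon {V : Type*} [Fintype V] (G : SimpleGraph V) (k : ℕ)
    (hG : G.Connected) (hn : k + 1 ≤ Fintype.card V) :
    (distDomNumber G k : ℝ) ≤ (Fintype.card V : ℝ) / (k + 1) := by
  obtain ⟨D, hDdom, hDcard⟩ :=
    meir_moon_key k (Fintype.card V) V G rfl hG hn
  have h1 : distDomNumber G k ≤ D.card :=
    Nat.sInf_le ⟨D, rfl, hDdom⟩
  have h2 : (k + 1) * distDomNumber G k ≤ Fintype.card V :=
    le_trans (Nat.mul_le_mul_left _ h1) hDcard
  have hk : (0 : ℝ) < (k : ℝ) + 1 := by positivity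
  rw [le_div_iff₀ hk]
  have := (Nat.cast_le (α := ℝ)).mpr h2
  push_cast at this
  linarith
end

section
/- If G is a finite connected simple graph of order n, then b(G) ≤ 2⌈√n⌉ − 1. -/
section aux
open Function

variable {V : Type*} {G : SimpleGraph V}

/-- Every non-root vertex has a parent strictly closer to the root. -/
lemma exists_parent (hG : G.Connected) (s v : V) (h : v ≠ s) :
    ∃ w, G.Adj v w ∧ G.dist s w + 1 = G.dist s v := by
  have hd : 0 < G.dist s v := hG.pos_dist_of_ne (Ne.symm h)
  obtain ⟨p, hp⟩ := (hG s v).exists_walk_length_eq_dist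
  obtain ⟨w, hadj, q, hq⟩ := SimpleGraph.Walk.exists_eq_cons_of_ne h p.reverse
  refine ⟨w, hadj, ?_⟩
  have hlen : q.length + 1 = G.dist s v := by
    have := congrArg SimpleGraph.Walk.length hq
    simp only [SimpleGraph.Walk.length_reverse, SimpleGraph.Walk.length_cons] at this
    omega
  have h1 : G.dist s w ≤ q.length := by
    simpa using SimpleGraph.dist_le q.reverse
  have h2 : G.dist s v ≤ G.dist s w + 1 := by
    have := hG.dist_triangle (u := s) (v := w) (w := v)
    have hw : G.dist w v ≤ 1 := by
      rw [SimpleGraph.dist_comm]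
      exact le_of_eq (SimpleGraph.dist_eq_one_iff_adj.mpr hadj)
    omega
  omega

variable {s : V} {p : V → V}

/-- hypotheses bundle on the parent function -/
def ParentFun (G : SimpleGraph V) (s : V) (p : V → V) : Prop :=
  p s = s ∧ ∀ v, v ≠ s → G.Adj v (p v) ∧ G.dist s (p v) + 1 = G.dist s v

lemma parent_iter (hG : G.Connected) (hp : ParentFun G s p) :
    ∀ m v, m ≤ G.dist s v →
      G.dist s (p^[m] v) = G.dist s v - m ∧ G.dist (p^[m] v) v ≤ m := by
  intro m
  induction m with
  | zero => intro v _; simp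
  | succ m ih =>
      intro v hm
      have hvs : v ≠ s := by
        rintro rfl; simp [SimpleGraph.dist_self] at hm
      obtain ⟨hadj, hdist⟩ := hp.2 v hvs
      have hm' : m ≤ G.dist s (p v) := by omega
      obtain ⟨h1, h2⟩ := ih (p v) hm'
      rw [Function.iterate_succ_apply]
      constructor
      · rw [h1]; omega
      · have htri := hG.dist_triangle (u := p^[m] (p v)) (v := p v) (w := v)
        have hone : G.dist (p v) v ≤ 1 := by
          rw [SimpleGraph.dist_comm]
          exact le_of_eq (SimpleGraph.dist_eq_one_iff_adj.mpr hadj)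
        omega

lemma parent_iter_root (hG : G.Connected) (hp : ParentFun G s p) (v : V) :
    p^[G.dist s v] v = s := by
  obtain ⟨h1, _⟩ := parent_iter hG hp (G.dist s v) v le_rfl
  simp only [Nat.sub_self] at h1
  exact (hG.dist_eq_zero_iff.mp h1).symm

/-- main covering lemma: a parent-closed finite set of at most `j*k` vertices
is covered by `j` balls of radius `k-1`. -/
lemma cover (hG : G.Connected) (hp : ParentFun G s p) (k : ℕ) (hk : 1 ≤ k) :
    ∀ (j : ℕ) (A : Finset V), (∀ v ∈ A, v ≠ s → p v ∈ A) → A.card ≤ j * k →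
      ∃ c : Fin j → V, ∀ v ∈ A, ∃ i, G.dist (c i) v ≤ k - 1 := by
  classical
  intro j
  induction j with
  | zero =>
      intro A _ hcard
      refine ⟨fun i => i.elim0, fun v hv => ?_⟩
      simp at hcard
      simp [hcard] at hv
  | succ j ih =>
      intro A hclosed hcard
      by_cases hsmall : ∀ v ∈ A, G.dist s v ≤ k - 1
      · exact ⟨fun _ => s, fun v hv => ⟨0, hsmall v hv⟩⟩
      push_neg at hsmall
      obtain ⟨v0, hv0A, hv0⟩ := hsmall
      have hAne : A.Nonempty := ⟨v0, hv0A⟩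
      obtain ⟨x, hxA, hxmax⟩ := A.exists_max_image (fun v => G.dist s v) hAne
      have hxk : k ≤ G.dist s x := by
        have := hxmax v0 hv0A; omega
      set u := p^[k-1] x with hu
      have hux := parent_iter hG hp (k-1) x (by omega)
      have hud : G.dist s u = G.dist s x - (k-1) := hux.1
      have hus : u ≠ s := by
        intro h
        rw [h, SimpleGraph.dist_self] at hud; omega
      set D := A.filter (fun v => ∃ m ≤ G.dist s v, p^[m] v = u) with hD
      -- every element of D is within k-1 of u
      have hDcov : ∀ v ∈ D, G.dist u v ≤ k - 1 := by
        intro v hv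
        rw [hD, Finset.mem_filter] at hv
        obtain ⟨hvA, hpred⟩ := hv
        obtain ⟨m, hm, hmu⟩ := hpred
        obtain ⟨h1, h2⟩ := parent_iter hG hp m v hm
        rw [hmu] at h1 h2
        have : m ≤ k - 1 := by
          have := hxmax v hvA; omega
        omega
      -- the k iterates of x are in D and distinct
      have hchainA : ∀ i, i ≤ k - 1 → p^[i] x ∈ A := by
        intro i
        induction i with
        | zero => intro _; simpa using hxA
        | succ i ih2 =>
            intro hi
            have hiA := ih2 (by omega)
            have hne : p^[i] x ≠ s := by
              intro h
              have := (parent_iter hG hp i x (by omega)).1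
              rw [h, SimpleGraph.dist_self] at this; omega
            rw [Function.iterate_succ_apply']
            exact hclosed _ hiA hne
      have hchainD : ∀ i, i ≤ k - 1 → p^[i] x ∈ D := by
        intro i hi
        rw [hD, Finset.mem_filter]
        refine ⟨hchainA i hi, k - 1 - i, ?_, ?_⟩
        · have := (parent_iter hG hp i x (by omega)).1; omega
        · rw [← Function.iterate_add_apply]
          have : k - 1 - i + i = k - 1 := by omega
          rw [this]
      have hDcard : k ≤ D.card := by
        have hinj : Set.InjOn (fun i => p^[i] x) (Finset.range k) := by
          intro a ha b hb hab
          simp only [Finset.coe_range, Set.mem_Iio] at ha hb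
          have h1 := (parent_iter hG hp a x (by omega)).1
          have h2 := (parent_iter hG hp b x (by omega)).1
          simp only at hab
          rw [hab] at h1
          omega
        calc k = ((Finset.range k).image (fun i => p^[i] x)).card := by
                  rw [Finset.card_image_of_injOn hinj, Finset.card_range]
          _ ≤ D.card := by
                  apply Finset.card_le_card
                  intro y hy
                  simp only [Finset.mem_image, Finset.mem_range] at hy
                  obtain ⟨i, hi, rfl⟩ := hy
                  exact hchainD i (by omega)
      -- remove D and induct
      set A' := A \ D with hA'
      have hclosed' : ∀ v ∈ A', v ≠ s → p v ∈ A' := by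
        intro v hv hvs
        rw [hA', Finset.mem_sdiff] at hv ⊢
        refine ⟨hclosed v hv.1 hvs, ?_⟩
        intro hpv
        apply hv.2
        rw [hD, Finset.mem_filter] at hpv ⊢
        obtain ⟨_, m, hm, hmu⟩ := hpv
        refine ⟨hv.1, m + 1, ?_, ?_⟩
        · have := (hp.2 v hvs).2; omega
        · rw [Function.iterate_succ_apply]; exact hmu
      have hcard' : A'.card ≤ j * k := by
        have hDsub : D ⊆ A := Finset.filter_subset _ _
        have := Finset.card_sdiff_add_card_eq_card hDsub
        have := Finset.card_le_card hDsub
        rw [hA']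
        have hcs : (A \ D).card = A.card - D.card := Finset.card_sdiff_of_subset hDsub
        rw [hcs]
        have : (j + 1) * k = j * k + k := by ring
        omega
      obtain ⟨c', hc'⟩ := ih A' hclosed' hcard'
      refine ⟨Fin.cons u c', fun v hv => ?_⟩
      by_cases hvD : v ∈ D
      · exact ⟨0, hDcov v hvD⟩
      · obtain ⟨i, hi⟩ := hc' v (by rw [hA', Finset.mem_sdiff]; exact ⟨hv, hvD⟩)
        exact ⟨i.succ, hi⟩

end aux

theorem burning_le_two_ceil_sqrt_sub_one {V : Type*} [Fintype V] (G : SimpleGraph V)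
    (hG : G.Connected) :
    burningNumber G ≤ 2 * ⌈Real.sqrt (Fintype.card V)⌉₊ - 1 := by
  classical
  obtain ⟨s⟩ := hG.nonempty
  haveI : Nonempty V := ⟨s⟩
  set n := Fintype.card V with hn
  have hn1 : 1 ≤ n := Fintype.card_pos
  set k := ⌈Real.sqrt n⌉₊ with hk
  have hk1 : 1 ≤ k := by
    rw [hk]
    have : (1:ℝ) ≤ Real.sqrt n := by
      rw [show (1:ℝ) = Real.sqrt 1 by simp]
      exact Real.sqrt_le_sqrt (by exact_mod_cast hn1)
    exact Nat.one_le_iff_ne_zero.mpr (by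
      intro h
      rw [Nat.ceil_eq_zero] at h
      linarith)
  have hnk : n ≤ k * k := by
    have h1 : Real.sqrt n ≤ k := Nat.le_ceil _
    have h2 : (n:ℝ) = Real.sqrt n * Real.sqrt n := by
      rw [Real.mul_self_sqrt (by positivity)]
    have h3 : (n:ℝ) ≤ (k:ℝ) * k := by
      rw [h2]
      have h0 : (0:ℝ) ≤ Real.sqrt n := Real.sqrt_nonneg _
      nlinarith
    exact_mod_cast h3
  -- parent function
  have hpar : ∃ p : V → V, ParentFun G s p := by
    choose f hf using fun v (h : v ≠ s) => exists_parent hG s v h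
    refine ⟨fun v => if h : v = s then s else f v h, by simp, fun v hv => ?_⟩
    simp only [dif_neg hv]
    exact hf v hv
  obtain ⟨p, hp⟩ := hpar
  obtain ⟨c, hc⟩ := cover hG hp k hk1 k Finset.univ (by simp) (by simpa using hnk)
  have hmem : (2 * k - 1) ∈ {m | ∃ x : Fin m → V, ∀ v : V,
      ∃ i : Fin m, v ∈ ball G (x i) (m - 1 - (i : ℕ))} := by
    refine ⟨fun i => if h : (i : ℕ) < k then c ⟨i, h⟩ else s, fun v => ?_⟩
    obtain ⟨i, hi⟩ := hc v (Finset.mem_univ v)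
    refine ⟨⟨i, by omega⟩, ?_⟩
    have hilt : (i : ℕ) < k := i.isLt
    constructor
    · simp only [hilt, dif_pos]
      exact hG _ _
    · simp only [hilt, dif_pos]
      have : G.dist (c ⟨(i:ℕ), hilt⟩) v ≤ k - 1 := by
        convert hi using 3
      omega
  exact Nat.sInf_le hmem
end

section
/- Let T be a finite tree and let d be a nonnegative integer such that N^d[u] ≠ V(T) for every vertex u of T. Then there exist a vertex x of T and a subtree T' of T (a nonempty connected induced subgraph, or the empty graph) such that T' has at most n(T) − (d+1) vertices and V(T) \ V(T') ⊆ N^d[x]. -/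
section Helpers

open SimpleGraph

variable {V : Type*} [DecidableEq V] {T : SimpleGraph V}

/-- In a tree, every path from `u` to `v` has length `dist u v`. -/
lemma tree_path_length (hT : T.IsTree) {u v : V} (p : T.Walk u v) (hp : p.IsPath) :
    p.length = T.dist u v := by
  obtain ⟨q, hq⟩ := (hT.isConnected.preconnected u v).exists_walk_length_eq_dist
  have hqb : q.bypass.length = T.dist u v :=
    le_antisymm (hq ▸ q.length_bypass_le) (SimpleGraph.dist_le q.bypass)
  have := hT.IsAcyclic.path_unique ⟨p, hp⟩ ⟨q.bypass, q.bypass_isPath⟩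
  rw [show p = q.bypass from congrArg Subtype.val this]
  exact hqb

lemma exists_geodesic (hT : T.IsTree) (u v : V) :
    ∃ p : T.Walk u v, p.IsPath ∧ p.length = T.dist u v := by
  obtain ⟨q, hq⟩ := (hT.isConnected.preconnected u v).exists_walk_length_eq_dist
  exact ⟨q.bypass, q.bypass_isPath,
    le_antisymm (hq ▸ q.length_bypass_le) (SimpleGraph.dist_le q.bypass)⟩

lemma dist_getVert_getVert (hc : T.Connected) {u v : V} (p : T.Walk u v) {i j : ℕ}
    (hij : i ≤ j) (hj : j ≤ p.length) :
    T.dist (p.getVert i) (p.getVert j) ≤ j - i := by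
  induction j, hij using Nat.le_induction with
  | base => simp
  | succ k hik ih =>
    have h1 : T.dist (p.getVert i) (p.getVert k) ≤ k - i := ih (by omega)
    have h2 : T.Adj (p.getVert k) (p.getVert (k + 1)) := p.adj_getVert_succ (by omega)
    have h3 : T.dist (p.getVert k) (p.getVert (k+1)) = 1 := SimpleGraph.dist_eq_one_iff_adj.mpr h2
    have := hc.dist_triangle (u := p.getVert i) (v := p.getVert k) (w := p.getVert (k+1))
    omega

lemma dist_getVert_left (hc : T.Connected) {u v : V} (p : T.Walk u v) {i : ℕ}
    (hi : i ≤ p.length) : T.dist u (p.getVert i) ≤ i := by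
  simpa using dist_getVert_getVert hc p (Nat.zero_le i) hi

lemma dist_getVert_right (hc : T.Connected) {u v : V} (p : T.Walk u v) {i : ℕ}
    (hi : i ≤ p.length) : T.dist (p.getVert i) v ≤ p.length - i := by
  have h := dist_getVert_getVert hc p hi (le_refl p.length)
  simpa using h

/-- On a geodesic walk, distances to the endpoints split. -/
lemma geodesic_getVert (hc : T.Connected) {u v : V} (p : T.Walk u v)
    (hlen : p.length = T.dist u v) {i : ℕ} (hi : i ≤ p.length) :
    T.dist u (p.getVert i) = i ∧ T.dist (p.getVert i) v = p.length - i := by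
  have h1 := dist_getVert_left hc p hi
  have h2 := dist_getVert_right hc p hi
  have h3 := hc.dist_triangle (u := u) (v := p.getVert i) (w := v)
  omega

lemma geodesic_support (hc : T.Connected) {u v z : V} (p : T.Walk u v)
    (hlen : p.length = T.dist u v) (hz : z ∈ p.support) :
    T.dist u z + T.dist z v = T.dist u v := by
  obtain ⟨i, hiz, hi⟩ := SimpleGraph.Walk.mem_support_iff_exists_getVert.mp hz
  subst hiz
  have := geodesic_getVert hc p hlen hi
  omega

/-- Dichotomy: for an edge `xy` of a tree, every vertex is strictly closer
to one endpoint than the other. -/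
lemma tree_dichotomy (hT : T.IsTree) {x y : V} (hxy : T.Adj x y) (w : V) :
    T.dist w y = T.dist w x + 1 ∨ T.dist w x = T.dist w y + 1 := by
  have hc := hT.isConnected
  have hd1 : T.dist x y = 1 := SimpleGraph.dist_eq_one_iff_adj.mpr hxy
  have hd1' : T.dist y x = 1 := by rwa [SimpleGraph.dist_comm] at hd1
  have t1 : T.dist w y ≤ T.dist w x + 1 := by
    have := hc.dist_triangle (u := w) (v := x) (w := y); omega
  have t2 : T.dist w x ≤ T.dist w y + 1 := by
    have := hc.dist_triangle (u := w) (v := y) (w := x); omega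
  by_contra hcon
  push_neg at hcon
  have heq : T.dist w x = T.dist w y := by omega
  obtain ⟨P, hP, hPlen⟩ := exists_geodesic hT w x
  have hyP : y ∉ P.support := by
    intro hy
    have := geodesic_support hc P hPlen hy
    omega
  have hQ : (P.concat hxy).IsPath := by
    rw [← SimpleGraph.Walk.isPath_reverse_iff, SimpleGraph.Walk.reverse_concat]
    exact ((SimpleGraph.Walk.isPath_reverse_iff P).mpr hP).cons
      (by simpa using hyP)
  have := tree_path_length hT (P.concat hxy) hQ
  rw [SimpleGraph.Walk.length_concat, hPlen] at this
  omega

/-- An edge of a tree crossing the cut defined by the edge `xy` must be `xy`. -/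
lemma tree_edge_cut (hT : T.IsTree) {x y w w' : V} (hxy : T.Adj x y)
    (hww' : T.Adj w w') (hw : T.dist w y = T.dist w x + 1)
    (hw' : T.dist w' x = T.dist w' y + 1) : w = x ∧ w' = y := by
  have hc := hT.isConnected
  have hd1 : T.dist x y = 1 := SimpleGraph.dist_eq_one_iff_adj.mpr hxy
  have hdw : T.dist w w' = 1 := SimpleGraph.dist_eq_one_iff_adj.mpr hww'
  have hdw' : T.dist w' w = 1 := by rwa [SimpleGraph.dist_comm] at hdw
  have key : w' = y := by
    by_contra hwy
    obtain ⟨P, hP, hPlen⟩ := exists_geodesic hT w x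
    have hyP : y ∉ P.support := by
      intro hy
      have h1 := geodesic_support hc P hPlen hy
      have h2 : T.dist y x = 1 := by rwa [SimpleGraph.dist_comm] at hd1
      omega
    have hw'P : w' ∉ P.support := by
      intro hmem
      have h1 := geodesic_support hc P hPlen hmem
      have h2 : T.dist w w' = 1 := hdw
      have h3 : T.dist w y ≤ T.dist w w' + T.dist w' y := hc.dist_triangle
      omega
    have hQ0 : (P.concat hxy).IsPath := by
      rw [← SimpleGraph.Walk.isPath_reverse_iff, SimpleGraph.Walk.reverse_concat]
      exact ((SimpleGraph.Walk.isPath_reverse_iff P).mpr hP).cons (by simpa using hyP)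
    have hQ : (SimpleGraph.Walk.cons hww'.symm (P.concat hxy)).IsPath := by
      apply hQ0.cons
      rw [SimpleGraph.Walk.support_concat, List.mem_append]
      push_neg
      exact ⟨hw'P, by simpa using hwy⟩
    have hlenQ := tree_path_length hT _ hQ
    rw [SimpleGraph.Walk.length_cons, SimpleGraph.Walk.length_concat, hPlen] at hlenQ
    have h3 : T.dist w' x ≤ T.dist w' w + T.dist w x := hc.dist_triangle
    omega
  subst key
  have hwy1 : T.dist w w' = 1 := hdw
  have : T.dist w x = 0 := by omega
  have hwx : w = x := by
    rcases SimpleGraph.dist_eq_zero_iff_eq_or_not_reachable.mp this with h | h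
    · exact h
    · exact absurd (hc.preconnected w x) h
  exact ⟨hwx, rfl⟩

/-- Crossing lemma: the distance between vertices on opposite sides of an
edge `xy` of a tree passes through the edge. -/
lemma tree_crossing (hT : T.IsTree) {x y : V} (hxy : T.Adj x y) :
    ∀ n (u v : V), T.dist u v = n → T.dist u y = T.dist u x + 1 →
      T.dist v x = T.dist v y + 1 → T.dist u v = T.dist u x + 1 + T.dist y v := by
  have hc := hT.isConnected
  have hd1 : T.dist x y = 1 := SimpleGraph.dist_eq_one_iff_adj.mpr hxy
  intro n
  induction n using Nat.strong_induction_on with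
  | _ n ih =>
    intro u v hn hu hv
    have hne : u ≠ v := by
      intro h; subst h; omega
    have hpos : T.dist u v ≠ 0 := by
      intro h0
      rcases SimpleGraph.dist_eq_zero_iff_eq_or_not_reachable.mp h0 with h | h
      · exact hne h
      · exact h (hc.preconnected u v)
    obtain ⟨p, hp, hplen⟩ := exists_geodesic hT u v
    have hlpos : 0 < p.length := by omega
    set u₁ := p.getVert 1 with hu₁
    have hadj : T.Adj u u₁ := by
      have := p.adj_getVert_succ hlpos
      simpa using this
    have hdist1 : T.dist u₁ v = T.dist u v - 1 := by
      have h2 := (geodesic_getVert hc p hplen (i := 1) hlpos).2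
      rw [← hu₁] at h2
      omega
    have hub : T.dist u v ≤ T.dist u x + 1 + T.dist y v := by
      have t1 : T.dist u v ≤ T.dist u x + T.dist x v := hc.dist_triangle
      have t2 : T.dist x v ≤ T.dist x y + T.dist y v := hc.dist_triangle
      omega
    rcases tree_dichotomy hT hxy u₁ with hcase | hcase
    · -- u₁ on the x-side
      have hlt : T.dist u₁ v < n := by omega
      have hIH := ih _ hlt u₁ v rfl hcase hv
      have hadj1 : T.dist u u₁ = 1 := SimpleGraph.dist_eq_one_iff_adj.mpr hadj
      have t3 : T.dist u x ≤ T.dist u u₁ + T.dist u₁ x := hc.dist_triangle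
      omega
    · -- the edge u u₁ crosses the cut, so u = x, u₁ = y
      obtain ⟨hux, huy⟩ := tree_edge_cut hT hxy hadj hu hcase
      have h0 : T.dist u x = 0 := by rw [hux]; simp
      have h1 : T.dist u₁ v = T.dist y v := by rw [huy]
      omega

/-- A walk whose support lies in `S` gives reachability in the induced graph. -/
lemma induce_reachable {S : Set V} {u v : V} (p : T.Walk u v)
    (hs : ∀ z ∈ p.support, z ∈ S) :
    (T.induce S).Reachable ⟨u, hs u p.start_mem_support⟩ ⟨v, hs v p.end_mem_support⟩ := by
  induction p with
  | nil => rfl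
  | @cons a b c hab q ih =>
    have hb : b ∈ S := hs b (by simp)
    have hstep : (T.induce S).Adj ⟨a, hs a (SimpleGraph.Walk.start_mem_support _)⟩ ⟨b, hb⟩ := by
      simpa using hab
    exact hstep.reachable.trans (ih (fun z hz => hs z (by simp [hz])))

end Helpers

theorem tree_prune_ball {V : Type*} [Fintype V] (T : SimpleGraph V) (hT : T.IsTree)
    (d : ℕ) (h : ∀ u : V, ball T u d ≠ Set.univ) :
    ∃ (x : V) (S : Set V), (S.Nonempty → (T.induce S).Connected) ∧
      S.ncard ≤ Fintype.card V - (d + 1) ∧ Sᶜ ⊆ ball T x d := by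
  classical
  have hc := hT.isConnected
  have hne : Nonempty V := hc.nonempty
  -- a pair (a, b) at maximal distance
  obtain ⟨⟨a, b⟩, hab⟩ := Finite.exists_max (fun q : V × V => T.dist q.1 q.2)
  set L := T.dist a b with hL
  have hmax : ∀ u v : V, T.dist u v ≤ L := fun u v => hab (u, v)
  -- L ≥ d + 1
  have hLd : d + 1 ≤ L := by
    have := h a
    rw [Set.ne_univ_iff_exists_notMem] at this
    obtain ⟨w, hw⟩ := this
    have hr : T.Reachable a w := hc.preconnected a w
    have : ¬ T.dist a w ≤ d := fun hd => hw ⟨hr, hd⟩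
    have := hmax a w
    omega
  obtain ⟨p, hp, hplen⟩ := exists_geodesic hT a b
  have hplenL : p.length = L := hplen
  set x := p.getVert d with hx
  set y := p.getVert (d + 1) with hy
  have hxy : T.Adj x y := p.adj_getVert_succ (by omega)
  have hdax : T.dist a x = d := (geodesic_getVert hc p hplen (by omega)).1
  have hdxb : T.dist x b = L - d := by
    have h2 := (geodesic_getVert hc p hplen (i := d) (by omega)).2
    rw [← hx] at h2
    omega
  have hday : T.dist a y = d + 1 := (geodesic_getVert hc p hplen (by omega)).1
  have hdyb : T.dist y b = L - (d + 1) := by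
    have h2 := (geodesic_getVert hc p hplen (i := d + 1) (by omega)).2
    rw [← hy] at h2
    omega
  have hd1 : T.dist x y = 1 := SimpleGraph.dist_eq_one_iff_adj.mpr hxy
  set S : Set V := {u | T.dist u x = T.dist u y + 1} with hS
  have hyS : y ∈ S := by
    have : T.dist y x = 1 := by rwa [SimpleGraph.dist_comm] at hd1
    have : T.dist y y = 0 := by simp
    simp only [hS, Set.mem_setOf_eq]
    omega
  have hbS : b ∈ S := by
    simp only [hS, Set.mem_setOf_eq]
    rw [SimpleGraph.dist_comm (u := b) (v := x), SimpleGraph.dist_comm (u := b) (v := y)]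
    omega
  refine ⟨x, S, ?_, ?_, ?_⟩
  · -- connectivity of the induced graph
    intro _
    have hreach : ∀ u (hu : u ∈ S), (T.induce S).Reachable ⟨u, hu⟩ ⟨y, hyS⟩ := by
      intro u hu
      obtain ⟨q, hq, hqlen⟩ := exists_geodesic hT u y
      have hsupp : ∀ z ∈ q.support, z ∈ S := by
        intro z hz
        have hsplit := geodesic_support hc q hqlen hz
        rcases tree_dichotomy hT hxy z with hcase | hcase
        · -- z on the x-side: contradiction
          exfalso
          have hcross := tree_crossing hT hxy (T.dist z u) z u rfl hcase hu
          have h1 : T.dist u z = T.dist z u := SimpleGraph.dist_comm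
          have h2 : T.dist y u = T.dist u y := SimpleGraph.dist_comm
          omega
        · exact hcase
      exact induce_reachable q hsupp
    rw [SimpleGraph.connected_iff]
    exact ⟨fun su sv => (hreach su.1 su.2).trans (hreach sv.1 sv.2).symm, ⟨⟨y, hyS⟩⟩⟩
  · -- cardinality bound
    have hvi : ∀ i : Fin (d + 1), p.getVert i ∈ Sᶜ := by
      intro ⟨i, hi⟩
      have hdavi : T.dist a (p.getVert i) = i := (geodesic_getVert hc p hplen (by omega)).1
      have hle1 : T.dist (p.getVert i) x ≤ d - i :=
        dist_getVert_getVert hc p (by omega) (by omega)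
      have hle2 : T.dist (p.getVert i) y ≤ d + 1 - i :=
        dist_getVert_getVert hc p (by omega) (by omega)
      have hge1 : d ≤ T.dist a (p.getVert i) + T.dist (p.getVert i) x := by
        have := hc.dist_triangle (u := a) (v := p.getVert i) (w := x)
        omega
      have hge2 : d + 1 ≤ T.dist a (p.getVert i) + T.dist (p.getVert i) y := by
        have := hc.dist_triangle (u := a) (v := p.getVert i) (w := y)
        omega
      simp only [hS, Set.mem_compl_iff, Set.mem_setOf_eq]
      omega
    have hinj : Function.Injective (fun i : Fin (d + 1) => p.getVert i) := by
      intro i j hij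
      have hdi : T.dist a (p.getVert (i : ℕ)) = i :=
        (geodesic_getVert hc p hplen (by omega)).1
      have hdj : T.dist a (p.getVert (j : ℕ)) = j :=
        (geodesic_getVert hc p hplen (by omega)).1
      have hij' : p.getVert (i : ℕ) = p.getVert (j : ℕ) := hij
      have : (i : ℕ) = j := by rw [← hdi, ← hdj, hij']
      exact Fin.ext this
    set F : Finset V := Finset.image (fun i : Fin (d + 1) => p.getVert i) Finset.univ with hF
    have hFcard : F.card = d + 1 := by
      rw [hF, Finset.card_image_of_injective _ hinj, Finset.card_univ, Fintype.card_fin]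
    have hFsub : (F : Set V) ⊆ Sᶜ := by
      intro z hz
      simp only [hF, Finset.coe_image, Set.mem_image] at hz
      obtain ⟨i, _, rfl⟩ := hz
      exact hvi i
    have hcompl : d + 1 ≤ Sᶜ.ncard := by
      have h1 : (F : Set V).ncard = d + 1 := by
        rw [Set.ncard_coe_finset, hFcard]
      have h2 : (F : Set V).ncard ≤ Sᶜ.ncard :=
        Set.ncard_le_ncard hFsub (Set.toFinite _)
      omega
    have hsum : S.ncard + Sᶜ.ncard = Nat.card V := Set.ncard_add_ncard_compl S
    have : Nat.card V = Fintype.card V := Nat.card_eq_fintype_card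
    omega
  · -- the complement is inside the ball
    intro u hu
    simp only [hS, Set.mem_compl_iff, Set.mem_setOf_eq] at hu
    rcases tree_dichotomy hT hxy u with hcase | hcase
    · -- u is on the x-side
      have hcross := tree_crossing hT hxy (T.dist u b) u b rfl hcase (by
        rw [SimpleGraph.dist_comm (u := b) (v := x), SimpleGraph.dist_comm (u := b) (v := y)]; omega)
      have hub : T.dist u b ≤ L := hmax u b
      have hdyb' : T.dist y b = L - (d + 1) := hdyb
      have hux : T.dist u x ≤ d := by omega
      exact ⟨hc.preconnected x u, by rwa [SimpleGraph.dist_comm]⟩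
    · exact absurd hcase hu
end

section
/- Let T be a finite tree and let d_1, ..., d_k be nonnegative integers such that (d_1 + 1) + (d_2 + 1) + ... + (d_k + 1) ≥ n(T). Then there exist vertices x_1, ..., x_k of T such that V(T) = N^{d_1}[x_1] ∪ N^{d_2}[x_2] ∪ ... ∪ N^{d_k}[x_k]. -/
open SimpleGraph in
/-- Along a walk from `x` to `u`, for each `j ≤ length` there is a vertex at
distance at most `j` from `x` and at most `length - j` from `u`. -/
private lemma walk_mid {V : Type*} {G : SimpleGraph V} (hc : G.Connected) {x u : V}
    (p : G.Walk x u) (j : ℕ) (hj : j ≤ p.length) :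
    ∃ w, G.dist x w ≤ j ∧ G.dist w u ≤ p.length - j := by
  induction p generalizing j with
  | @nil a =>
    exact ⟨a, by simp [SimpleGraph.dist_self], by simp [SimpleGraph.dist_self]⟩
  | @cons a b c hab q ih =>
    rcases j with _ | j
    · exact ⟨a, by simp, by simpa using G.dist_le (q.cons hab)⟩
    · obtain ⟨w, hw1, hw2⟩ := ih j (by simpa using hj)
      refine ⟨w, ?_, by simpa using hw2⟩
      calc G.dist a w ≤ G.dist a b + G.dist b w := hc.dist_triangle
        _ ≤ 1 + j := by
            have : G.dist a b ≤ 1 := by simpa using G.dist_le (Walk.cons hab Walk.nil)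
            omega
        _ = j + 1 := by omega

open SimpleGraph in
private lemma exists_mid {V : Type*} {G : SimpleGraph V} (hc : G.Connected) (x u : V)
    {j : ℕ} (hj : j ≤ G.dist x u) :
    ∃ w, G.dist x w = j ∧ G.dist x w + G.dist w u = G.dist x u := by
  obtain ⟨p, hp⟩ := hc.exists_walk_length_eq_dist x u
  obtain ⟨w, hw1, hw2⟩ := walk_mid hc p j (by omega)
  rw [hp] at hw2
  have htri : G.dist x u ≤ G.dist x w + G.dist w u := hc.dist_triangle
  exact ⟨w, by omega, by omega⟩

open SimpleGraph in
/-- Main combinatorial lemma: in a connected graph, any set `A` which is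
geodesically closed towards a root `r` and has at most `∑ (d i + 1)` elements
can be covered by balls of radii `d i`. -/
private lemma cover_aux {V : Type*} [Fintype V] {G : SimpleGraph V} (hc : G.Connected)
    (r : V) :
    ∀ (n : ℕ) (A : Finset V), A.card ≤ n →
      (∀ v ∈ A, ∀ w, G.dist r w + G.dist w v = G.dist r v → w ∈ A) →
      ∀ (k : ℕ) (d : Fin k → ℕ), A.card ≤ ∑ i, (d i + 1) →
      ∃ x : Fin k → V, ∀ v ∈ A, ∃ i, G.dist (x i) v ≤ d i := by
  intro n
  induction n with
  | zero =>
    intro A hA _ k d _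
    refine ⟨fun _ => r, fun v hv => ?_⟩
    simp [Finset.card_eq_zero.mp (Nat.le_zero.mp hA)] at hv
  | succ n ih =>
    intro A hA hclosed k d hsum
    classical
    rcases Finset.eq_empty_or_nonempty A with rfl | hAne
    · exact ⟨fun _ => r, fun v hv => by simp at hv⟩
    -- k must be positive
    rcases k with _ | k'
    · have : 1 ≤ A.card := Finset.card_pos.mpr hAne
      simp only [Finset.univ_eq_empty, Finset.sum_empty] at hsum; omega
    -- pick index with maximal radius
    obtain ⟨i0, hi0⟩ := Finite.exists_max d
    set D := d i0 with hD
    -- pick u in A with maximal distance from r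
    obtain ⟨u, huA, hu⟩ := Finset.exists_max_image A (G.dist r) hAne
    set M := G.dist r u with hM
    set D' := min D M with hD'
    -- pick xc on the geodesic from r to u at distance D' from u
    obtain ⟨xc, hxc1, hxc2⟩ := exists_mid hc r u (j := M - D') (by omega)
    have hxcu : G.dist xc u = D' := by omega
    have hxcA : xc ∈ A := hclosed u huA xc hxc2
    set B := A.filter (fun v => G.dist r v = G.dist r xc + G.dist xc v) with hB
    have hxcB : xc ∈ B := by
      simp only [hB, Finset.mem_filter]
      exact ⟨hxcA, by simp⟩
    -- every vertex of B is within distance D of xc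
    have hBsub : ∀ v ∈ B, G.dist xc v ≤ D := by
      intro v hv
      simp only [hB, Finset.mem_filter] at hv
      have h1 : G.dist r v ≤ M := hu v hv.1
      have := hv.2
      omega
    -- B is large: either B = A (when M ≤ D), or B has at least D + 1 elements
    have hcard : A.card - B.card ≤ A.card - (D + 1) ∨ A = B := by
      by_cases hMD : D ≤ M
      · left
        have hD'D : D' = D := by omega
        -- build D+1 distinct vertices in B
        have hinj : ∀ j : Fin (D + 1), ∃ w ∈ B, G.dist xc w = (j : ℕ) := by
          intro j
          have hj : (j : ℕ) < D + 1 := j.isLt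
          obtain ⟨w, hw1, hw2⟩ := exists_mid hc xc u (j := (j : ℕ)) (by omega)
          have htri1 : G.dist r w ≤ G.dist r xc + G.dist xc w := hc.dist_triangle
          have htri2 : G.dist r u ≤ G.dist r w + G.dist w u := hc.dist_triangle
          have heq : G.dist r w = G.dist r xc + G.dist xc w := by omega
          have hwu : G.dist r w + G.dist w u = G.dist r u := by omega
          have hwA : w ∈ A := hclosed u huA w hwu
          exact ⟨w, by simp only [hB, Finset.mem_filter]; exact ⟨hwA, heq⟩, hw1⟩
        choose f hf1 hf2 using hinj
        have hDB : D + 1 ≤ B.card := by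
          have := Fintype.card_le_of_injective (fun j : Fin (D + 1) => (⟨f j, hf1 j⟩ : B))
            (by
              intro a b hab
              have h1 := hf2 a
              have h2 := hf2 b
              simp only [Subtype.mk.injEq] at hab
              rw [hab] at h1
              exact Fin.ext (by omega))
          simpa [Fintype.card_coe] using this
        omega
      · right
        have hD'M : D' = M := by omega
        have hxr : G.dist r xc = 0 := by omega
        have hxceq : xc = r := ((hc.dist_eq_zero_iff).mp hxr).symm
        apply Finset.Subset.antisymm _ (Finset.filter_subset _ _)
        intro v hv
        simp only [hB, Finset.mem_filter, hxceq, hxr]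
        exact ⟨hv, by simp⟩
    -- the remaining set
    set A' := A \ B with hA'
    have hA'closed : ∀ v ∈ A', ∀ w, G.dist r w + G.dist w v = G.dist r v → w ∈ A' := by
      intro v hv w hw
      simp only [hA', Finset.mem_sdiff] at hv ⊢
      refine ⟨hclosed v hv.1 w hw, ?_⟩
      intro hwB
      apply hv.2
      simp only [hB, Finset.mem_filter] at hwB ⊢
      refine ⟨hv.1, ?_⟩
      have htri1 : G.dist xc v ≤ G.dist xc w + G.dist w v := hc.dist_triangle
      have htri2 : G.dist r v ≤ G.dist r xc + G.dist xc v := hc.dist_triangle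
      omega
    have hBsubA : B ⊆ A := Finset.filter_subset _ _
    have hA'card : A'.card = A.card - B.card := Finset.card_sdiff_of_subset hBsubA
    have hBpos : 1 ≤ B.card := Finset.card_pos.mpr ⟨xc, hxcB⟩
    have hA'n : A'.card ≤ n := by
      have := Finset.card_le_card hBsubA
      omega
    -- sum splitting
    have hsplit : ∑ i, (d i + 1) = (D + 1) + ∑ j, (d (i0.succAbove j) + 1) :=
      Fin.sum_univ_succAbove (fun i => d i + 1) i0
    have hA'sum : A'.card ≤ ∑ j : Fin k', (d (i0.succAbove j) + 1) := by
      rcases hcard with hc1 | hc2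
      · have := Finset.card_le_card hBsubA
        omega
      · simp [hA', hc2]
    obtain ⟨x', hx'⟩ := ih A' hA'n hA'closed k' (fun j => d (i0.succAbove j)) hA'sum
    refine ⟨i0.insertNth xc x', fun v hv => ?_⟩
    by_cases hvB : v ∈ B
    · exact ⟨i0, by rw [Fin.insertNth_apply_same]; exact hBsub v hvB⟩
    · obtain ⟨j, hj⟩ := hx' v (by simp [hA', Finset.mem_sdiff, hv, hvB])
      exact ⟨i0.succAbove j, by rwa [Fin.insertNth_apply_succAbove]⟩

theorem tree_cover_of_sum_ge {V : Type*} [Fintype V] (T : SimpleGraph V) (hT : T.IsTree)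
    (k : ℕ) (d : Fin k → ℕ) (h : Fintype.card V ≤ ∑ i, (d i + 1)) :
    ∃ x : Fin k → V, ∀ v : V, ∃ i : Fin k, v ∈ ball T (x i) (d i) := by
  have hc : T.Connected := hT.isConnected
  have : Nonempty V := hc.nonempty
  obtain ⟨r⟩ := this
  obtain ⟨x, hx⟩ := cover_aux hc r (Fintype.card V) Finset.univ (by simp)
    (fun v _ w _ => Finset.mem_univ w) k d (by simpa using h)
  refine ⟨x, fun v => ?_⟩
  obtain ⟨i, hi⟩ := hx v (Finset.mem_univ v)
  exact ⟨i, hc.preconnected _ _, hi⟩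
end

section
/- If G is a finite connected simple graph of order n ≥ 1, then b(G) ≤ ⌈√(2n + 1/4) − 1/2⌉. -/
open SimpleGraph

universe u

section Aux

/-- Restrict a walk whose support lies in `s` to the induced subgraph on `s`. -/
lemma walk_induce {V : Type u} {G : SimpleGraph V} {s : Set V} :
    ∀ {a b : V} (p : G.Walk a b) (hs : ∀ x ∈ p.support, x ∈ s),
    ∃ q : (G.induce s).Walk ⟨a, hs a p.start_mem_support⟩ ⟨b, hs b p.end_mem_support⟩,
      q.length = p.length := by
  intro a b p
  induction p with
  | nil =>
    intro hs
    exact ⟨SimpleGraph.Walk.nil, rfl⟩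
  | @cons a c b h p ih =>
    intro hs
    obtain ⟨q, hq⟩ := ih (fun x hx => hs x (by simp [hx]))
    exact ⟨SimpleGraph.Walk.cons (by exact h) q, congrArg (· + 1) hq⟩

/-- `dist` between two vertices on a walk is at most the difference of positions. -/
lemma dist_getVert {V : Type u} {G : SimpleGraph V} (hG : G.Connected) {a b : V}
    (w : G.Walk a b) : ∀ i j : ℕ, i ≤ j → G.dist (w.getVert i) (w.getVert j) ≤ j - i := by
  induction w with
  | nil => intro i j _; simp [SimpleGraph.Walk.getVert, SimpleGraph.dist_self]
  | @cons a c b h p ih =>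
    intro i j hij
    match i, j with
    | 0, 0 => simp
    | 0, (j+1) =>
      have h1 : G.dist a c ≤ 1 := by
        have := SimpleGraph.dist_le (SimpleGraph.Walk.cons h SimpleGraph.Walk.nil)
        simpa using this
      have h2 : G.dist c ((SimpleGraph.Walk.cons h p).getVert (j+1)) ≤ j := by
        rw [SimpleGraph.Walk.getVert_cons_succ]
        have := ih 0 j (Nat.zero_le j)
        simpa using this
      calc G.dist ((SimpleGraph.Walk.cons h p).getVert 0)
            ((SimpleGraph.Walk.cons h p).getVert (j+1))
          ≤ G.dist a c + G.dist c ((SimpleGraph.Walk.cons h p).getVert (j+1)) := by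
            simpa using hG.dist_triangle
        _ ≤ 1 + j := add_le_add h1 h2
        _ ≤ (j+1) - 0 := by omega
    | (i+1), (j+1) =>
      rw [SimpleGraph.Walk.getVert_cons_succ, SimpleGraph.Walk.getVert_cons_succ]
      have := ih i j (by omega)
      omega

/-- Any finite connected graph has a walk from `r` to `z` visiting all vertices,
with `length + dist r z ≤ 2 (n - 1)`. -/
lemma exists_spanning_walk :
    ∀ (n : ℕ) {V : Type u} [Fintype V] (G : SimpleGraph V),
    G.Connected → Fintype.card V ≤ n → ∀ r z : V,
    ∃ w : G.Walk r z, (∀ v, v ∈ w.support) ∧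
      w.length + G.dist r z ≤ 2 * (Fintype.card V - 1) := by
  intro n
  induction n with
  | zero =>
    intro V _ G hG hcard r z
    have := Fintype.card_pos_iff.mpr hG.nonempty
    omega
  | succ n ih =>
    intro V _ G hG hcard r z
    classical
    by_cases hle : Fintype.card V ≤ n
    · exact ih G hG hle r z
    by_cases hcard1 : Fintype.card V ≤ 1
    · have hsub : Subsingleton V := Fintype.card_le_one_iff_subsingleton.mp hcard1
      have hrz : z = r := Subsingleton.elim z r
      subst hrz
      refine ⟨SimpleGraph.Walk.nil, fun v => ?_, by simp [SimpleGraph.dist_self]⟩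
      have : v = z := Subsingleton.elim v z
      simp [this]
    -- card V ≥ 2
    have hcard2 : 2 ≤ Fintype.card V := by omega
    -- pick u at maximum distance from r
    obtain ⟨u, -, hu⟩ := Finset.exists_max_image Finset.univ (fun v => G.dist r v)
      ⟨r, Finset.mem_univ r⟩
    have hu' : ∀ v : V, G.dist r v ≤ G.dist r u := fun v => hu v (Finset.mem_univ v)
    have hur : u ≠ r := by
      obtain ⟨v, hv⟩ := Fintype.exists_ne_of_one_lt_card (by omega) r
      have h1 : 0 < G.dist r v := hG.pos_dist_of_ne (Ne.symm hv)
      have h2 : 0 < G.dist r u := lt_of_lt_of_le h1 (hu' v)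
      intro h; rw [h] at h2; simp [SimpleGraph.dist_self] at h2
    set s : Set V := {v | v ≠ u} with hs_def
    have hrs : r ∈ s := Ne.symm hur
    -- shortest paths from r avoid u
    have key : ∀ a : V, a ∈ s → ∃ p : G.Walk r a, ∀ x ∈ p.support, x ∈ s := by
      intro a ha
      obtain ⟨p, hp⟩ := hG.exists_walk_length_eq_dist r a
      refine ⟨p, fun x hx => ?_⟩
      intro hxu
      subst hxu
      have hsplit := p.take_spec hx
      have hlen : (p.takeUntil x hx).length + (p.dropUntil x hx).length = p.length := by
        rw [← SimpleGraph.Walk.length_append, hsplit]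
      have h1 : G.dist r x ≤ (p.takeUntil x hx).length := SimpleGraph.dist_le _
      have h2 : G.dist x a ≤ (p.dropUntil x hx).length := SimpleGraph.dist_le _
      have h3 : 0 < G.dist x a := hG.pos_dist_of_ne (fun h => ha h.symm)
      have h4 : G.dist r a ≤ G.dist r x := hu' a
      omega
    have hGs : (G.induce s).Connected := by
      rw [SimpleGraph.connected_iff]
      constructor
      · rintro ⟨a, ha⟩ ⟨b, hb⟩
        obtain ⟨p, hp⟩ := key a ha
        obtain ⟨q, hq⟩ := key b hb
        obtain ⟨p', -⟩ := walk_induce p hp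
        obtain ⟨q', -⟩ := walk_induce q hq
        exact (SimpleGraph.Walk.reachable p').symm.trans (SimpleGraph.Walk.reachable q')
      · exact ⟨⟨r, hrs⟩⟩
    have hdist_lift : ∀ (a b : V) (ha : a ∈ s) (hb : b ∈ s),
        G.dist a b ≤ (G.induce s).dist ⟨a, ha⟩ ⟨b, hb⟩ := by
      intro a b ha hb
      obtain ⟨q, hq⟩ := hGs.exists_walk_length_eq_dist ⟨a, ha⟩ ⟨b, hb⟩
      have := SimpleGraph.dist_le (q.map (SimpleGraph.Embedding.induce s).toHom)
      rwa [SimpleGraph.Walk.length_map, hq] at this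
    have hcards : Fintype.card s = Fintype.card V - 1 := by
      have : Fintype.card s = Fintype.card {v : V // ¬ v = u} := by
        apply Fintype.card_congr; exact Equiv.refl _
      rw [this, Fintype.card_subtype_compl, Fintype.card_subtype_eq]
    have hcards' : Fintype.card s ≤ n := by omega
    -- a map-down helper
    have mapdown : ∀ {a b : V} (ha : a ∈ s) (hb : b ∈ s)
        (w' : (G.induce s).Walk ⟨a, ha⟩ ⟨b, hb⟩),
        ∃ w₀ : G.Walk a b, w₀.length = w'.length ∧
          (∀ x : V, x ∈ s → (∀ y : s, ↑y ∈ w'.support.map (Subtype.val)) → x ∈ w₀.support) := by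
      intro a b ha hb w'
      refine ⟨w'.map (SimpleGraph.Embedding.induce s).toHom, SimpleGraph.Walk.length_map _ _, ?_⟩
      intro x hx hall
      have := hall ⟨x, hx⟩
      show x ∈ (w'.map (SimpleGraph.Embedding.induce s).toHom).support
      rw [SimpleGraph.Walk.support_map]
      exact this
    by_cases hz : z = u
    · -- case B : z is the farthest vertex
      subst hz
      have hzr : z ≠ r := hur
      -- a neighbor y of z
      obtain ⟨q0⟩ := hG z r
      have hq0 : 0 < q0.length := by
        rcases Nat.eq_zero_or_pos q0.length with h | h
        · exact absurd (q0.eq_of_length_eq_zero h) hzr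
        · exact h
      have hadj : G.Adj z (q0.getVert 1) := by
        have := q0.adj_getVert_succ (i := 0) hq0
        simpa using this
      set y := q0.getVert 1 with hy_def
      have hys : y ∈ s := hadj.ne'
      obtain ⟨w', hw'sup, hw'len⟩ := ih (G.induce s) hGs hcards' ⟨r, hrs⟩ ⟨y, hys⟩
      obtain ⟨w₀, hw₀len, hw₀sup⟩ := mapdown hrs hys w'
      have hw₀sup' : ∀ x : V, x ∈ s → x ∈ w₀.support := by
        intro x hx
        apply hw₀sup x hx
        intro yy
        exact List.mem_map_of_mem (hw'sup yy)
      refine ⟨w₀.concat hadj.symm, ?_, ?_⟩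
      · intro v
        rw [SimpleGraph.Walk.support_concat]
        by_cases hv : v = z
        · subst hv; simp
        · simp [hw₀sup' v hv]
      · have h1 : G.dist r z ≤ G.dist r y + 1 := by
          have ht := hG.dist_triangle (u := r) (v := y) (w := z)
          have : G.dist y z ≤ 1 := by
            have := SimpleGraph.dist_le (SimpleGraph.Walk.cons hadj.symm SimpleGraph.Walk.nil)
            simpa using this
          omega
        have h2 : G.dist r y ≤ (G.induce s).dist ⟨r, hrs⟩ ⟨y, hys⟩ := hdist_lift r y hrs hys
        have h3 : (w₀.concat hadj.symm).length = w₀.length + 1 :=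
          SimpleGraph.Walk.length_concat _ _
        omega
    · -- case A : z ≠ u, delete u and detour through it
      have hzs : z ∈ s := hz
      obtain ⟨w', hw'sup, hw'len⟩ := ih (G.induce s) hGs hcards' ⟨r, hrs⟩ ⟨z, hzs⟩
      obtain ⟨w₀, hw₀len, hw₀sup⟩ := mapdown hrs hzs w'
      have hw₀sup' : ∀ x : V, x ∈ s → x ∈ w₀.support := by
        intro x hx
        apply hw₀sup x hx
        intro yy
        exact List.mem_map_of_mem (hw'sup yy)
      -- a neighbor y of u
      obtain ⟨q0⟩ := hG u r
      have hq0 : 0 < q0.length := by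
        rcases Nat.eq_zero_or_pos q0.length with h | h
        · exact absurd (q0.eq_of_length_eq_zero h) hur
        · exact h
      have hadj : G.Adj u (q0.getVert 1) := by
        have := q0.adj_getVert_succ (i := 0) hq0
        simpa using this
      set y := q0.getVert 1 with hy_def
      have hys : y ∈ s := hadj.ne'
      have hyw : y ∈ w₀.support := hw₀sup' y hys
      set mid : G.Walk y y :=
        SimpleGraph.Walk.cons hadj.symm (SimpleGraph.Walk.cons hadj SimpleGraph.Walk.nil)
        with hmid_def
      refine ⟨(w₀.takeUntil y hyw).append (mid.append (w₀.dropUntil y hyw)), ?_, ?_⟩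
      · intro v
        rw [SimpleGraph.Walk.mem_support_append_iff,
          SimpleGraph.Walk.mem_support_append_iff]
        by_cases hv : v = u
        · subst hv
          right; left
          simp [hmid_def]
        · have hvw : v ∈ w₀.support := hw₀sup' v hv
          have := w₀.take_spec hyw
          rw [← this, SimpleGraph.Walk.mem_support_append_iff] at hvw
          tauto
      · have hlen : ((w₀.takeUntil y hyw).append (mid.append (w₀.dropUntil y hyw))).length
            = w₀.length + 2 := by
          have hspec := w₀.take_spec hyw
          have : (w₀.takeUntil y hyw).length + (w₀.dropUntil y hyw).length = w₀.length := by
            rw [← SimpleGraph.Walk.length_append, hspec]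
          simp only [SimpleGraph.Walk.length_append, hmid_def]
          simp [SimpleGraph.Walk.length_cons]
          omega
        have h2 : G.dist r z ≤ (G.induce s).dist ⟨r, hrs⟩ ⟨z, hzs⟩ := hdist_lift r z hrs hzs
        omega

/-- Locating the segment of the cover containing position `q`. -/
lemma find_segment (k q : ℕ) (hq : q < k * k) :
    ∃ i, i < k ∧ i * (2 * k - i) ≤ q ∧ q < (i + 1) * (2 * k - (i + 1)) := by
  classical
  set P : ℕ → Prop := fun j => j * (2 * k - j) ≤ q with hP_def
  set i := Nat.findGreatest P k with hi_def
  have hP0 : P 0 := by simp [hP_def]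
  have hi_le : i ≤ k := Nat.findGreatest_le k
  have hPi : P i := Nat.findGreatest_spec (Nat.zero_le k) hP0
  have hik : i < k := by
    by_contra hik
    have hik' : i = k := by omega
    rw [hP_def] at hPi
    rw [hik'] at hPi
    have h2k : 2 * k - k = k := by omega
    rw [h2k] at hPi
    exact absurd hPi (Nat.not_le.mpr hq)
  have hPi1 : ¬ P (i + 1) :=
    Nat.findGreatest_is_greatest (P := P) (n := k) (by omega) (by omega)
  rw [hP_def] at hPi hPi1
  exact ⟨i, hik, hPi, Nat.not_le.mp hPi1⟩

end Aux

theorem burning_le_ceil_sqrt_two_n {V : Type*} [Fintype V] (G : SimpleGraph V)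
    (hG : G.Connected) (hn : 1 ≤ Fintype.card V) :
    burningNumber G ≤ ⌈Real.sqrt (2 * (Fintype.card V) + 1 / 4) - 1 / 2⌉₊ := by
  classical
  set n := Fintype.card V with hn_def
  set k := ⌈Real.sqrt (2 * (n : ℝ) + 1 / 4) - 1 / 2⌉₊ with hk_def
  have hA : (0:ℝ) ≤ 2 * (n:ℝ) + 1/4 := by positivity
  have hsq := Real.sq_sqrt hA
  have hsqnn := Real.sqrt_nonneg (2 * (n:ℝ) + 1/4)
  have hk1 : 1 ≤ k := by
    rw [hk_def]
    apply Nat.one_le_ceil_iff.mpr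
    have hge : (9:ℝ)/4 ≤ 2 * (n:ℝ) + 1/4 := by
      have : (1:ℝ) ≤ (n:ℝ) := by exact_mod_cast hn
      linarith
    nlinarith
  have hk2 : 2 * n ≤ k * (k + 1) := by
    have hceil := Nat.le_ceil (Real.sqrt (2 * (n : ℝ) + 1 / 4) - 1 / 2)
    rw [← hk_def] at hceil
    have h1 : Real.sqrt (2 * (n:ℝ) + 1/4) ≤ (k:ℝ) + 1/2 := by linarith
    have h2 : 2 * (n:ℝ) ≤ (k:ℝ) * ((k:ℝ) + 1) := by nlinarith
    exact_mod_cast h2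
  apply Nat.sInf_le
  by_cases hc : ∃ c : V, ∀ v : V, G.dist c v ≤ k - 1
  · obtain ⟨c, hc⟩ := hc
    refine ⟨fun _ => c, fun v => ⟨⟨0, hk1⟩, hG c v, ?_⟩⟩
    simpa using hc v
  · push_neg at hc
    obtain ⟨r⟩ := hG.nonempty
    obtain ⟨z, hz⟩ := hc r
    have hzk : k ≤ G.dist r z := by omega
    obtain ⟨w, hwsup, hwlen⟩ := exists_spanning_walk n G hG le_rfl r z
    have hwl : w.length + k ≤ 2 * (n - 1) := by
      have := add_le_add_left hzk w.length
      omega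
    refine ⟨fun i => w.getVert ((i : ℕ) * (2 * k - (i : ℕ)) + (k - 1 - (i : ℕ))), fun v => ?_⟩
    obtain ⟨q, hqv, hql⟩ := SimpleGraph.Walk.mem_support_iff_exists_getVert.mp (hwsup v)
    have hqkk : q < k * k := by
      have e1 : q + k + 2 ≤ 2 * n := by omega
      have e2 : (q + 2) + k ≤ k * k + k := by
        calc (q + 2) + k = q + k + 2 := by ring
        _ ≤ 2 * n := e1
        _ ≤ k * (k + 1) := hk2
        _ = k * k + k := by ring
      have e3 : q + 2 ≤ k * k := Nat.le_of_add_le_add_right e2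
      exact Nat.lt_of_lt_of_le (by omega : q < q + 2) e3
    obtain ⟨i, hik, hPi, hPi1⟩ := find_segment k q hqkk
    set m := k - 1 - i with hm_def
    have hm : k = i + m + 1 := by omega
    have hstep : (i + 1) * (2 * k - (i + 1)) = i * (2 * k - i) + (2 * m + 1) := by
      have h1 : 2 * k - i = i + 2 * m + 2 := by omega
      have h2 : 2 * k - (i + 1) = i + 2 * m + 1 := by omega
      rw [h1, h2]; ring
    rw [hstep] at hPi1
    set A := i * (2 * k - i) with hA_def
    -- so A ≤ q < A + 2m + 1 ; center c = A + m
    have hq_ub : q < A + (2 * m + 1) := hPi1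
    refine ⟨⟨i, hik⟩, hG _ v, ?_⟩
    have hdist : G.dist (w.getVert (A + m)) (w.getVert q) ≤ m := by
      rcases le_or_gt (A + m) q with h | h
      · have := dist_getVert hG w (A + m) q h
        omega
      · have := dist_getVert hG w q (A + m) (le_of_lt h)
        rw [SimpleGraph.dist_comm] at this
        omega
    rw [← hqv]
    simp only [Fin.val_mk]
    rw [← hA_def, ← hm_def]
    exact hdist
end

section
/- Let T be a finite tree and let d_1 and d_2 be positive integers such that d_2 ≥ ⌈3·d_1/2⌉ and N^{d_1}[u] ∪ N^{d_2}[v] ≠ V(T) for every two vertices u and v of T. Then there exist two vertices x and z of T and a subtree T' of T such that T' has at most n(T) − (⌈3·d_1/2⌉ + d_2 + 2) vertices and V(T) \ V(T') ⊆ N^{d_1}[x] ∪ N^{d_2}[z]. -/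
namespace TreePruneAux

open SimpleGraph Walk

set_option linter.unusedSectionVars false
set_option maxHeartbeats 1000000

variable {V : Type*} [DecidableEq V] {T : SimpleGraph V}

lemma path_length_eq_dist (hT : T.IsTree) {x y : V} (q : T.Walk x y) (hq : q.IsPath) :
    q.length = T.dist x y := by
  obtain ⟨q₀, hq₀⟩ := hT.isConnected.exists_walk_length_eq_dist x y
  have hb : q₀.bypass.IsPath := Walk.bypass_isPath q₀
  have h1 : q₀.bypass.length ≤ T.dist x y := hq₀ ▸ Walk.length_bypass_le q₀
  have h2 : T.dist x y ≤ q₀.bypass.length := dist_le _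
  have huniq := hT.existsUnique_path x y
  have heq : q = q₀.bypass := huniq.unique hq hb
  rw [heq]; omega

lemma dist_add_of_mem_support (hT : T.IsTree) {x y s : V} (q : T.Walk x y) (hq : q.IsPath)
    (hs : s ∈ q.support) : T.dist x s + T.dist s y = T.dist x y := by
  have hspec := q.take_spec hs
  have h1 : (q.takeUntil s hs).IsPath := hq.takeUntil hs
  have h2 : (q.dropUntil s hs).IsPath := hq.dropUntil hs
  have hlen := congrArg Walk.length hspec
  rw [Walk.length_append] at hlen
  rw [path_length_eq_dist hT _ h1, path_length_eq_dist hT _ h2,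
    path_length_eq_dist hT q hq] at hlen
  exact hlen

lemma dist_getVert_le (hc : T.Connected) {x y : V} (q : T.Walk x y) (i : ℕ) :
    T.dist x (q.getVert i) ≤ i := by
  induction i with
  | zero => simp [q.getVert_zero]
  | succ n ih =>
    rcases le_or_gt q.length n with hn | hn
    · have : q.getVert (n+1) = q.getVert n := by
        rw [q.getVert_of_length_le hn, q.getVert_of_length_le (by omega)]
      rw [this]; exact ih.trans (by omega)
    · have hadj := q.adj_getVert_succ hn
      have h1 : T.dist (q.getVert n) (q.getVert (n+1)) = 1 := dist_eq_one_iff_adj.mpr hadj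
      calc T.dist x (q.getVert (n+1))
          ≤ T.dist x (q.getVert n) + T.dist (q.getVert n) (q.getVert (n+1)) := hc.dist_triangle
        _ ≤ n + 1 := by omega

lemma dist_getVert_right {x y : V} (q : T.Walk x y) (i : ℕ) :
    T.dist (q.getVert i) y ≤ q.length - i := by
  induction q generalizing i with
  | nil => simp [Walk.getVert]
  | @cons u v w h q' ih =>
    cases i with
    | zero =>
      simpa [q'.getVert_zero] using dist_le (Walk.cons h q')
    | succ n =>
      rw [Walk.getVert_cons_succ]
      refine (ih n).trans ?_
      rw [Walk.length_cons]
      omega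

lemma tree_exists_between (hT : T.IsTree) (x y : V) (t : ℕ) (ht : t ≤ T.dist x y) :
    ∃ s : V, T.dist x s = t ∧ T.dist x s + T.dist s y = T.dist x y := by
  obtain ⟨q, hq, -⟩ := hT.existsUnique_path x y
  have hlen : q.length = T.dist x y := path_length_eq_dist hT q hq
  have hmem : q.getVert t ∈ q.support := by
    rw [Walk.mem_support_iff_exists_getVert]
    exact ⟨t, rfl, by omega⟩
  have hsplit := dist_add_of_mem_support hT q hq hmem
  have hA := dist_getVert_le hT.isConnected q t
  have hB := dist_getVert_right q t
  exact ⟨q.getVert t, by omega, by omega⟩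

lemma walk_decomp :
    ∀ {u a : V} (q : T.Walk u a) {b : V} (p : T.Walk a b),
      ∃ (w : V) (q₁ : T.Walk u w) (q₂ : T.Walk w a), q = q₁.append q₂ ∧ w ∈ p.support ∧
        (∀ s ∈ q₁.support, s ∈ p.support → s = w) := by
  intro u a q
  induction q with
  | nil =>
    intro b p
    exact ⟨_, Walk.nil, Walk.nil, rfl, p.start_mem_support, by
      intro s hs _; simpa using hs⟩
  | @cons u u' a h q' ih =>
    intro b p
    by_cases hu : u ∈ p.support
    · exact ⟨u, Walk.nil, Walk.cons h q', rfl, hu, by intro s hs _; simpa using hs⟩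
    · obtain ⟨w, q₁', q₂', heq, hw, hstop⟩ := ih p
      refine ⟨w, Walk.cons h q₁', q₂', by rw [heq, Walk.cons_append], hw, ?_⟩
      intro s hs hsp
      rw [Walk.support_cons] at hs
      rcases List.mem_cons.mp hs with rfl | hs
      · exact absurd hsp hu
      · exact hstop s hs hsp

lemma meet_exists (hT : T.IsTree) {a b : V} (p : T.Walk a b) (hp : p.IsPath) (u : V) :
    ∃ w : V, w ∈ p.support ∧ T.dist u a = T.dist u w + T.dist w a ∧
      T.dist u b = T.dist u w + T.dist w b := by
  obtain ⟨q, hq, -⟩ := hT.existsUnique_path u a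
  obtain ⟨w, q₁, q₂, heq, hw, hstop⟩ := walk_decomp q p
  subst heq
  have hq₁ : q₁.IsPath := hq.of_append_left
  have hq₂ : q₂.IsPath := hq.of_append_right
  have hda : T.dist u a = T.dist u w + T.dist w a := by
    rw [← path_length_eq_dist hT _ hq, ← path_length_eq_dist hT _ hq₁,
      ← path_length_eq_dist hT _ hq₂, Walk.length_append]
  set r := p.dropUntil w hw with hr
  have hrp : r.IsPath := hp.dropUntil hw
  have hrsub : ∀ s ∈ r.support, s ∈ p.support := fun s hs => p.support_dropUntil_subset hw hs
  have happ : (q₁.append r).IsPath := by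
    rw [Walk.isPath_def, Walk.support_append]
    refine List.Nodup.append hq₁.support_nodup (hrp.support_nodup.tail) ?_
    intro s hs1 hs2
    have hs2' : s ∈ r.support := List.mem_of_mem_tail hs2
    have hsw : s = w := hstop s hs1 (hrsub s hs2')
    subst hsw
    have hnd := hrp.support_nodup
    rw [r.support_eq_cons] at hnd
    exact (List.nodup_cons.mp hnd).1 hs2
  have hdb : T.dist u b = T.dist u w + T.dist w b := by
    rw [← path_length_eq_dist hT _ happ, ← path_length_eq_dist hT _ hq₁,
      ← path_length_eq_dist hT _ hrp, Walk.length_append]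
  exact ⟨w, hw, hda, hdb⟩

variable [Fintype V]

lemma gadget (hT : T.IsTree) (b : V) (m : V → ℕ) (i d : ℕ) (hd : 1 ≤ d)
    (hBTWm : ∀ u x : V, T.dist u b = T.dist u x + T.dist x b → m u ≤ m x)
    (u₀ y₀ : V) (hmu₀ : i < m u₀)
    (hBtw₀ : T.dist u₀ b = T.dist u₀ y₀ + T.dist y₀ b) (hd₀ : d ≤ T.dist y₀ u₀) :
    (∀ u : V, i < m u → T.dist b u ≤ d) ∨
    ∃ y : V, y ≠ b ∧
      (∀ u : V, i < m u → T.dist u b = T.dist u y + T.dist y b → T.dist y u ≤ d) ∧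
      d + 1 ≤ {u : V | i < m u ∧ T.dist u b = T.dist u y + T.dist y b}.ncard := by
  classical
  have hconn := hT.isConnected
  have hcomm : ∀ x y : V, T.dist x y = T.dist y x := fun x y => SimpleGraph.dist_comm
  set P : V → Prop := fun y => ∃ u, i < m u ∧ T.dist u b = T.dist u y + T.dist y b ∧
      d ≤ T.dist y u with hP
  have hy₀ : P y₀ := ⟨u₀, hmu₀, hBtw₀, hd₀⟩
  set F : Finset V := Finset.univ.filter P with hF
  have hy₀F : y₀ ∈ F := by simp [hF, hy₀]
  obtain ⟨y, hyF, hymax⟩ := F.exists_max_image (fun z => T.dist b z) ⟨y₀, hy₀F⟩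
  have hyP : P y := by simpa [hF] using hyF
  have hmaxP : ∀ z : V, P z → T.dist b z ≤ T.dist b y := by
    intro z hz
    exact hymax z (by simp [hF, hz])
  by_cases hyb : y = b
  · left
    intro u hu
    by_contra hlarge
    push_neg at hlarge
    have hdbu : d + 1 ≤ T.dist b u := by omega
    obtain ⟨w', hw1, hw2⟩ := tree_exists_between hT b u (T.dist b u - d) (by omega)
    have hPw' : P w' := by
      refine ⟨u, hu, ?_, ?_⟩
      · have := hcomm u w'
        have := hcomm u b
        have := hcomm w' b
        omega
      · have := hcomm w' u
        have := hcomm u b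
        omega
    have hle := hmaxP w' hPw'
    rw [hyb] at hle
    have : T.dist b b = 0 := SimpleGraph.dist_self
    omega
  · right
    obtain ⟨u₁, hmu₁, hBtw₁, hd₁⟩ := hyP
    refine ⟨y, hyb, ?_, ?_⟩
    · intro u hu hBtw
      by_contra hlarge
      push_neg at hlarge
      obtain ⟨y', hy'1, hy'2⟩ := tree_exists_between hT y u 1 (by omega)
      have htri : T.dist y' b ≤ T.dist y' y + T.dist y b := hconn.dist_triangle
      have htri2 : T.dist u b ≤ T.dist u y' + T.dist y' b := hconn.dist_triangle
      have hc1 := hcomm u y'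
      have hc2 := hcomm u y
      have hc3 := hcomm y' y
      have hc4 := hcomm b y
      have hc5 := hcomm y' u
      have hPy' : P y' := ⟨u, hu, by omega, by omega⟩
      have := hmaxP y' hPy'
      have hc6 := hcomm b y'
      omega
    · have hst : ∀ t : ℕ, t ≤ d → ∃ s : V,
          T.dist y s = t ∧ i < m s ∧ T.dist s b = T.dist s y + T.dist y b := by
        intro t ht
        obtain ⟨s, hs1, hs2⟩ := tree_exists_between hT y u₁ t (by omega)
        have htri : T.dist u₁ b ≤ T.dist u₁ s + T.dist s b := hconn.dist_triangle
        have htri2 : T.dist s b ≤ T.dist s y + T.dist y b := hconn.dist_triangle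
        have hc1 := hcomm u₁ s
        have hc2 := hcomm u₁ y
        have hc3 := hcomm s y
        have hBtwus : T.dist u₁ b = T.dist u₁ s + T.dist s b ∧
            T.dist s b = T.dist s y + T.dist y b := by constructor <;> omega
        exact ⟨s, hs1, lt_of_lt_of_le hmu₁ (hBTWm u₁ s hBtwus.1), hBtwus.2⟩
      choose s hs1 hs2 hs3 using hst
      set ι : Fin (d + 1) → V := fun t => s t.1 (by omega) with hι
      have hinj : Function.Injective ι := by
        intro t1 t2 heq
        have h1 := hs1 t1.1 (by omega)
        have h2 := hs1 t2.1 (by omega)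
        rw [hι] at heq
        simp only at heq
        rw [heq] at h1
        ext
        omega
      have hsub : Set.range ι ⊆
          {u : V | i < m u ∧ T.dist u b = T.dist u y + T.dist y b} := by
        rintro _ ⟨t, rfl⟩
        exact ⟨hs2 t.1 (by omega), hs3 t.1 (by omega)⟩
      have hcard : (Set.range ι).ncard = d + 1 := by
        rw [← Set.image_univ, Set.ncard_image_of_injective _ hinj, Set.ncard_univ,
          Nat.card_eq_fintype_card, Fintype.card_fin]
      calc d + 1 = _ := hcard.symm
        _ ≤ _ := Set.ncard_le_ncard hsub (Set.toFinite _)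

lemma conn_lemma (hT : T.IsTree) (b y : V) (m : V → ℕ) (i : ℕ)
    (hBTWm : ∀ u x : V, T.dist u b = T.dist u x + T.dist x b → m u ≤ m x)
    (hyb : y ≠ b) (hmb : i < m b) :
    (T.induce {u : V | i < m u ∧ ¬ (T.dist u b = T.dist u y + T.dist y b)}).Connected := by
  classical
  have hconn := hT.isConnected
  set S := {u : V | i < m u ∧ ¬ (T.dist u b = T.dist u y + T.dist y b)} with hSdef
  have hbS : b ∈ S := by
    refine ⟨hmb, ?_⟩
    intro hbtw
    have h0 : T.dist b b = 0 := SimpleGraph.dist_self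
    have h1 : T.dist y b = 0 := by omega
    exact hyb ((hconn.dist_eq_zero_iff).mp h1)
  have key : ∀ n : ℕ, ∀ u, (hu : u ∈ S) → T.dist u b ≤ n →
      (T.induce S).Reachable ⟨u, hu⟩ ⟨b, hbS⟩ := by
    intro n
    induction n with
    | zero =>
      intro u hu hd
      have hub : u = b := (hconn.dist_eq_zero_iff).mp (by omega)
      subst hub
      exact Reachable.refl _
    | succ n ih =>
      intro u hu hdn
      by_cases hub : u = b
      · subst hub; exact Reachable.refl _
      · have hpos : 1 ≤ T.dist u b := hconn.pos_dist_of_ne hub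
        obtain ⟨u', h1, h2⟩ := tree_exists_between hT u b 1 hpos
        have hadj : T.Adj u u' := SimpleGraph.dist_eq_one_iff_adj.mp h1
        have hu'S : u' ∈ S := by
          constructor
          · exact lt_of_lt_of_le hu.1 (hBTWm u u' (by omega))
          · intro hbtw'
            apply hu.2
            have htri1 : T.dist u y ≤ T.dist u u' + T.dist u' y := hconn.dist_triangle
            have htri2 : T.dist u b ≤ T.dist u y + T.dist y b := hconn.dist_triangle
            omega
        have hd' : T.dist u' b ≤ n := by omega
        have hadj' : (T.induce S).Adj ⟨u, hu⟩ ⟨u', hu'S⟩ := hadj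
        exact (hadj'.reachable).trans (ih u' hu'S hd')
  rw [SimpleGraph.connected_iff_exists_forall_reachable]
  refine ⟨⟨b, hbS⟩, ?_⟩
  rintro ⟨x1, hx1⟩
  exact (key (T.dist x1 b) x1 hx1 le_rfl).symm

end TreePruneAux

open TreePruneAux in
open SimpleGraph hiding ball in
/-- Here `(3 * d₁ + 1) / 2` (with natural division) equals `⌈3 d₁ / 2⌉`. -/
theorem tree_prune_two_balls {V : Type*} [Fintype V] (T : SimpleGraph V) (hT : T.IsTree)
    (d₁ d₂ : ℕ) (hd₁ : 1 ≤ d₁) (hd₂pos : 1 ≤ d₂) (hd₂ : (3 * d₁ + 1) / 2 ≤ d₂)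
    (h : ∀ u v : V, ball T u d₁ ∪ ball T v d₂ ≠ Set.univ) :
    ∃ (x z : V) (S : Set V), (S.Nonempty → (T.induce S).Connected) ∧
      S.ncard ≤ Fintype.card V - ((3 * d₁ + 1) / 2 + d₂ + 2) ∧
      Sᶜ ⊆ ball T x d₁ ∪ ball T z d₂ := by
  classical
  have hconn := hT.isConnected
  have hcomm : ∀ x y : V, T.dist x y = T.dist y x := fun x y => SimpleGraph.dist_comm
  have htri : ∀ x y z : V, T.dist x z ≤ T.dist x y + T.dist y z :=
    fun x y z => hconn.dist_triangle
  have hne : Nonempty V := hconn.nonempty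
  obtain ⟨c, hcdef⟩ : ∃ c, c = (3 * d₁ + 1) / 2 := ⟨_, rfl⟩
  have hcd₁ : d₁ ≤ c := by omega
  have hcd₂ : c ≤ d₂ := by omega
  have hc3 : 2 * c ≤ 3 * d₁ + 1 := by omega
  -- a diametral pair
  obtain ⟨ab, -, hab⟩ := Finset.exists_max_image (Finset.univ : Finset (V × V))
    (fun q => T.dist q.1 q.2) ⟨(Classical.arbitrary V, Classical.arbitrary V), Finset.mem_univ _⟩
  obtain ⟨a, b⟩ := ab
  obtain ⟨L, hLdef⟩ : ∃ L, L = T.dist a b := ⟨_, rfl⟩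
  have hmax : ∀ u w : V, T.dist u w ≤ L := by
    intro u w; rw [hLdef]; exact hab (u, w) (Finset.mem_univ _)
  obtain ⟨p, hp, -⟩ := hT.existsUnique_path a b
  have hpl : p.length = L := by rw [hLdef]; exact path_length_eq_dist hT p hp
  obtain ⟨v, hveq⟩ : ∃ v : ℕ → V, ∀ j, v j = p.getVert j := ⟨_, fun _ => rfl⟩
  have hva : ∀ j, j ≤ L → T.dist a (v j) = j ∧ T.dist (v j) b = L - j := by
    intro j hj
    have h1 : T.dist a (v j) ≤ j := by rw [hveq]; exact dist_getVert_le hconn p j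
    have h2 : T.dist (v j) b ≤ L - j := by
      rw [hveq]
      have := dist_getVert_right p j
      rwa [hpl] at this
    have h3 : T.dist a b ≤ T.dist a (v j) + T.dist (v j) b := htri a (v j) b
    omega
  have hchain : ∀ i k, i + k ≤ L → T.dist (v i) (v (i + k)) ≤ k := by
    intro i k
    induction k with
    | zero => intro _; simp [SimpleGraph.dist_self]
    | succ n ih =>
      intro hik
      have h1 : T.dist (v i) (v (i + n)) ≤ n := ih (by omega)
      have hadj : T.Adj (v (i + n)) (v (i + n + 1)) := by
        rw [hveq, hveq]; exact p.adj_getVert_succ (by omega)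
      have h2 : T.dist (v (i + n)) (v (i + n + 1)) = 1 := SimpleGraph.dist_eq_one_iff_adj.mpr hadj
      have h3 := htri (v i) (v (i + n)) (v (i + n + 1))
      have heq : i + n + 1 = i + (n + 1) := by omega
      rw [heq] at h2 h3
      omega
  have hS2 : ∀ i j, i ≤ j → j ≤ L → T.dist (v i) (v j) = j - i := by
    intro i j hij hjL
    have h1 : T.dist (v i) (v j) ≤ j - i := by
      have := hchain i (j - i) (by omega)
      have heq : i + (j - i) = j := by omega
      rwa [heq] at this
    have h2 := (hva i (by omega)).1
    have h3 := (hva j hjL).1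
    have h4 := htri a (v i) (v j)
    omega
  have hvinj : ∀ i j, i ≤ L → j ≤ L → v i = v j → i = j := by
    intro i j hi hj heq
    have h1 := (hva i hi).1
    have h2 := (hva j hj).1
    rw [heq] at h1
    omega
  -- the meet structure
  choose w hwP hwa hwb using meet_exists hT p hp
  obtain ⟨m, hmeq⟩ : ∃ f : V → ℕ, ∀ u, f u = T.dist a (w u) := ⟨_, fun _ => rfl⟩
  obtain ⟨δ, hδeq⟩ : ∃ f : V → ℕ, ∀ u, f u = T.dist u (w u) := ⟨_, fun _ => rfl⟩
  have hM4 : ∀ u, m u ≤ L ∧ v (m u) = w u := by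
    intro u
    obtain ⟨t, ht1, ht2⟩ := Walk.mem_support_iff_exists_getVert.mp (hwP u)
    have htL : t ≤ L := by omega
    have hda : T.dist a (v t) = t := (hva t htL).1
    have hmu : m u = t := by
      rw [hmeq u, ← ht1, ← hveq t]
      exact hda
    constructor
    · omega
    · rw [hmu, hveq t, ht1]
  have hMid : ∀ u, T.dist u a = δ u + m u ∧ T.dist u b = δ u + (L - m u) ∧ δ u ≤ m u ∧
      m u ≤ L ∧ δ u ≤ L - m u := by
    intro u
    have h4 := hM4 u
    have hwa' := hwa u
    have hwb' := hwb u
    have h2 := (hva (m u) h4.1).2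
    rw [h4.2] at h2
    have h1 := hcomm a (w u)
    have hme := hmeq u
    have hde := hδeq u
    have hub : T.dist u b ≤ L := hmax u b
    have hua : T.dist u a ≤ L := hmax u a
    refine ⟨by omega, by omega, by omega, h4.1, by omega⟩
  have hchar_ge : ∀ u j, j ≤ L → m u ≤ j → T.dist u (v j) = δ u + (j - m u) := by
    intro u j hjL hmj
    have h4 := hM4 u
    have hMu := hMid u
    have hde := hδeq u
    have hup : T.dist u (v j) ≤ δ u + (j - m u) := by
      have ht := htri u (w u) (v j)
      have e : T.dist (v (m u)) (v j) = j - m u := hS2 (m u) j hmj hjL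
      rw [h4.2] at e
      omega
    have hdown : T.dist u b ≤ T.dist u (v j) + T.dist (v j) b := htri u (v j) b
    have hjb := (hva j hjL).2
    omega
  have hchar_le : ∀ u j, j ≤ L → j ≤ m u → T.dist u (v j) = δ u + (m u - j) := by
    intro u j hjL hjm
    have h4 := hM4 u
    have hMu := hMid u
    have hde := hδeq u
    have hup : T.dist u (v j) ≤ δ u + (m u - j) := by
      have ht := htri u (w u) (v j)
      have e : T.dist (v j) (v (m u)) = m u - j := hS2 j (m u) hjm h4.1
      rw [h4.2] at e
      have e2 := hcomm (v j) (w u)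
      omega
    have hdown : T.dist u a ≤ T.dist u (v j) + T.dist (v j) a := htri u (v j) a
    have hja := (hva j hjL).1
    have hc := hcomm (v j) a
    omega
  have hBTWm : ∀ u x : V, T.dist u b = T.dist u x + T.dist x b → m u ≤ m x := by
    intro u x hbtw
    have hMu := hMid u
    have hMx := hMid x
    have hkey : δ u ≤ T.dist u x + δ x := by
      have h1 : δ u ≤ T.dist u (v (m x)) := by
        rcases le_total (m u) (m x) with hle | hle
        · rw [hchar_ge u (m x) hMx.2.2.2.1 hle]; omega
        · rw [hchar_le u (m x) hMx.2.2.2.1 hle]; omega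
      have h2 : T.dist u (v (m x)) ≤ T.dist u x + T.dist x (v (m x)) := htri u x (v (m x))
      have h3 : T.dist x (v (m x)) = δ x := by rw [(hM4 x).2]; exact (hδeq x).symm
      omega
    omega
  have hMvj : ∀ j, j ≤ L → m (v j) = j ∧ δ (v j) = 0 := by
    intro j hjL
    have hMu := hMid (v j)
    have h1 := (hva j hjL).1
    have h2 := (hva j hjL).2
    have hc := hcomm (v j) a
    omega
  have hmb : m b = L := by
    have hvL : v L = b := by
      rw [hveq, ← hpl]
      exact p.getVert_length
    have := (hMvj L le_rfl).1
    rwa [hvL] at this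
  -- L is large
  have hL2 : 2 * d₂ + 1 ≤ L := by
    by_contra hsmall
    push_neg at hsmall
    rcases le_or_gt L d₂ with hcc1 | hcc2
    · refine h a a ?_
      rw [Set.eq_univ_iff_forall]
      intro u
      right
      exact ⟨hconn a u, (hmax a u).trans (by omega)⟩
    · refine h (v (L - d₂)) (v (L - d₂)) ?_
      rw [Set.eq_univ_iff_forall]
      intro u
      right
      refine ⟨hconn _ u, ?_⟩
      have hMu := hMid u
      have hcu := hcomm (v (L - d₂)) u
      rcases le_total (m u) (L - d₂) with hle | hle
      · have := hchar_ge u (L - d₂) (by omega) hle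
        omega
      · have := hchar_le u (L - d₂) (by omega) hle
        omega
  -- injection counting helper
  have hinjcard : ∀ (n : ℕ) (ι : Fin n → V) (A' : Set V), Function.Injective ι →
      (∀ t, ι t ∈ A') → n ≤ A'.ncard := by
    intro n ι A' hinj hsub
    have hrc : (Set.range ι).ncard = n := by
      rw [← Set.image_univ, Set.ncard_image_of_injective _ hinj, Set.ncard_univ,
        Nat.card_eq_fintype_card, Fintype.card_fin]
    calc n = _ := hrc.symm
      _ ≤ _ := Set.ncard_le_ncard (by rintro _ ⟨t, rfl⟩; exact hsub t) (Set.toFinite _)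
  -- main case split
  by_cases hcase : ∀ u, d₁ + 1 ≤ m u → m u ≤ c → δ u + m u ≤ 2 * d₁
  · -- CASE A : the d₁-ball covers the a-end up to c
    have hcov : ∀ u, m u ≤ c → T.dist (v d₁) u ≤ d₁ := by
      intro u hmu
      have hcu := hcomm (v d₁) u
      have hMu := hMid u
      by_cases hm1 : m u ≤ d₁
      · have := hchar_ge u d₁ (by omega) hm1
        omega
      · have := hchar_le u d₁ (by omega) (by omega)
        have := hcase u (by omega) hmu
        omega
    have hmu₀ : c < m (v (c + 1)) := by
      have := (hMvj (c + 1) (by omega)).1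
      omega
    have hbtw₀ : T.dist (v (c + 1)) b =
        T.dist (v (c + 1)) (v (c + d₂ + 1)) + T.dist (v (c + d₂ + 1)) b := by
      have e1 := (hva (c + 1) (by omega)).2
      have e2 := (hva (c + d₂ + 1) (by omega)).2
      have e3 := hS2 (c + 1) (c + d₂ + 1) (by omega) (by omega)
      omega
    have hd₀ : d₂ ≤ T.dist (v (c + d₂ + 1)) (v (c + 1)) := by
      have e3 := hS2 (c + 1) (c + d₂ + 1) (by omega) (by omega)
      have := hcomm (v (c + d₂ + 1)) (v (c + 1))
      omega
    rcases gadget hT b m c d₂ hd₂pos hBTWm (v (c + 1)) (v (c + d₂ + 1)) hmu₀ hbtw₀ hd₀ with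
      hg | ⟨y, hyb, hE2, hcount⟩
    · exfalso
      refine h (v d₁) b ?_
      rw [Set.eq_univ_iff_forall]
      intro u
      by_cases hmu : m u ≤ c
      · exact Or.inl ⟨hconn _ u, hcov u hmu⟩
      · exact Or.inr ⟨hconn b u, hg u (by omega)⟩
    · refine ⟨v d₁, y, {u : V | c < m u ∧ ¬ (T.dist u b = T.dist u y + T.dist y b)}, ?_, ?_, ?_⟩
      · intro _
        exact conn_lemma hT b y m c hBTWm hyb (by omega)
      · -- cardinality
        set W := {u : V | c < m u ∧ T.dist u b = T.dist u y + T.dist y b} with hW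
        set A := {u : V | m u ≤ c} with hA
        set S := {u : V | c < m u ∧ ¬ (T.dist u b = T.dist u y + T.dist y b)} with hS
        have hdisj : Disjoint A W := by
          rw [Set.disjoint_left]
          rintro u hu ⟨h1, -⟩
          have : m u ≤ c := hu
          omega
        have hAcard : c + 1 ≤ A.ncard := by
          refine hinjcard (c + 1) (fun j => v j.1) A ?_ ?_
          · intro t1 t2 heq
            have := hvinj t1.1 t2.1 (by omega) (by omega) heq
            exact Fin.ext this
          · intro t
            have := (hMvj t.1 (by omega)).1
            show m (v t.1) ≤ c
            omega
        have hsub : A ∪ W ⊆ Sᶜ := by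
          rintro u (hu | hu)
          · intro hus
            have h1 : m u ≤ c := hu
            have h2 : c < m u := hus.1
            omega
          · intro hus
            exact hus.2 hu.2
        have hAW : (A ∪ W).ncard = A.ncard + W.ncard :=
          Set.ncard_union_eq hdisj (Set.toFinite _) (Set.toFinite _)
        have hle1 : (A ∪ W).ncard ≤ Sᶜ.ncard := Set.ncard_le_ncard hsub (Set.toFinite _)
        have hcompl := Set.ncard_add_ncard_compl S
        have hcard : Nat.card V = Fintype.card V := Nat.card_eq_fintype_card
        omega
      · -- coverage
        intro u hu
        simp only [Set.mem_compl_iff, Set.mem_setOf_eq, not_and, not_not] at hu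
        by_cases hmu : m u ≤ c
        · exact Or.inl ⟨hconn _ u, hcov u hmu⟩
        · exact Or.inr ⟨hconn y u, hE2 u (by omega) (hu (by omega))⟩
  · -- CASE B : a long branch hangs low near the a-end
    push_neg at hcase
    obtain ⟨us, hus1, hus2, hus3⟩ := hcase
    have hδus : T.dist us (w us) = δ us := (hδeq us).symm
    have hcov : ∀ u, m u ≤ d₂ → T.dist (v d₂) u ≤ d₂ := by
      intro u hmu
      have hcu := hcomm (v d₂) u
      have hMu := hMid u
      have := hchar_ge u d₂ (by omega) hmu
      omega
    have hmu₀ : d₂ < m (v (d₂ + 1)) := by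
      have := (hMvj (d₂ + 1) (by omega)).1
      omega
    have hbtw₀ : T.dist (v (d₂ + 1)) b =
        T.dist (v (d₂ + 1)) (v (d₂ + d₁ + 1)) + T.dist (v (d₂ + d₁ + 1)) b := by
      have e1 := (hva (d₂ + 1) (by omega)).2
      have e2 := (hva (d₂ + d₁ + 1) (by omega)).2
      have e3 := hS2 (d₂ + 1) (d₂ + d₁ + 1) (by omega) (by omega)
      omega
    have hd₀ : d₁ ≤ T.dist (v (d₂ + d₁ + 1)) (v (d₂ + 1)) := by
      have e3 := hS2 (d₂ + 1) (d₂ + d₁ + 1) (by omega) (by omega)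
      have := hcomm (v (d₂ + d₁ + 1)) (v (d₂ + 1))
      omega
    rcases gadget hT b m d₂ d₁ hd₁ hBTWm (v (d₂ + 1)) (v (d₂ + d₁ + 1)) hmu₀ hbtw₀ hd₀ with
      hg | ⟨y, hyb, hE2, hcount⟩
    · exfalso
      refine h b (v d₂) ?_
      rw [Set.eq_univ_iff_forall]
      intro u
      by_cases hmu : m u ≤ d₂
      · exact Or.inr ⟨hconn _ u, hcov u hmu⟩
      · exact Or.inl ⟨hconn b u, hg u (by omega)⟩
    · -- the meet-equality trick : points between us and w us have the same meet
      have hM8 : ∀ s : V, T.dist us s + T.dist s (w us) = δ us → m s = m us ∧ w s = w us := by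
        intro s hsum
        have h4s := hM4 s
        have h4u := hM4 us
        have hMs := hMid s
        have hMu := hMid us
        have htri1 := htri us s (w s)
        have hδs := hδeq s
        rcases le_total (m us) (m s) with hle | hle
        · have e1 := hchar_ge us (m s) hMs.2.2.2.1 hle
          have e2 := hchar_le s (m us) hMu.2.2.2.1 hle
          rw [h4s.2] at e1
          rw [h4u.2] at e2
          have hms : m s = m us := by omega
          refine ⟨hms, ?_⟩
          rw [← h4s.2, ← h4u.2, hms]
        · have e1 := hchar_le us (m s) hMs.2.2.2.1 hle
          have e2 := hchar_ge s (m us) hMu.2.2.2.1 hle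
          rw [h4s.2] at e1
          rw [h4u.2] at e2
          have hms : m s = m us := by omega
          refine ⟨hms, ?_⟩
          rw [← h4s.2, ← h4u.2, hms]
      have hbr : ∀ t : ℕ, t < δ us → ∃ s : V,
          T.dist us s = t ∧ m s = m us ∧ δ s = δ us - t := by
        intro t ht
        obtain ⟨s, hs1, hs2⟩ := tree_exists_between hT us (w us) t (by omega)
        rw [hδus] at hs2
        obtain ⟨hms, hws⟩ := hM8 s hs2
        refine ⟨s, hs1, hms, ?_⟩
        rw [hδeq s, hws]
        omega
      choose sf hsf1 hsf2 hsf3 using hbr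
      refine ⟨y, v d₂, {u : V | d₂ < m u ∧ ¬ (T.dist u b = T.dist u y + T.dist y b)}, ?_, ?_, ?_⟩
      · intro _
        exact conn_lemma hT b y m d₂ hBTWm hyb (by omega)
      · -- cardinality
        set W := {u : V | d₂ < m u ∧ T.dist u b = T.dist u y + T.dist y b} with hW
        set A := {u : V | m u ≤ d₂} with hA
        set S := {u : V | d₂ < m u ∧ ¬ (T.dist u b = T.dist u y + T.dist y b)} with hS
        have hdisj : Disjoint A W := by
          rw [Set.disjoint_left]
          rintro u hu ⟨h1, -⟩
          have : m u ≤ d₂ := hu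
          omega
        have hAcard : d₂ + 1 + δ us ≤ A.ncard := by
          set ι : Fin (d₂ + 1 + δ us) → V := fun t =>
            if htt : t.1 ≤ d₂ then v t.1 else sf (t.1 - (d₂ + 1)) (by omega) with hι
          refine hinjcard _ ι A ?_ ?_
          · intro t1 t2 heq
            rw [hι] at heq
            simp only at heq
            by_cases h1 : t1.1 ≤ d₂
            · by_cases h2 : t2.1 ≤ d₂
              · rw [dif_pos h1, dif_pos h2] at heq
                have := hvinj t1.1 t2.1 (by omega) (by omega) heq
                exact Fin.ext this
              · rw [dif_pos h1, dif_neg h2] at heq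
                exfalso
                have hd1 := (hMvj t1.1 (by omega)).2
                have hd2 := hsf3 (t2.1 - (d₂ + 1)) (by omega)
                rw [heq] at hd1
                omega
            · by_cases h2 : t2.1 ≤ d₂
              · rw [dif_neg h1, dif_pos h2] at heq
                exfalso
                have hd1 := (hMvj t2.1 (by omega)).2
                have hd2 := hsf3 (t1.1 - (d₂ + 1)) (by omega)
                rw [← heq] at hd1
                omega
              · rw [dif_neg h1, dif_neg h2] at heq
                have e1 := hsf1 (t1.1 - (d₂ + 1)) (by omega)
                have e2 := hsf1 (t2.1 - (d₂ + 1)) (by omega)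
                rw [heq] at e1
                exact Fin.ext (by omega)
          · intro t
            rw [hι]
            simp only
            by_cases htt : t.1 ≤ d₂
            · rw [dif_pos htt]
              have := (hMvj t.1 (by omega)).1
              show m (v t.1) ≤ d₂
              omega
            · rw [dif_neg htt]
              have := hsf2 (t.1 - (d₂ + 1)) (by omega)
              show m _ ≤ d₂
              omega
        have hsub : A ∪ W ⊆ Sᶜ := by
          rintro u (hu | hu)
          · intro hus
            have h1 : m u ≤ d₂ := hu
            have h2 : d₂ < m u := hus.1
            omega
          · intro hus
            exact hus.2 hu.2
        have hAW : (A ∪ W).ncard = A.ncard + W.ncard :=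
          Set.ncard_union_eq hdisj (Set.toFinite _) (Set.toFinite _)
        have hle1 : (A ∪ W).ncard ≤ Sᶜ.ncard := Set.ncard_le_ncard hsub (Set.toFinite _)
        have hcompl := Set.ncard_add_ncard_compl S
        have hcard : Nat.card V = Fintype.card V := Nat.card_eq_fintype_card
        omega
      · -- coverage
        intro u hu
        simp only [Set.mem_compl_iff, Set.mem_setOf_eq, not_and, not_not] at hu
        by_cases hmu : m u ≤ d₂
        · exact Or.inr ⟨hconn _ u, hcov u hmu⟩
        · exact Or.inl ⟨hconn y u, hE2 u (by omega) (hu (by omega))⟩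
end

section
/- Let n_1, ..., n_p and k be positive integers such that n_1 + n_2 + ... + n_p + k(p−1) ≤ k². Then the disjoint union of paths P_{n_1} ∪ P_{n_2} ∪ ... ∪ P_{n_p} has burning number at most k. -/
/-- The disjoint union of the path graphs `P_{n 0}, …, P_{n (p-1)}`:
vertices are pairs `⟨i, j⟩` with `j : Fin (n i)`, and two vertices are adjacent
iff they lie in the same component and are consecutive on that path. -/
def pathsUnion (p : ℕ) (n : Fin p → ℕ) : SimpleGraph (Σ i : Fin p, Fin (n i)) where
  Adj a b := a.1 = b.1 ∧ ((a.2 : ℕ) + 1 = (b.2 : ℕ) ∨ (b.2 : ℕ) + 1 = (a.2 : ℕ))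
  symm := ⟨by rintro a b ⟨h1, h2⟩; exact ⟨h1.symm, h2.symm⟩⟩
  loopless := ⟨by rintro a ⟨-, h | h⟩ <;> omega⟩

namespace BurnAux

/-- The number of vertices a set of fire radii can cover. -/
def cap (F : Finset ℕ) : ℕ := ∑ r ∈ F, (2 * r + 1)

lemma cap_singleton (r : ℕ) : cap {r} = 2 * r + 1 := by simp [cap]

lemma cap_range (k : ℕ) : cap (Finset.range k) = k ^ 2 := by
  induction k with
  | zero => simp [cap]
  | succ k ih =>
    rw [cap, Finset.sum_range_succ, ← cap, ih]; ring

/-- A path of `m` vertices can be covered by balls with radii from `F`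
provided `m ≤ cap F`. -/
lemma cover (F : Finset ℕ) : ∀ m : ℕ, 1 ≤ m → m ≤ cap F →
    ∃ c : ℕ → ℕ, (∀ r, c r < m) ∧
      ∀ v, v < m → ∃ r ∈ F, c r ≤ v + r ∧ v ≤ c r + r := by
  classical
  induction F using Finset.induction_on with
  | empty => intro m h1 h2; simp [cap] at h2; omega
  | @insert r F hr ih =>
    intro m h1 h2
    rw [cap, Finset.sum_insert hr, ← cap] at h2
    by_cases hm : m ≤ 2 * r + 1
    · refine ⟨fun _ => min r (m - 1), fun r' => ?_, fun v hv => ⟨r, Finset.mem_insert_self _ _, ?_, ?_⟩⟩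
      · show min r (m - 1) < m; omega
      · show min r (m - 1) ≤ v + r; omega
      · show v ≤ min r (m - 1) + r; omega
    · obtain ⟨c, hc1, hc2⟩ := ih (m - (2 * r + 1)) (by omega) (by omega)
      refine ⟨Function.update c r (m - (2 * r + 1) + r), ?_, ?_⟩
      · intro r'
        rcases eq_or_ne r' r with rfl | hne
        · rw [Function.update_self]; omega
        · rw [Function.update_of_ne hne]; have := hc1 r'; omega
      · intro v hv
        by_cases hv' : v < m - (2 * r + 1)
        · obtain ⟨r', hr', h3, h4⟩ := hc2 v hv'
          have hne : r' ≠ r := fun h => hr (h ▸ hr')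
          refine ⟨r', Finset.mem_insert_of_mem hr', ?_, ?_⟩ <;>
            rw [Function.update_of_ne hne] <;> omega
        · refine ⟨r, Finset.mem_insert_self _ _, ?_, ?_⟩ <;>
            rw [Function.update_self] <;> omega

/-- A solution: disjoint sets of radii, all `< k`, covering the demands. -/
def Sol (k : ℕ) (l : List ℕ) : Prop :=
  ∃ L : List (Finset ℕ), List.Forall₂ (fun m F => m ≤ cap F) l L ∧
    L.Pairwise Disjoint ∧ ∀ F ∈ L, F ⊆ Finset.range k

lemma forall₂_perm {R : ℕ → Finset ℕ → Prop} {l₁ l₂ : List ℕ} (h : l₁.Perm l₂) :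
    ∀ {L₂ : List (Finset ℕ)}, List.Forall₂ R l₂ L₂ →
      ∃ L₁, L₁.Perm L₂ ∧ List.Forall₂ R l₁ L₁ := by
  induction h with
  | nil =>
    intro L₂ h2; cases h2; exact ⟨[], List.Perm.refl _, List.Forall₂.nil⟩
  | cons x h ih =>
    intro L₂ h2
    cases h2 with
    | cons hx ht =>
      obtain ⟨L₁, hp, hf⟩ := ih ht
      exact ⟨_ :: L₁, hp.cons _, List.Forall₂.cons hx hf⟩
  | swap x y t =>
    intro L₂ h2
    cases h2 with
    | cons hx ht =>
      cases ht with
      | cons hy htt =>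
        exact ⟨_ :: _ :: _, List.Perm.swap _ _ _, List.Forall₂.cons hy (List.Forall₂.cons hx htt)⟩
  | trans h1 h2 ih1 ih2 =>
    intro L₃ h3
    obtain ⟨L₂, p23, f2⟩ := ih2 h3
    obtain ⟨L₁, p12, f1⟩ := ih1 f2
    exact ⟨L₁, p12.trans p23, f1⟩

lemma sol_perm {k : ℕ} {l₁ l₂ : List ℕ} (h : l₁.Perm l₂) (h2 : Sol k l₂) : Sol k l₁ := by
  obtain ⟨L₂, hf, hd, hr⟩ := h2
  obtain ⟨L₁, hp, hf1⟩ := forall₂_perm h hf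
  exact ⟨L₁, hf1, (hp.pairwise_iff (fun {_ _} hd => Disjoint.symm hd)).mpr hd,
    fun F hF => hr F (hp.mem_iff.mp hF)⟩

/-- The all-small case: use singleton radii. -/
lemma solC : ∀ (l : List ℕ) (k : ℕ), (∀ m ∈ l, m + l.length ≤ k) → Sol k l := by
  intro l
  induction l with
  | nil => exact fun k _ => ⟨[], List.Forall₂.nil, List.Pairwise.nil, by simp⟩
  | cons m t ih =>
    intro k hk
    have hk1 : m + t.length + 1 ≤ k := by
      have := hk m (by simp); simp at this; omega
    obtain ⟨L, hf, hd, hr⟩ := ih (k - 1) (fun m' hm' => by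
      have := hk m' (by simp [hm']); simp at this; omega)
    refine ⟨{k - 1} :: L, List.Forall₂.cons ?_ hf, List.Pairwise.cons ?_ hd, ?_⟩
    · rw [cap_singleton]; omega
    · intro F hF
      rw [Finset.disjoint_singleton_left]
      intro hmem
      have := hr F hF hmem
      rw [Finset.mem_range] at this; omega
    · intro F hF
      rcases List.mem_cons.mp hF with rfl | hF
      · intro a ha
        rw [Finset.mem_singleton] at ha
        rw [Finset.mem_range]; omega
      · exact (hr F hF).trans (Finset.range_subset_range.mpr (by omega))

/-- Main combinatorial lemma. -/
lemma sol_main : ∀ (k : ℕ) (l : List ℕ), (∀ m ∈ l, 1 ≤ m) →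
    l.sum + k * (l.length - 1) ≤ k ^ 2 → Sol k l := by
  intro k
  induction k with
  | zero =>
    intro l h1 h2
    match l with
    | [] => exact ⟨[], List.Forall₂.nil, List.Pairwise.nil, by simp⟩
    | m :: t =>
      exfalso
      have := h1 m (by simp)
      simp [List.sum_cons] at h2
      omega
  | succ k ih =>
    intro l h1 h2
    by_cases hbig : ∃ m ∈ l, k + 2 ≤ m + l.length
    · obtain ⟨m, hm, hge⟩ := hbig
      have hperm : l.Perm (m :: l.erase m) := List.perm_cons_erase hm
      set t := l.erase m with ht
      have hsum : l.sum = m + t.sum := by rw [hperm.sum_eq]; simp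
      have hlen : l.length = t.length + 1 := by rw [hperm.length_eq]; simp
      have h1' : ∀ m' ∈ t, 1 ≤ m' := fun m' hm' =>
        h1 m' (hperm.mem_iff.mpr (by simp [hm']))
      apply sol_perm hperm
      have e2 : (k + 1) ^ 2 = k ^ 2 + 2 * k + 1 := by ring
      have e3 : (k + 1) * t.length = k * t.length + t.length := by ring
      rw [hsum, hlen] at h2
      simp only [Nat.add_sub_cancel] at h2
      rw [e3, e2] at h2
      -- h2 : m + t.sum + (k * t.length + t.length) ≤ k ^ 2 + 2 * k + 1
      by_cases hhuge : 2 * (k + 1) ≤ m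
      · -- shrink the big path by one ball of radius k
        have hrec := ih ((m - (2 * k + 1)) :: t)
          (by
            intro m' hm'
            rcases List.mem_cons.mp hm' with rfl | hm'
            · omega
            · exact h1' m' hm')
          (by
            simp only [List.sum_cons, List.length_cons, Nat.add_sub_cancel]
            omega)
        obtain ⟨L, hf, hd, hr⟩ := hrec
        cases hf with
        | cons hF hft =>
          rename_i F Fs
          have hkF : k ∉ F := by
            intro hmem
            have := hr F (by simp) hmem
            rw [Finset.mem_range] at this; omega
          obtain ⟨hdh, hdt⟩ := List.pairwise_cons.mp hd
          refine ⟨insert k F :: Fs, List.Forall₂.cons ?_ hft, List.Pairwise.cons ?_ hdt, ?_⟩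
          · rw [cap, Finset.sum_insert hkF, ← cap]; omega
          · intro F' hF'
            refine Finset.disjoint_insert_left.mpr ⟨?_, hdh F' hF'⟩
            intro hmem
            have := hr F' (by simp [hF']) hmem
            rw [Finset.mem_range] at this; omega
          · intro F' hF'
            rcases List.mem_cons.mp hF' with rfl | hF'
            · intro a ha
              rcases Finset.mem_insert.mp ha with rfl | ha
              · rw [Finset.mem_range]; omega
              · have := hr F (by simp) ha
                rw [Finset.mem_range] at this ⊢; omega
            · exact (hr F' (by simp [hF'])).trans (Finset.range_subset_range.mpr (by omega))
      · by_cases htn : t = []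
        · -- single path
          rw [htn]
          refine ⟨[Finset.range (k + 1)], List.Forall₂.cons ?_ List.Forall₂.nil,
            List.pairwise_singleton _ _, by simp⟩
          rw [cap_range]
          rw [htn] at h2
          simp at h2
          omega
        · -- give the path one ball of radius k, drop it
          have htne : 0 < t.length := List.length_pos_iff.mpr htn
          have hrec := ih t h1'
            (by
              have e5 : k * t.length = k * (t.length - 1) + k := by
                obtain ⟨q, hq⟩ : ∃ q, t.length = q + 1 := ⟨t.length - 1, by omega⟩
                rw [hq]
                simp [Nat.mul_succ]
              omega)
          obtain ⟨Fs, hf, hd, hr⟩ := hrec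
          refine ⟨{k} :: Fs, List.Forall₂.cons ?_ hf, List.Pairwise.cons ?_ hd, ?_⟩
          · rw [cap_singleton]; omega
          · intro F hF
            rw [Finset.disjoint_singleton_left]
            intro hmem
            have := hr F hF hmem
            rw [Finset.mem_range] at this; omega
          · intro F hF
            rcases List.mem_cons.mp hF with rfl | hF
            · intro a ha
              rw [Finset.mem_singleton] at ha
              rw [Finset.mem_range]; omega
            · exact (hr F hF).trans (Finset.range_subset_range.mpr (by omega))
    · push_neg at hbig
      exact solC l (k + 1) (fun m hm => by have := hbig m hm; omega)
lemma walk_exists {p : ℕ} {n : Fin p → ℕ} (j : Fin p) :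
    ∀ (d : ℕ) (a b : Fin (n j)), (a : ℕ) + d = b →
      ∃ w : (pathsUnion p n).Walk ⟨j, a⟩ ⟨j, b⟩, w.length = d := by
  intro d
  induction d with
  | zero =>
    intro a b hab
    have : a = b := Fin.ext (by omega)
    subst this
    exact ⟨SimpleGraph.Walk.nil, rfl⟩
  | succ d ihd =>
    intro a b hab
    have hlt : (a : ℕ) + 1 < n j := by have := b.isLt; omega
    have hadj : (pathsUnion p n).Adj ⟨j, a⟩ ⟨j, ⟨(a : ℕ) + 1, hlt⟩⟩ := ⟨rfl, Or.inl rfl⟩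
    obtain ⟨w, hw⟩ := ihd ⟨(a : ℕ) + 1, hlt⟩ b (by simp; omega)
    exact ⟨SimpleGraph.Walk.cons hadj w, by simp [hw]⟩

lemma mem_ball {p : ℕ} {n : Fin p → ℕ} (j : Fin p) (cv u : Fin (n j)) (r : ℕ)
    (h1 : (cv : ℕ) ≤ (u : ℕ) + r) (h2 : (u : ℕ) ≤ (cv : ℕ) + r) :
    (⟨j, u⟩ : Σ i : Fin p, Fin (n i)) ∈ ball (pathsUnion p n) ⟨j, cv⟩ r := by
  rcases le_total (cv : ℕ) (u : ℕ) with hle | hle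
  · obtain ⟨w, hw⟩ := walk_exists j ((u : ℕ) - (cv : ℕ)) cv u (by omega)
    exact ⟨w.reachable, le_trans (SimpleGraph.dist_le w) (by omega)⟩
  · obtain ⟨w, hw⟩ := walk_exists j ((cv : ℕ) - (u : ℕ)) u cv (by omega)
    refine ⟨w.reachable.symm, ?_⟩
    rw [SimpleGraph.dist_comm]
    exact le_trans (SimpleGraph.dist_le w) (by omega)

end BurnAux

theorem burning_pathsUnion_le {p k : ℕ} (hp : 1 ≤ p) (hk : 1 ≤ k) (n : Fin p → ℕ)
    (hn : ∀ i, 1 ≤ n i) (h : (∑ i, n i) + k * (p - 1) ≤ k ^ 2) :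
    burningNumber (pathsUnion p n) ≤ k := by
  classical
  obtain ⟨L, hf, hd, hrange⟩ := BurnAux.sol_main k (List.ofFn n)
    (by
      intro m hm
      obtain ⟨i, rfl⟩ := List.mem_ofFn.mp hm
      exact hn i)
    (by
      rw [List.sum_ofFn, List.length_ofFn]
      exact h)
  have hlen : (List.ofFn n).length = L.length := hf.length_eq
  rw [List.length_ofFn] at hlen
  -- the family of radius sets
  set F : Fin p → Finset ℕ := fun j => L.get (Fin.cast hlen j) with hF
  have hcap : ∀ j : Fin p, n j ≤ BurnAux.cap (F j) := by
    intro j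
    have := (List.forall₂_iff_get.mp hf).2 j (by simp) (by omega)
    simpa [hF] using this
  have huniq : ∀ {r : ℕ} {j j' : Fin p}, r ∈ F j → r ∈ F j' → j = j' := by
    intro r j j' hj hj'
    by_contra hne
    have key : ∀ (a b : Fin p), (a : ℕ) < (b : ℕ) → Disjoint (F a) (F b) := by
      intro a b hab
      exact List.pairwise_iff_get.mp hd (Fin.cast hlen a) (Fin.cast hlen b) hab
    rcases Nat.lt_or_ge (j : ℕ) (j' : ℕ) with hlt | hge
    · exact (Finset.disjoint_left.mp (key j j' hlt) hj) hj'
    · have hlt : (j' : ℕ) < (j : ℕ) := by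
        rcases Nat.lt_or_ge (j' : ℕ) (j : ℕ) with h' | h'
        · exact h'
        · exact absurd (Fin.ext (by omega) : j = j') hne
      exact (Finset.disjoint_left.mp (key j' j hlt) hj') hj
  have hrangeF : ∀ j : Fin p, F j ⊆ Finset.range k := fun j =>
    hrange _ (L.get_mem _)
  -- centers on each path
  choose c hc1 hc2 using fun j : Fin p => BurnAux.cover (F j) (n j) (hn j) (hcap j)
  -- the burning sequence
  set x : Fin k → (Σ i : Fin p, Fin (n i)) := fun i =>
    if hex : ∃ j : Fin p, (k - 1 - (i : ℕ)) ∈ F j then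
      ⟨hex.choose, ⟨c hex.choose (k - 1 - (i : ℕ)), hc1 _ _⟩⟩
    else ⟨⟨0, hp⟩, ⟨0, hn _⟩⟩ with hx
  have key : ∀ (i : Fin k) (j : Fin p) (u : Fin (n j)) (r : ℕ),
      k - 1 - (i : ℕ) = r → r ∈ F j →
      c j r ≤ (u : ℕ) + r → (u : ℕ) ≤ c j r + r →
      (⟨j, u⟩ : Σ i : Fin p, Fin (n i)) ∈ ball (pathsUnion p n) (x i) (k - 1 - (i : ℕ)) := by
    intro i j u r hr hmem hb1 hb2
    subst hr
    have hex : ∃ j' : Fin p, (k - 1 - (i : ℕ)) ∈ F j' := ⟨j, hmem⟩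
    have hxe : x i = ⟨hex.choose, ⟨c hex.choose (k - 1 - (i : ℕ)), hc1 _ _⟩⟩ := by
      rw [hx]; exact dif_pos hex
    have hje : hex.choose = j := huniq hex.choose_spec hmem
    rw [hxe]
    subst hje
    exact BurnAux.mem_ball _ _ _ _ hb1 hb2
  apply Nat.sInf_le
  refine ⟨x, ?_⟩
  rintro ⟨j, u⟩
  obtain ⟨r, hrF, hb1, hb2⟩ := hc2 j u u.isLt
  have hrk : r < k := Finset.mem_range.mp (hrangeF j hrF)
  refine ⟨⟨k - 1 - r, by omega⟩, ?_⟩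
  exact key _ j u r (by show k - 1 - (k - 1 - r) = r; omega) hrF hb1 hb2
end

section
/- (Roshanbin) If a forest T of order n is the disjoint union of p paths (p ≥ 1), then b(T) ≤ ⌈√n⌉ + (p − 1). -/
def ics (x : ℕ) : ℕ := Nat.sqrt (x - 1) + 1

lemma le_ics_sq (x : ℕ) : x ≤ (ics x)^2 := by
  have := Nat.lt_succ_sqrt' (x - 1)
  simp only [ics, Nat.succ_eq_add_one] at *
  omega

lemma ics_pred_sq_le (x : ℕ) : (ics x - 1)^2 ≤ x - 1 := by
  simpa [ics] using Nat.sqrt_le' (x - 1)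

lemma ics_lt_real (x : ℕ) (hx : 1 ≤ x) : (ics x : ℝ) < Real.sqrt x + 1 := by
  have h : ((ics x - 1 : ℕ) : ℝ) < Real.sqrt x := by
    rw [show ((ics x - 1 : ℕ) : ℝ) < Real.sqrt x ↔ _ from Real.lt_sqrt (by positivity)]
    have h2 : (ics x - 1)^2 < x := by have := ics_pred_sq_le x; omega
    calc ((ics x - 1 : ℕ) : ℝ)^2 = (((ics x - 1)^2 : ℕ) : ℝ) := by push_cast; ring
    _ < (x : ℝ) := by exact_mod_cast h2
  have h1 : (1:ℕ) ≤ ics x := by simp [ics]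
  have he : ((ics x : ℕ) : ℝ) = ((ics x - 1 : ℕ) : ℝ) + 1 := by
    have : ics x - 1 + 1 = ics x := by omega
    rw [← this]; push_cast; ring
  rw [he]; linarith

/-- greedy chain of block boundaries, from the last path backwards. -/
def chainF (m : ℕ → ℕ) (p : ℕ) : ℕ → ℕ
  | 0 => 0
  | (j+1) => ics (m (p - 1 - j) + (chainF m p j)^2)

lemma chainF_sq (m p j) : m (p - 1 - j) + (chainF m p j)^2 ≤ (chainF m p (j+1))^2 :=
  le_ics_sq _

lemma chainF_mono (m p) : Monotone (chainF m p) := by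
  apply monotone_nat_of_le_succ
  intro j
  have h := chainF_sq m p j
  nlinarith [sq_nonneg (chainF m p j), sq_nonneg (chainF m p (j+1))]


lemma sqrt_add_sq_le (x y c : ℝ) (hx : 0 ≤ x) (hy : 0 ≤ y) (hc : 0 ≤ c) :
    Real.sqrt (x + (y + c)^2) ≤ Real.sqrt (x + y^2) + c := by
  rw [show Real.sqrt (x + (y+c)^2) ≤ Real.sqrt (x + y^2) + c ↔ _ from
    Real.sqrt_le_left (by positivity)]
  have hy' : y ≤ Real.sqrt (x + y^2) := by
    rw [Real.le_sqrt hy (by positivity)]; linarith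
  nlinarith [Real.sq_sqrt (show (0:ℝ) ≤ x + y^2 by positivity)]

lemma chainF_real_bound (m : ℕ → ℕ) (p : ℕ) (hm : ∀ i, i < p → 1 ≤ m i) :
    ∀ j, 1 ≤ j → j ≤ p →
      (chainF m p j : ℝ) < Real.sqrt (∑ i ∈ Finset.Ico (p - j) p, (m i : ℝ)) + j := by
  intro j
  induction j with
  | zero => omega
  | succ j ih =>
    intro _ hjp
    have hlt : p - 1 - j < p := by omega
    have hsplit : ∑ i ∈ Finset.Ico (p - (j+1)) p, (m i : ℝ)
        = (m (p - 1 - j) : ℝ) + ∑ i ∈ Finset.Ico (p - j) p, (m i : ℝ) := by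
      have h1 : p - (j+1) = p - 1 - j := by omega
      have h2 : p - 1 - j + 1 = p - j := by omega
      rw [h1, Finset.sum_eq_sum_Ico_succ_bot (by omega : p - 1 - j < p), h2]
    have hm1 : 1 ≤ m (p - 1 - j) := hm _ hlt
    rcases Nat.eq_zero_or_pos j with hj0 | hj1
    · subst hj0
      have : chainF m p 1 = ics (m (p - 1 - 0)) := by simp [chainF]
      rw [this]
      have hb := ics_lt_real (m (p - 1 - 0)) hm1
      have hs : ∑ i ∈ Finset.Ico (p - 0) p, (m i : ℝ) = 0 := by simp
      rw [hsplit, hs]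
      push_cast
      simpa using hb
    · have ihb := ih hj1 (by omega)
      set b := chainF m p j with hbdef
      set S := ∑ i ∈ Finset.Ico (p - j) p, (m i : ℝ) with hS
      have hS0 : 0 ≤ S := by positivity
      -- chainF (j+1) = ics (m .. + b^2) < sqrt(m .. + b^2) + 1
      have harg : 1 ≤ m (p - 1 - j) + b^2 := by omega
      have h1 : (chainF m p (j+1) : ℝ) < Real.sqrt ((m (p-1-j) + b^2 : ℕ)) + 1 :=
        ics_lt_real _ harg
      have hb2 : ((m (p-1-j) + b^2 : ℕ) : ℝ) ≤ (m (p-1-j) : ℝ) + (Real.sqrt S + j)^2 := by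
        push_cast
        have hb0 : (0:ℝ) ≤ b := by positivity
        nlinarith [ihb, Real.sqrt_nonneg S]
      have h3 : Real.sqrt ((m (p-1-j) + b^2 : ℕ)) ≤
          Real.sqrt ((m (p-1-j) : ℝ) + S) + j := by
        calc Real.sqrt ((m (p-1-j) + b^2 : ℕ))
            ≤ Real.sqrt ((m (p-1-j) : ℝ) + (Real.sqrt S + j)^2) := Real.sqrt_le_sqrt hb2
          _ ≤ Real.sqrt ((m (p-1-j) : ℝ) + (Real.sqrt S)^2) + j := by
              exact sqrt_add_sq_le _ _ _ (by positivity) (Real.sqrt_nonneg _) (by positivity)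
          _ = Real.sqrt ((m (p-1-j) : ℝ) + S) + j := by rw [Real.sq_sqrt hS0]
      rw [hsplit]
      push_cast
      linarith

lemma pathsUnion_walk {p : ℕ} {n : Fin p → ℕ} (i : Fin p) :
    ∀ (d : ℕ) (a b : Fin (n i)), (a : ℕ) + d = (b : ℕ) →
      ∃ w : (pathsUnion p n).Walk ⟨i, a⟩ ⟨i, b⟩, w.length ≤ d := by
  intro d
  induction d with
  | zero =>
    intro a b h
    have : a = b := Fin.ext (by omega)
    subst this
    exact ⟨SimpleGraph.Walk.nil, by simp⟩
  | succ d ih =>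
    intro a b h
    have ha1 : (a : ℕ) + 1 < n i := by omega
    set a' : Fin (n i) := ⟨(a : ℕ) + 1, ha1⟩ with ha'
    have hadj : (pathsUnion p n).Adj ⟨i, a⟩ ⟨i, a'⟩ := ⟨rfl, Or.inl rfl⟩
    obtain ⟨w, hw⟩ := ih a' b (by simp [ha']; omega)
    exact ⟨SimpleGraph.Walk.cons hadj w, by simpa using Nat.add_le_add_right hw 1⟩

lemma pathsUnion_reach_dist {p : ℕ} {n : Fin p → ℕ} (i : Fin p) (a b : Fin (n i)) :
    (pathsUnion p n).Reachable ⟨i, a⟩ ⟨i, b⟩ ∧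
      (pathsUnion p n).dist ⟨i, a⟩ ⟨i, b⟩ ≤ Nat.dist (a : ℕ) (b : ℕ) := by
  rcases le_total (a : ℕ) (b : ℕ) with hab | hab
  · obtain ⟨w, hw⟩ := pathsUnion_walk i ((b : ℕ) - (a : ℕ)) a b (by omega)
    refine ⟨w.reachable, le_trans (SimpleGraph.dist_le w) ?_⟩
    rw [Nat.dist]; omega
  · obtain ⟨w, hw⟩ := pathsUnion_walk i ((a : ℕ) - (b : ℕ)) b a (by omega)
    refine ⟨w.reverse.reachable, le_trans (SimpleGraph.dist_le w.reverse) ?_⟩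
    rw [SimpleGraph.Walk.length_reverse, Nat.dist]; omega

lemma dist_center (u r j ni : ℕ) (hr1 : r^2 ≤ u^2 - j - 1) (hr2 : u^2 - j - 1 < (r+1)^2)
    (hru : r < u) (hj : j < ni) (hju : j + 1 ≤ u^2) :
    Nat.dist (min (u^2 - (r+1)^2 + r) (ni - 1)) j ≤ r := by
  have hB : (r+1)^2 = r^2 + 2*r + 1 := by ring
  have hBu : (r+1)^2 ≤ u^2 := Nat.pow_le_pow_left (by omega) 2
  rw [Nat.dist]
  omega

/-- Roshanbin: a forest of order `n` that is the disjoint union of `p` paths has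
burning number at most `⌈√n⌉ + (p - 1)`. -/
theorem burning_pathsUnion_le_ceil_sqrt {p : ℕ} (hp : 1 ≤ p) (n : Fin p → ℕ)
    (hn : ∀ i, 1 ≤ n i) :
    burningNumber (pathsUnion p n) ≤ ⌈Real.sqrt (∑ i, n i : ℕ)⌉₊ + (p - 1) := by
  classical
  set S : ℕ := ∑ i, n i with hSdef
  set k : ℕ := ⌈Real.sqrt (S : ℕ)⌉₊ + (p - 1) with hkdef
  set m : ℕ → ℕ := fun i => if h : i < p then n ⟨i, h⟩ else 1 with hmdef
  have hm : ∀ i, i < p → 1 ≤ m i := by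
    intro i hi; simp only [hmdef, dif_pos hi]; exact hn _
  have hmn : ∀ i : Fin p, m (i : ℕ) = n i := by
    intro i; simp only [hmdef, dif_pos i.isLt]
  -- sum identification
  have hsum : ∑ i ∈ Finset.Ico 0 p, (m i : ℝ) = (S : ℝ) := by
    rw [← Finset.range_eq_Ico, ← Fin.sum_univ_eq_sum_range (fun i => (m i : ℝ)) p]
    push_cast [hSdef]
    exact Finset.sum_congr rfl (fun i _ => by rw [hmn])
  have hS1 : 1 ≤ S := by
    rw [hSdef]
    calc 1 ≤ ∑ _i : Fin p, 1 := by simpa using hp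
    _ ≤ ∑ i, n i := Finset.sum_le_sum (fun i _ => hn i)
  have hceil1 : 1 ≤ ⌈Real.sqrt (S : ℕ)⌉₊ := by
    have : (0:ℕ) < ⌈Real.sqrt (S : ℕ)⌉₊ := by
      rw [Nat.lt_ceil]
      push_cast
      exact Real.sqrt_pos.2 (by exact_mod_cast hS1)
    omega
  have hk1 : 1 ≤ k := by omega
  -- chain top bound
  have hchaintop : chainF m p p ≤ k := by
    have hb := chainF_real_bound m p hm p hp le_rfl
    rw [Nat.sub_self, hsum] at hb
    have hle := Nat.le_ceil (Real.sqrt (S : ℕ))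
    by_contra hcon
    push_neg at hcon
    have : (k : ℝ) + 1 ≤ (chainF m p p : ℝ) := by exact_mod_cast hcon
    rw [hkdef] at this
    push_cast [Nat.cast_sub hp] at this
    push_cast at hb hle
    linarith
  -- per-component chain inequality
  have hcomp : ∀ i : Fin p,
      n i + (chainF m p (p - 1 - (i : ℕ)))^2 ≤ (chainF m p (p - (i : ℕ)))^2 := by
    intro i
    have hi : (i : ℕ) < p := i.isLt
    have h1 : p - (i : ℕ) = (p - 1 - (i : ℕ)) + 1 := by omega
    have h2 : p - 1 - (p - 1 - (i : ℕ)) = (i : ℕ) := by omega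
    have := chainF_sq m p (p - 1 - (i : ℕ))
    rw [h2] at this
    rw [h1, ← hmn i]
    exact this
  -- the burning sequence
  set G := pathsUnion p n with hG
  let v0 : Σ i : Fin p, Fin (n i) := ⟨⟨0, hp⟩, ⟨0, hn _⟩⟩
  set P : ℕ → Prop := fun rad => ∃ i : Fin p,
      chainF m p (p - 1 - (i : ℕ)) ≤ rad ∧ rad < chainF m p (p - (i : ℕ)) with hPdef
  let x : Fin k → Σ i : Fin p, Fin (n i) := fun idx =>
    if h : P (k - 1 - (idx : ℕ)) then
      ⟨h.choose, ⟨min ((chainF m p (p - (h.choose : ℕ)))^2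
          - (k - 1 - (idx : ℕ) + 1)^2 + (k - 1 - (idx : ℕ))) (n h.choose - 1),
        Nat.lt_of_le_of_lt (min_le_right _ _) (by have := hn h.choose; omega)⟩⟩
    else v0
  have hmem : k ∈ {k | ∃ x : Fin k → (Σ i : Fin p, Fin (n i)),
      ∀ v, ∃ i : Fin k, v ∈ ball G (x i) (k - 1 - (i : ℕ))} := by
    refine ⟨x, ?_⟩
    rintro ⟨i, j⟩
    obtain ⟨u, hu⟩ : ∃ u, chainF m p (p - (i : ℕ)) = u := ⟨_, rfl⟩
    obtain ⟨w, hw⟩ : ∃ w, chainF m p (p - 1 - (i : ℕ)) = w := ⟨_, rfl⟩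
    have hu2 : n i + w^2 ≤ u^2 := by rw [← hu, ← hw]; exact hcomp i
    have hj : (j : ℕ) < n i := j.isLt
    obtain ⟨r, hrdef⟩ : ∃ r, Nat.sqrt (u^2 - (j : ℕ) - 1) = r := ⟨_, rfl⟩
    have hr1 : r^2 ≤ u^2 - (j : ℕ) - 1 := by rw [← hrdef]; exact Nat.sqrt_le' _
    have hr2 : u^2 - (j : ℕ) - 1 < (r + 1)^2 := by rw [← hrdef]; exact Nat.lt_succ_sqrt' _
    have hwr : w ≤ r := by
      rw [← hrdef, Nat.le_sqrt']
      have h' : w * w = w^2 := by ring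
      have := hn i
      omega
    have hru : r < u := by
      by_contra hcon
      push_neg at hcon
      have : u^2 ≤ r^2 := Nat.pow_le_pow_left hcon 2
      have hni := hn i
      omega
    have hrk : r ≤ k - 1 := by
      have h1 : chainF m p (p - (i : ℕ)) ≤ chainF m p p := chainF_mono m p (Nat.sub_le p _)
      rw [hu] at h1
      omega
    have hidxlt : k - 1 - r < k := by omega
    refine ⟨⟨k - 1 - r, hidxlt⟩, ?_⟩
    have hex : P (k - 1 - ((⟨k - 1 - r, hidxlt⟩ : Fin k) : ℕ)) := by
      refine ⟨i, ?_, ?_⟩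
      · show chainF m p (p - 1 - (i : ℕ)) ≤ k - 1 - (k - 1 - r)
        rw [hw]; omega
      · show k - 1 - (k - 1 - r) < chainF m p (p - (i : ℕ))
        rw [hu]; omega
    have hce : hex.choose = i := by
      obtain ⟨h1', h2'⟩ := hex.choose_spec
      have h1 : chainF m p (p - 1 - ((hex.choose : Fin p) : ℕ)) ≤ k - 1 - (k - 1 - r) := h1'
      have h2 : k - 1 - (k - 1 - r) < chainF m p (p - ((hex.choose : Fin p) : ℕ)) := h2'
      have hkr : k - 1 - (k - 1 - r) = r := by omega
      have hi'lt : ((hex.choose : Fin p) : ℕ) < p := (hex.choose).isLt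
      have hilt : (i : ℕ) < p := i.isLt
      by_contra hne
      have hne' : ((hex.choose : Fin p) : ℕ) ≠ (i : ℕ) := fun h => hne (Fin.ext h)
      rcases Nat.lt_or_ge ((hex.choose : Fin p) : ℕ) (i : ℕ) with hlt | hge
      · have hmono : chainF m p (p - (i : ℕ)) ≤ chainF m p (p - 1 - ((hex.choose : Fin p) : ℕ)) :=
          chainF_mono m p (by omega)
        rw [hu] at hmono
        omega
      · have hmono : chainF m p (p - ((hex.choose : Fin p) : ℕ)) ≤ chainF m p (p - 1 - (i : ℕ)) :=
          chainF_mono m p (by omega)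
        rw [hw] at hmono
        omega
    subst hce
    have hxval : x ⟨k - 1 - r, hidxlt⟩ =
        ⟨hex.choose, ⟨min ((chainF m p (p - ((hex.choose : Fin p) : ℕ)))^2
          - (k - 1 - (k - 1 - r) + 1)^2 + (k - 1 - (k - 1 - r))) (n hex.choose - 1),
          Nat.lt_of_le_of_lt (min_le_right _ _) (by have := hn hex.choose; omega)⟩⟩ := by
      simp only [x, dif_pos hex]
    rw [hxval]
    refine ⟨(pathsUnion_reach_dist hex.choose _ j).1,
      le_trans (pathsUnion_reach_dist hex.choose _ j).2 ?_⟩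
    show Nat.dist (min ((chainF m p (p - ((hex.choose : Fin p) : ℕ)))^2
        - (k - 1 - (k - 1 - r) + 1)^2 + (k - 1 - (k - 1 - r))) (n hex.choose - 1)) (j : ℕ)
      ≤ k - 1 - (k - 1 - r)
    rw [hu]
    have key : ∀ z : ℕ, z = r →
        Nat.dist (min (u^2 - (z + 1)^2 + z) (n hex.choose - 1)) (j : ℕ) ≤ z := by
      rintro z rfl
      exact dist_center u z (j : ℕ) (n hex.choose) hr1 hr2 hru hj
        (by nlinarith [hu2, hj, sq_nonneg w])
    exact key (k - 1 - (k - 1 - r)) (by omega)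
  calc burningNumber G ≤ k := Nat.sInf_le hmem
  _ = _ := by rw [hkdef]
end

section
/- If T is a finite tree of order n that has exactly n_{≥3} vertices of degree at least 3, then b(T) ≤ ⌈√n⌉ + n_{≥3}. -/
set_option linter.unusedSectionVars false
set_option linter.unusedVariables false

/-- Covering specification: `g` assigns to each radius `r < k` a pair
(piece index, center position). Every position `p < b i` of every piece `i < t`
must be within `r` of the center of some ball of radius `r < k` assigned to piece `i`,
with the center a valid position of the piece. -/
def CoverFn (k t : ℕ) (b : ℕ → ℕ) (g : ℕ → ℕ × ℕ) : Prop :=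
  ∀ i, i < t → ∀ p, p < b i →
    ∃ r, r < k ∧ ∃ c, g r = (i, c) ∧ c < b i ∧ c ≤ p + r ∧ p ≤ c + r

theorem core_exists (t : ℕ) : ∀ (k : ℕ) (b : ℕ → ℕ),
    (∑ i ∈ Finset.range t, b i) +
      (((Finset.range t).filter (fun i => b i ≠ 0)).card - 1) * k ≤ k * k →
    ∃ g, CoverFn k t b g := by
  intro k
  induction k with
  | zero =>
    intro b H
    refine ⟨fun _ => (0, 0), fun i hi p hp => absurd hp (by
      have hz : (∑ i ∈ Finset.range t, b i) = 0 := by omega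
      have := (Finset.sum_eq_zero_iff).1 hz i (Finset.mem_range.2 hi)
      omega)⟩
  | succ K ih =>
    intro b H
    set tp := ((Finset.range t).filter (fun i => b i ≠ 0)).card with htp
    by_cases hA : ∃ i, i < t ∧ 2 * K + 1 ≤ b i
    · -- Case A : peel the far `2K+1` cells off a long piece with the big ball
      obtain ⟨i₀, hi₀t, hB⟩ := hA
      have hmem : i₀ ∈ Finset.range t := Finset.mem_range.2 hi₀t
      set b' := Function.update b i₀ (b i₀ - (2 * K + 1)) with hb'
      have hble : b i₀ ≤ ∑ i ∈ Finset.range t, b i :=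
        Finset.single_le_sum (f := b) (fun i _ => Nat.zero_le _) hmem
      have hsum' : (∑ i ∈ Finset.range t, b' i)
          = (∑ i ∈ Finset.range t, b i) - (2 * K + 1) := by
        rw [hb', Finset.sum_update_of_mem hmem, Finset.sdiff_singleton_eq_erase]
        have := Finset.add_sum_erase (Finset.range t) b hmem
        omega
      have hsub : ((Finset.range t).filter (fun i => b' i ≠ 0))
          ⊆ ((Finset.range t).filter (fun i => b i ≠ 0)) := by
        intro x hx
        simp only [Finset.mem_filter] at hx ⊢
        refine ⟨hx.1, ?_⟩
        rcases eq_or_ne x i₀ with rfl | hne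
        · omega
        · simpa [hb', Function.update_of_ne hne] using hx.2
      have hcard' : ((Finset.range t).filter (fun i => b' i ≠ 0)).card ≤ tp :=
        Finset.card_le_card hsub
      have htp1 : 1 ≤ tp := by
        have : i₀ ∈ (Finset.range t).filter (fun i => b i ≠ 0) := by
          simp only [Finset.mem_filter]; exact ⟨hmem, by omega⟩
        have := Finset.card_pos.2 ⟨i₀, this⟩
        omega
      have H' : (∑ i ∈ Finset.range t, b' i) +
          (((Finset.range t).filter (fun i => b' i ≠ 0)).card - 1) * K ≤ K * K := by
        set S := ∑ i ∈ Finset.range t, b i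
        set τ' := ((Finset.range t).filter (fun i => b' i ≠ 0)).card - 1
        have hτ' : τ' ≤ tp - 1 := by omega
        have h1 : τ' * K ≤ (tp - 1) * K := Nat.mul_le_mul_right K hτ'
        have h2 : (tp - 1) * (K + 1) = (tp - 1) * K + (tp - 1) := by ring
        have H2 : S + ((tp - 1) * K + (tp - 1)) ≤ (K+1) * (K+1) := by rw [← h2]; exact H
        have h3 : (K+1) * (K+1) = K * K + 2 * K + 1 := by ring
        rw [h3] at H2
        rw [hsum']
        set M := K * K
        set a := (tp - 1) * K
        set a' := τ' * K
        omega
      obtain ⟨g', hg'⟩ := ih b' H'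
      refine ⟨fun r => if r = K then (i₀, b i₀ - (K + 1)) else g' r, ?_⟩
      intro i hi p hp
      by_cases hsmall : p < b' i
      · obtain ⟨r, hr, c, hgc, hcb, hc1, hc2⟩ := hg' i hi p hsmall
        refine ⟨r, by omega, c, by simp [Nat.ne_of_lt hr, hgc], ?_, hc1, hc2⟩
        have : b' i ≤ b i := by
          rcases eq_or_ne i i₀ with rfl | hne
          · simp only [hb', Function.update_self]; omega
          · simp [hb', Function.update_of_ne hne]
        omega
      · -- must be i = i₀ and p in the peeled zone
        have hii : i = i₀ := by
          by_contra hne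
          exact hsmall (by simpa [hb', Function.update_of_ne hne] using hp)
        subst hii
        have hbi : b' i = b i - (2 * K + 1) := by simp [hb']
        refine ⟨K, by omega, b i - (K + 1), by simp, by omega, by omega, by omega⟩
    · by_cases hBc : ∃ i, i < t ∧ b i ≠ 0 ∧ K + 2 ≤ b i + tp
      · -- Case B : one ball of radius K finishes off some piece
        obtain ⟨i₀, hi₀t, hbne, hBge⟩ := hBc
        have hmem : i₀ ∈ Finset.range t := Finset.mem_range.2 hi₀t
        have hBle : b i₀ ≤ 2 * K := by
          by_contra h; exact hA ⟨i₀, hi₀t, by omega⟩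
        set b' := Function.update b i₀ 0 with hb'
        have hble : b i₀ ≤ ∑ i ∈ Finset.range t, b i :=
          Finset.single_le_sum (f := b) (fun i _ => Nat.zero_le _) hmem
        have hsum' : (∑ i ∈ Finset.range t, b' i)
            = (∑ i ∈ Finset.range t, b i) - b i₀ := by
          rw [hb', Finset.sum_update_of_mem hmem, Finset.sdiff_singleton_eq_erase]
          have := Finset.add_sum_erase (Finset.range t) b hmem
          omega
        have hfilt : ((Finset.range t).filter (fun i => b' i ≠ 0))
            = ((Finset.range t).filter (fun i => b i ≠ 0)).erase i₀ := by
          ext x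
          simp only [Finset.mem_filter, Finset.mem_erase]
          constructor
          · intro ⟨hx1, hx2⟩
            rcases eq_or_ne x i₀ with rfl | hne
            · simp [hb'] at hx2
            · exact ⟨hne, hx1, by simpa [hb', Function.update_of_ne hne] using hx2⟩
          · intro ⟨hne, hx1, hx2⟩
            exact ⟨hx1, by simpa [hb', Function.update_of_ne hne] using hx2⟩
        have hi₀f : i₀ ∈ (Finset.range t).filter (fun i => b i ≠ 0) := by
          simp only [Finset.mem_filter]; exact ⟨hmem, hbne⟩
        have hcard' : ((Finset.range t).filter (fun i => b' i ≠ 0)).card = tp - 1 := by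
          rw [hfilt, Finset.card_erase_of_mem hi₀f]
        have htp1 : 1 ≤ tp := by
          have := Finset.card_pos.2 ⟨i₀, hi₀f⟩
          omega
        -- bound the rest of the sum when tp = 1
        have hSB : (∑ i ∈ Finset.range t, b i)
            = ∑ i ∈ (Finset.range t).filter (fun i => b i ≠ 0), b i := by
          rw [Finset.sum_filter_ne_zero]
        have hrest : ∑ i ∈ ((Finset.range t).filter (fun i => b i ≠ 0)).erase i₀, b i
            ≤ (tp - 1) * (2 * K) := by
          have hcard : (((Finset.range t).filter (fun i => b i ≠ 0)).erase i₀).card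
              = tp - 1 := Finset.card_erase_of_mem hi₀f
          calc ∑ i ∈ ((Finset.range t).filter (fun i => b i ≠ 0)).erase i₀, b i
              ≤ ∑ _i ∈ ((Finset.range t).filter (fun i => b i ≠ 0)).erase i₀, (2*K) := by
                apply Finset.sum_le_sum
                intro x hx
                have hxt : x < t := by
                  have := (Finset.mem_erase.1 hx).2
                  have := (Finset.mem_filter.1 this).1
                  exact Finset.mem_range.1 this
                by_contra h
                exact hA ⟨x, hxt, by omega⟩
            _ = (tp - 1) * (2 * K) := by rw [Finset.sum_const, hcard, smul_eq_mul]
        have hSsplit : (∑ i ∈ Finset.range t, b i)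
            = b i₀ + ∑ i ∈ ((Finset.range t).filter (fun i => b i ≠ 0)).erase i₀, b i := by
          rw [hSB, ← Finset.add_sum_erase _ b hi₀f]
        have H' : (∑ i ∈ Finset.range t, b' i) +
            (((Finset.range t).filter (fun i => b' i ≠ 0)).card - 1) * K ≤ K * K := by
          rw [hsum', hcard']
          rcases Nat.lt_or_ge tp 2 with h2 | h2
          · -- tp = 1 : sum is just b i₀
            have htp1 : tp = 1 := by omega
            have e0 : (tp - 1 - 1) * K = 0 := by simp [htp1]
            have e1 : (tp - 1) * (2 * K) = 0 := by simp [htp1]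
            set M := K * K
            omega
          · obtain ⟨τ, hτ⟩ : ∃ τ, tp = τ + 2 := ⟨tp - 2, by omega⟩
            have e1 : (tp - 1) * (K + 1) = τ * K + K + τ + 1 := by
              rw [hτ]; simp [Nat.add_sub_cancel]; ring
            have e2 : (K + 1) * (K + 1) = K * K + 2 * K + 1 := by ring
            have e3 : (tp - 1 - 1) * K = τ * K := by rw [hτ]; simp
            rw [e3]
            rw [e1, e2] at H
            set M := K * K
            set P := τ * K
            omega
        obtain ⟨g', hg'⟩ := ih b' H'
        refine ⟨fun r => if r = K then (i₀, min (b i₀ - 1) K) else g' r, ?_⟩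
        intro i hi p hp
        rcases eq_or_ne i i₀ with rfl | hne
        · refine ⟨K, by omega, min (b i - 1) K, by simp, by omega, by omega, by omega⟩
        · have : p < b' i := by simpa [hb', Function.update_of_ne hne] using hp
          obtain ⟨r, hr, c, hgc, hcb, hc1, hc2⟩ := hg' i hi p this
          refine ⟨r, by omega, c, by simp [Nat.ne_of_lt hr, hgc], ?_, hc1, hc2⟩
          simpa [hb', Function.update_of_ne hne] using hcb
      · -- Case C : all pieces tiny; one small ball each
        set J := (Finset.range t).filter (fun i => b i ≠ 0) with hJ
        have hsmall : ∀ i, i < t → b i ≠ 0 → b i + tp ≤ K + 1 := by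
          intro i hi hne
          by_contra h
          exact hBc ⟨i, hi, hne, by omega⟩
        refine ⟨fun r => (J.toList.getD (K - r) t, 0), ?_⟩
        intro i hi p hp
        have hiJ : i ∈ J := by
          simp only [hJ, Finset.mem_filter, Finset.mem_range]; exact ⟨hi, by omega⟩
        have hiL : i ∈ J.toList := Finset.mem_toList.2 hiJ
        have hlen : J.toList.length = tp := by rw [Finset.length_toList]
        set j := J.toList.idxOf i with hj
        have hjlt : j < tp := by rw [← hlen]; exact List.idxOf_lt_length_iff.2 hiL
        have htpK : tp ≤ K := by have := hsmall i hi (by omega); omega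
        have hgetd : J.toList.getD j t = i := by
          rw [List.getD_eq_getElem _ _ (by omega)]
          exact List.getElem_idxOf (by omega)
        refine ⟨K - j, by omega, 0, ?_, by omega, by omega, ?_⟩
        · show (J.toList.getD (K - (K - j)) t, 0) = (i, 0)
          rw [(by omega : K - (K - j) = j), hgetd]
        · have := hsmall i hi (by omega)
          omega

open SimpleGraph

section Toolkit
variable {V : Type*} [DecidableEq V] {T : SimpleGraph V}

/-- A fixed geodesic (shortest path) between two vertices of a connected graph. -/
noncomputable def geod (hT : T.IsTree) (u v : V) : T.Walk u v :=
  (hT.isConnected.exists_path_of_dist u v).choose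

lemma geod_isPath (hT : T.IsTree) (u v : V) : (geod hT u v).IsPath :=
  (hT.isConnected.exists_path_of_dist u v).choose_spec.1

lemma geod_length (hT : T.IsTree) (u v : V) : (geod hT u v).length = T.dist u v :=
  (hT.isConnected.exists_path_of_dist u v).choose_spec.2

lemma path_eq_geod (hT : T.IsTree) {u v : V} (p : T.Walk u v) (hp : p.IsPath) :
    p = geod hT u v := by
  have := hT.IsAcyclic.path_unique ⟨p, hp⟩ ⟨geod hT u v, geod_isPath hT u v⟩
  exact congrArg Subtype.val this

lemma getVert_mem_support' {u v : V} (p : T.Walk u v) {n : ℕ} (hn : n ≤ p.length) :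
    p.getVert n ∈ p.support :=
  SimpleGraph.Walk.mem_support_iff_exists_getVert.2 ⟨n, rfl, hn⟩

lemma dist_getVert_succ_le (hT : T.IsTree) {u v : V} (p : T.Walk u v) (i : ℕ) :
    T.dist (p.getVert i) (p.getVert (i + 1)) ≤ 1 := by
  rcases Nat.lt_or_ge i p.length with h | h
  · exact le_of_eq (SimpleGraph.dist_eq_one_iff_adj.2 (p.adj_getVert_succ h))
  · rw [p.getVert_of_length_le h, p.getVert_of_length_le (by omega)]
    have : T.dist v v = 0 := SimpleGraph.dist_self
    omega

lemma dist_getVert_le (hT : T.IsTree) {u v : V} (p : T.Walk u v) {i j : ℕ} (hij : i ≤ j) :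
    T.dist (p.getVert i) (p.getVert j) ≤ j - i := by
  induction j with
  | zero =>
    have : i = 0 := by omega
    subst this; simp
  | succ j ih =>
    rcases Nat.lt_or_ge j i with h | h
    · have : i = j + 1 := by omega
      subst this; simp
    · calc T.dist (p.getVert i) (p.getVert (j+1))
          ≤ T.dist (p.getVert i) (p.getVert j) + T.dist (p.getVert j) (p.getVert (j+1)) :=
            hT.isConnected.dist_triangle
        _ ≤ (j - i) + 1 := Nat.add_le_add (ih h) (dist_getVert_succ_le hT p j)
        _ = j + 1 - i := by omega

lemma geod_dist_getVert (hT : T.IsTree) (u v : V) {i : ℕ} (hi : i ≤ T.dist u v) :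
    T.dist u ((geod hT u v).getVert i) = i ∧
      T.dist ((geod hT u v).getVert i) v = T.dist u v - i := by
  set p := geod hT u v with hp
  have hlen : p.length = T.dist u v := geod_length hT u v
  have h1 : T.dist u (p.getVert i) ≤ i := by
    have := dist_getVert_le hT p (Nat.zero_le i)
    rwa [p.getVert_zero, Nat.sub_zero] at this
  have h2 : T.dist (p.getVert i) v ≤ T.dist u v - i := by
    have := dist_getVert_le hT p (show i ≤ p.length by omega)
    rwa [p.getVert_length, hlen] at this
  have h3 : T.dist u v ≤ T.dist u (p.getVert i) + T.dist (p.getVert i) v :=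
    hT.isConnected.dist_triangle
  omega

lemma geod_getVert_inj (hT : T.IsTree) {u v : V} {i j : ℕ}
    (hi : i ≤ T.dist u v) (hj : j ≤ T.dist u v)
    (h : (geod hT u v).getVert i = (geod hT u v).getVert j) : i = j := by
  have h1 := (geod_dist_getVert hT u v hi).1
  have h2 := (geod_dist_getVert hT u v hj).1
  rw [h] at h1; omega

lemma isPath_append_of_inter {u v w : V} {p : T.Walk u v} {q : T.Walk v w}
    (hp : p.IsPath) (hq : q.IsPath)
    (h : ∀ x, x ∈ p.support → x ∈ q.support → x = v) : (p.append q).IsPath := by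
  induction p with
  | nil => simpa using hq
  | @cons a b _ hadj p' ih =>
    rw [SimpleGraph.Walk.cons_append, SimpleGraph.Walk.cons_isPath_iff]
    have hp' : p'.IsPath := ((SimpleGraph.Walk.cons_isPath_iff _ _).1 hp).1
    have hanp : a ∉ p'.support := ((SimpleGraph.Walk.cons_isPath_iff _ _).1 hp).2
    constructor
    · exact ih hp' hq (fun x hx1 hx2 =>
        h x (by rw [SimpleGraph.Walk.support_cons]; exact List.mem_cons_of_mem _ hx1) hx2)
    · rw [SimpleGraph.Walk.mem_support_append_iff]
      rintro (h1 | h1)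
      · exact hanp h1
      · have := h a (by rw [SimpleGraph.Walk.support_cons]; exact List.mem_cons_self) h1
        rw [this] at hanp
        exact hanp (p'.end_mem_support)

lemma dist_split_of_mem_support (hT : T.IsTree) {u v x : V}
    (hx : x ∈ (geod hT u v).support) : T.dist u x + T.dist x v = T.dist u v := by
  set p := geod hT u v with hpdef
  have hq : (p.takeUntil x hx).IsPath := (geod_isPath hT u v).takeUntil hx
  have hr : (p.dropUntil x hx).IsPath := (geod_isPath hT u v).dropUntil hx
  have hql : (p.takeUntil x hx).length = T.dist u x := by
    rw [path_eq_geod hT _ hq, geod_length]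
  have hrl : (p.dropUntil x hx).length = T.dist x v := by
    rw [path_eq_geod hT _ hr, geod_length]
  have := congrArg SimpleGraph.Walk.length (p.take_spec hx)
  rw [SimpleGraph.Walk.length_append, hql, hrl] at this
  rw [this, geod_length]

lemma prefix_getVert (hT : T.IsTree) {u v : V} {j i : ℕ}
    (hj : j ≤ T.dist u v) (hi : i ≤ j) :
    (geod hT u ((geod hT u v).getVert j)).getVert i = (geod hT u v).getVert i := by
  set p := geod hT u v with hpdef
  have hlen : p.length = T.dist u v := geod_length hT u v
  have hx : p.getVert j ∈ p.support := getVert_mem_support' p (by omega)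
  set x := p.getVert j with hxdef
  have hq : (p.takeUntil x hx).IsPath := (geod_isPath hT u v).takeUntil hx
  have hqg : (p.takeUntil x hx) = geod hT u x := path_eq_geod hT _ hq
  have hql : (p.takeUntil x hx).length = j := by
    rw [hqg, geod_length]
    exact (geod_dist_getVert hT u v hj).1
  rw [← hqg]
  rcases Nat.lt_or_ge i j with h | h
  · have := congrArg (fun w => SimpleGraph.Walk.getVert w i) (p.take_spec hx)
    rw [SimpleGraph.Walk.getVert_append] at this
    rw [hql] at this
    simp only [if_pos h] at this
    exact this
  · have hij : i = j := by omega
    subst hij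
    conv_lhs => rw [← hql]
    rw [SimpleGraph.Walk.getVert_length]

lemma three_le_degree {w a b c : V} [Fintype V] [DecidableRel T.Adj]
    (ha : T.Adj w a) (hb : T.Adj w b) (hc : T.Adj w c)
    (hab : a ≠ b) (hac : a ≠ c) (hbc : b ≠ c) : 3 ≤ T.degree w := by
  classical
  have hsub : ({a, b, c} : Finset V) ⊆ T.neighborFinset w := by
    intro x hx
    simp only [Finset.mem_insert, Finset.mem_singleton] at hx
    rcases hx with rfl | rfl | rfl <;> simpa [SimpleGraph.mem_neighborFinset]
  have hcard : ({a, b, c} : Finset V).card = 3 := by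
    rw [Finset.card_insert_of_notMem (by simp [hab, hac]),
        Finset.card_insert_of_notMem (by simp [hbc]), Finset.card_singleton]
  calc 3 = ({a, b, c} : Finset V).card := hcard.symm
    _ ≤ (T.neighborFinset w).card := Finset.card_le_card hsub
    _ = T.degree w := rfl

end Toolkit

section Burn
variable {V : Type*} [DecidableEq V] [Fintype V] {T : SimpleGraph V}

open scoped Classical in
/-- Vertices at distance more than `k` from every vertex of `SF`. -/
noncomputable def DDset (T : SimpleGraph V) (SF : Finset V) (k : ℕ) : Finset V :=
  Finset.univ.filter (fun v => ∀ u ∈ SF, k < T.dist v u)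

lemma mem_DDset {SF : Finset V} {k : ℕ} {v : V} :
    v ∈ DDset T SF k ↔ ∀ u ∈ SF, k < T.dist v u := by
  classical
  simp [DDset]

lemma DD_SF_disjoint {SF : Finset V} {k : ℕ} {v : V}
    (h1 : v ∈ DDset T SF k) (h2 : v ∈ SF) : False := by
  have := mem_DDset.1 h1 v h2
  rw [SimpleGraph.dist_self] at this
  omega

/-- two vertices are in the same piece iff the geodesic between them avoids
the `k`-neighbourhood of `SF` -/
def Rrel (hT : T.IsTree) (SF : Finset V) (k : ℕ) (v w : V) : Prop :=
  ∀ x ∈ (geod hT v w).support, x ∈ DDset T SF k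

lemma Rrel_mem_left {hT : T.IsTree} {SF k v w} (h : Rrel hT SF k v w) :
    v ∈ DDset T SF k := h v (geod hT v w).start_mem_support

lemma Rrel_mem_right {hT : T.IsTree} {SF k v w} (h : Rrel hT SF k v w) :
    w ∈ DDset T SF k := h w (geod hT v w).end_mem_support

lemma Rrel_refl {hT : T.IsTree} {SF k v} (h : v ∈ DDset T SF k) : Rrel hT SF k v v := by
  intro x hx
  obtain ⟨n, hn, hnle⟩ := SimpleGraph.Walk.mem_support_iff_exists_getVert.1 hx
  have : (geod hT v v).length = 0 := by rw [geod_length, SimpleGraph.dist_self]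
  have : n = 0 := by omega
  subst this
  rw [SimpleGraph.Walk.getVert_zero] at hn
  rwa [← hn]

lemma Rrel_symm {hT : T.IsTree} {SF k v w} (h : Rrel hT SF k v w) : Rrel hT SF k w v := by
  intro x hx
  have hrev : (geod hT v w).reverse.IsPath := (geod_isPath hT v w).reverse
  have : geod hT w v = (geod hT v w).reverse := (path_eq_geod hT _ hrev).symm
  rw [this, SimpleGraph.Walk.support_reverse, List.mem_reverse] at hx
  exact h x hx

lemma Rrel_trans {hT : T.IsTree} {SF k u v w}
    (h1 : Rrel hT SF k u v) (h2 : Rrel hT SF k v w) : Rrel hT SF k u w := by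
  intro x hx
  have hbp : ((geod hT u v).append (geod hT v w)).bypass.IsPath :=
    SimpleGraph.Walk.bypass_isPath _
  have : geod hT u w = ((geod hT u v).append (geod hT v w)).bypass :=
    (path_eq_geod hT _ hbp).symm
  rw [this] at hx
  have hx2 := SimpleGraph.Walk.support_bypass_subset _ hx
  rw [SimpleGraph.Walk.mem_support_append_iff] at hx2
  rcases hx2 with h | h
  · exact h1 x h
  · exact h2 x h

open scoped Classical in
/-- the piece containing `v` -/
noncomputable def clsF (hT : T.IsTree) (SF : Finset V) (k : ℕ) (v : V) : Finset V :=
  (DDset T SF k).filter (fun w => Rrel hT SF k v w)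

lemma mem_clsF {hT : T.IsTree} {SF k w v} :
    w ∈ clsF hT SF k v ↔ Rrel hT SF k v w := by
  simp only [clsF, Finset.mem_filter]
  exact ⟨fun h => h.2, fun h => ⟨Rrel_mem_right h, h⟩⟩

lemma self_mem_clsF {hT : T.IsTree} {SF k v} (h : v ∈ DDset T SF k) :
    v ∈ clsF hT SF k v := mem_clsF.2 (Rrel_refl h)

lemma clsF_eq_of_R {hT : T.IsTree} {SF k v w} (h : Rrel hT SF k v w) :
    clsF hT SF k v = clsF hT SF k w := by
  ext x
  rw [mem_clsF, mem_clsF]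
  exact ⟨fun hx => Rrel_trans (Rrel_symm h) hx, fun hx => Rrel_trans h hx⟩

/-- the pieces: connected components of `DDset` -/
noncomputable def piecesF (hT : T.IsTree) (SF : Finset V) (k : ℕ) : Finset (Finset V) :=
  (DDset T SF k).image (clsF hT SF k)

lemma piecesF_sub {hT : T.IsTree} {SF k c} (hc : c ∈ piecesF hT SF k) :
    c ⊆ DDset T SF k := by
  obtain ⟨v, hv, rfl⟩ := Finset.mem_image.1 hc
  intro x hx
  exact Rrel_mem_right (mem_clsF.1 hx)

lemma mem_piece_R {hT : T.IsTree} {SF k c x y} (hc : c ∈ piecesF hT SF k)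
    (hx : x ∈ c) (hy : y ∈ c) : Rrel hT SF k x y := by
  obtain ⟨v, hv, rfl⟩ := Finset.mem_image.1 hc
  exact Rrel_trans (Rrel_symm (mem_clsF.1 hx)) (mem_clsF.1 hy)

lemma piece_eq_clsF {hT : T.IsTree} {SF k c x} (hc : c ∈ piecesF hT SF k)
    (hx : x ∈ c) : c = clsF hT SF k x := by
  obtain ⟨v, hv, rfl⟩ := Finset.mem_image.1 hc
  exact clsF_eq_of_R (mem_clsF.1 hx)

lemma piece_eq_of_inter {hT : T.IsTree} {SF k c c' x} (hc : c ∈ piecesF hT SF k)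
    (hc' : c' ∈ piecesF hT SF k) (hx : x ∈ c) (hx' : x ∈ c') : c = c' := by
  rw [piece_eq_clsF hc hx, ← piece_eq_clsF hc' hx']

lemma R_of_support_sub {hT : T.IsTree} {SF k} {y x : V}
    (h : ∀ z ∈ (geod hT y x).support, z ∈ DDset T SF k) : Rrel hT SF k y x := h

/-- Structure lemma: every piece is the support of a geodesic. -/
theorem piece_is_geodesic [DecidableRel T.Adj] {hT : T.IsTree} {SF : Finset V} {k : ℕ}
    (hSFdeg : ∀ v : V, 3 ≤ T.degree v → v ∈ SF) {c : Finset V}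
    (hc : c ∈ piecesF hT SF k) :
    ∃ y z : V, (∀ x, x ∈ c ↔ x ∈ (geod hT y z).support) ∧ T.dist y z + 1 = c.card := by
  classical
  obtain ⟨v₀, hv₀, hc0⟩ := Finset.mem_image.1 hc
  have hne : c.Nonempty := ⟨v₀, by rw [← hc0] at *; exact self_mem_clsF hv₀⟩
  obtain ⟨⟨y, z⟩, hyzc, hmax⟩ :=
    Finset.exists_max_image (c ×ˢ c) (fun pr => T.dist pr.1 pr.2) (hne.product hne)
  rw [Finset.mem_product] at hyzc
  obtain ⟨hy, hz⟩ := hyzc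
  have hmax' : ∀ a b, a ∈ c → b ∈ c → T.dist a b ≤ T.dist y z := by
    intro a b ha hb
    exact hmax (a, b) (Finset.mem_product.2 ⟨ha, hb⟩)
  set p := geod hT y z with hpdef
  have hRyz : Rrel hT SF k y z := mem_piece_R hc hy hz
  have hplen : p.length = T.dist y z := geod_length hT y z
  -- support ⊆ c
  have claim1 : ∀ x ∈ p.support, x ∈ c := by
    intro x hx
    have hRyx : Rrel hT SF k y x := by
      intro w hw
      have hq : (p.takeUntil x hx).IsPath := (geod_isPath hT y z).takeUntil hx
      have : p.takeUntil x hx = geod hT y x := path_eq_geod hT _ hq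
      rw [← this] at hw
      exact hRyz w (SimpleGraph.Walk.support_takeUntil_subset p hx hw)
    rw [piece_eq_clsF hc hy]
    exact mem_clsF.2 hRyx
  -- c ⊆ support
  have claim2 : ∀ w ∈ c, w ∈ p.support := by
    intro w hw
    by_contra hwn
    have hRwy : Rrel hT SF k w y := mem_piece_R hc hw hy
    have hq1len : (geod hT w y).length = T.dist w y := geod_length hT w y
    have hex : ∃ n, (geod hT w y).getVert n ∈ p.support :=
      ⟨(geod hT w y).length, by rw [SimpleGraph.Walk.getVert_length]; exact p.start_mem_support⟩
    obtain ⟨idx, hidxspec, hidxmin⟩ :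
        ∃ n, ((geod hT w y).getVert n ∈ p.support) ∧
          ∀ m', m' < n → (geod hT w y).getVert m' ∉ p.support :=
      ⟨Nat.find hex, Nat.find_spec hex, fun m' hm' => Nat.find_min hex hm'⟩
    have hidxle : idx ≤ (geod hT w y).length := by
      by_contra h
      exact hidxmin (geod hT w y).length (by omega)
        (by rw [SimpleGraph.Walk.getVert_length]; exact p.start_mem_support)
    have hidx0 : idx ≠ 0 := by
      intro h0
      rw [h0, SimpleGraph.Walk.getVert_zero] at hidxspec
      exact hwn hidxspec
    obtain ⟨id', rfl⟩ : ∃ id', idx = id' + 1 := ⟨idx - 1, by omega⟩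
    obtain ⟨a, ham, halen⟩ := SimpleGraph.Walk.mem_support_iff_exists_getVert.1 hidxspec
    have hwy1 : 1 ≤ T.dist w y := by
      have hne' : w ≠ y := by
        intro h; rw [h] at hwn; exact hwn p.start_mem_support
      have := hT.isConnected.pos_dist_of_ne hne'
      omega
    have hdwm : T.dist w ((geod hT w y).getVert (id' + 1)) = id' + 1 :=
      (geod_dist_getVert hT w y (by omega)).1
    have hdmy : T.dist ((geod hT w y).getVert (id' + 1)) y = T.dist w y - (id' + 1) :=
      (geod_dist_getVert hT w y (by omega)).2
    rcases Nat.eq_zero_or_pos a with ha0 | hapos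
    · -- m = y : appending gives a longer path, contradicting maximality
      have hmy : (geod hT w y).getVert (id' + 1) = y := by
        rw [ha0, p.getVert_zero] at ham; exact ham.symm
      have hidxq : id' + 1 = (geod hT w y).length := by
        apply geod_getVert_inj hT (u := w) (v := y) (by omega) (by omega)
        rw [hmy, SimpleGraph.Walk.getVert_length]
      have hinter : ∀ x, x ∈ (geod hT w y).support → x ∈ p.support → x = y := by
        intro x hx1 hx2
        obtain ⟨n, hn, hnle⟩ := SimpleGraph.Walk.mem_support_iff_exists_getVert.1 hx1
        have hnge : ¬ n < id' + 1 := fun h => hidxmin n h (hn ▸ hx2)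
        have hneq : n = (geod hT w y).length := by omega
        rw [← hn, hneq, SimpleGraph.Walk.getVert_length]
      have hA : ((geod hT w y).append p).IsPath :=
        isPath_append_of_inter (geod_isPath hT w y) (geod_isPath hT y z) hinter
      have hAeq : (geod hT w y).append p = geod hT w z := path_eq_geod hT _ hA
      have hlenA : (geod hT w y).length + p.length = T.dist w z := by
        rw [← SimpleGraph.Walk.length_append, hAeq, geod_length]
      have hle := hmax' w z hw hz
      omega
    · rcases eq_or_lt_of_le halen with haeq | halt
      · -- m = z
        have hmz : (geod hT w y).getVert (id' + 1) = z := by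
          rw [← ham, haeq, p.getVert_length]
        rw [hmz] at hdwm hdmy
        have h2 := hmax' w y hw hy
        have hcm : T.dist z y = T.dist y z := SimpleGraph.dist_comm
        omega
      · -- internal : three neighbours, contradiction with degree
        obtain ⟨a', rfl⟩ : ∃ a', a = a' + 1 := ⟨a - 1, by omega⟩
        have adj1 : T.Adj (p.getVert a') ((geod hT w y).getVert (id' + 1)) := by
          have := p.adj_getVert_succ (i := a') (by omega)
          rwa [ham] at this
        have adj2 : T.Adj ((geod hT w y).getVert (id' + 1)) (p.getVert (a' + 2)) := by
          have := p.adj_getVert_succ (i := a' + 1) (by omega)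
          rwa [ham] at this
        have adj3 : T.Adj ((geod hT w y).getVert id') ((geod hT w y).getVert (id' + 1)) :=
          (geod hT w y).adj_getVert_succ (by omega)
        have hn12 : p.getVert a' ≠ p.getVert (a' + 2) := by
          intro h
          have := geod_getVert_inj hT (u := y) (v := z) (i := a') (j := a' + 2)
            (by omega) (by omega) h
          omega
        have hn3 : (geod hT w y).getVert id' ∉ p.support := hidxmin id' (by omega)
        have hn31 : p.getVert a' ≠ (geod hT w y).getVert id' := by
          intro h
          exact hn3 (h ▸ getVert_mem_support' p (by omega))
        have hn32 : p.getVert (a' + 2) ≠ (geod hT w y).getVert id' := by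
          intro h
          exact hn3 (h ▸ getVert_mem_support' p (by omega))
        have hdeg : 3 ≤ T.degree ((geod hT w y).getVert (id' + 1)) :=
          three_le_degree adj1.symm adj2 adj3.symm hn12 hn31 hn32
        exact DD_SF_disjoint (hRyz _ hidxspec) (hSFdeg _ hdeg)
  refine ⟨y, z, fun x => ⟨claim2 x, claim1 x⟩, ?_⟩
  have hceq : c = (geod hT y z).support.toFinset := by
    ext x
    rw [List.mem_toFinset]
    exact ⟨claim2 x, claim1 x⟩
  rw [hceq, List.toFinset_card_of_nodup (geod_isPath hT y z).support_nodup]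
  have hsl : (geod hT y z).support.length = (geod hT y z).length + 1 :=
    SimpleGraph.Walk.length_support _
  have hplen' : (geod hT y z).length = T.dist y z := geod_length hT y z
  omega

end Burn

section Count
variable {V : Type*} [DecidableEq V] [Fintype V] {T : SimpleGraph V}

/-- nearest vertex of `SF` -/
noncomputable def nearestS (T : SimpleGraph V) (SF : Finset V) (hSF : SF.Nonempty) (v : V) : V :=
  (Finset.exists_min_image SF (fun u => T.dist v u) hSF).choose

lemma nearestS_mem {SF : Finset V} (hSF : SF.Nonempty) (v : V) :
    nearestS T SF hSF v ∈ SF :=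
  (Finset.exists_min_image SF (fun u => T.dist v u) hSF).choose_spec.1

lemma nearestS_min {SF : Finset V} (hSF : SF.Nonempty) (v : V) {u : V} (hu : u ∈ SF) :
    T.dist v (nearestS T SF hSF v) ≤ T.dist v u :=
  (Finset.exists_min_image SF (fun u => T.dist v u) hSF).choose_spec.2 u hu

/-- distance to `SF` -/
noncomputable def levN (T : SimpleGraph V) (SF : Finset V) (hSF : SF.Nonempty) (v : V) : ℕ :=
  T.dist v (nearestS T SF hSF v)

lemma levN_le {SF : Finset V} (hSF : SF.Nonempty) {v u : V} (hu : u ∈ SF) :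
    levN T SF hSF v ≤ T.dist v u := nearestS_min hSF v hu

lemma mem_DD_iff_lev {SF : Finset V} (hSF : SF.Nonempty) {k : ℕ} {v : V} :
    v ∈ DDset T SF k ↔ k < levN T SF hSF v := by
  rw [mem_DDset]
  constructor
  · intro h; exact h _ (nearestS_mem hSF v)
  · intro h u hu; exact lt_of_lt_of_le h (levN_le hSF hu)

lemma levN_triangle (hT : T.IsTree) {SF : Finset V} (hSF : SF.Nonempty) (v w : V) :
    levN T SF hSF v ≤ T.dist v w + levN T SF hSF w := by
  calc levN T SF hSF v ≤ T.dist v (nearestS T SF hSF w) := levN_le hSF (nearestS_mem hSF w)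
    _ ≤ T.dist v w + T.dist w (nearestS T SF hSF w) := hT.isConnected.dist_triangle
    _ = T.dist v w + levN T SF hSF w := rfl

lemma levN_eq_zero_iff (hT : T.IsTree) {SF : Finset V} (hSF : SF.Nonempty) {v : V} :
    levN T SF hSF v = 0 ↔ v ∈ SF := by
  constructor
  · intro h
    have := (hT.isConnected.dist_eq_zero_iff).1 h
    rw [this]
    exact nearestS_mem hSF v
  · intro h
    have h1 : levN T SF hSF v ≤ T.dist v v := levN_le hSF h
    rw [SimpleGraph.dist_self] at h1
    omega

/-- representative of a piece -/
noncomputable def repP (SF : Finset V) (hSF : SF.Nonempty) (c : Finset V) : V :=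
  if h : c.Nonempty then h.choose else hSF.choose

lemma piece_nonempty {hT : T.IsTree} {SF : Finset V} {k : ℕ} {c : Finset V}
    (hc : c ∈ piecesF hT SF k) : c.Nonempty := by
  obtain ⟨v, hv, rfl⟩ := Finset.mem_image.1 hc
  exact ⟨v, self_mem_clsF hv⟩

lemma repP_mem {hT : T.IsTree} {SF : Finset V} {k : ℕ} (hSF : SF.Nonempty) {c : Finset V}
    (hc : c ∈ piecesF hT SF k) : repP SF hSF c ∈ c := by
  rw [repP, dif_pos (piece_nonempty hc)]
  exact (piece_nonempty hc).choose_spec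

/-- distance from the representative to `SF` -/
noncomputable def dP (T : SimpleGraph V) (SF : Finset V) (hSF : SF.Nonempty) (c : Finset V) : ℕ :=
  levN T SF hSF (repP SF hSF c)

/-- the walk from the representative of a piece to `SF` -/
noncomputable def walkP (hT : T.IsTree) (SF : Finset V) (hSF : SF.Nonempty) (c : Finset V) :
    T.Walk (repP SF hSF c) (nearestS T SF hSF (repP SF hSF c)) :=
  geod hT _ _

/-- the vertex at distance `ℓ` from `SF` on the escape route of piece `c` -/
noncomputable def padP (hT : T.IsTree) (SF : Finset V) (hSF : SF.Nonempty) (k : ℕ)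
    (c : Finset V) (ℓ : ℕ) : V :=
  (walkP hT SF hSF c).getVert (dP T SF hSF c - ℓ)

variable {hT : T.IsTree} {SF : Finset V} {k : ℕ} (hSF : SF.Nonempty)

lemma dP_gt {c : Finset V} (hc : c ∈ piecesF hT SF k) : k < dP T SF hSF c :=
  (mem_DD_iff_lev hSF).1 (piecesF_sub hc (repP_mem hSF hc))

lemma lev_getVert_walkP {c : Finset V} (hc : c ∈ piecesF hT SF k) {i : ℕ}
    (hi : i ≤ dP T SF hSF c) :
    levN T SF hSF ((walkP hT SF hSF c).getVert i) = dP T SF hSF c - i := by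
  have h1 : T.dist ((walkP hT SF hSF c).getVert i) (nearestS T SF hSF (repP SF hSF c))
      = dP T SF hSF c - i := (geod_dist_getVert hT _ _ hi).2
  have h2 : T.dist (repP SF hSF c) ((walkP hT SF hSF c).getVert i) = i :=
    (geod_dist_getVert hT _ _ hi).1
  have hle : levN T SF hSF ((walkP hT SF hSF c).getVert i)
      ≤ dP T SF hSF c - i := h1 ▸ levN_le hSF (nearestS_mem hSF _)
  have hge : dP T SF hSF c ≤ i + levN T SF hSF ((walkP hT SF hSF c).getVert i) := by
    have := levN_triangle hT hSF (repP SF hSF c) ((walkP hT SF hSF c).getVert i)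
    rw [h2] at this
    exact this
  omega

lemma pad_lev {c : Finset V} (hc : c ∈ piecesF hT SF k) {ℓ : ℕ} (h1 : 1 ≤ ℓ) (h2 : ℓ ≤ k) :
    levN T SF hSF (padP hT SF hSF k c ℓ) = ℓ := by
  have hd := dP_gt hSF hc
  rw [padP, lev_getVert_walkP hSF hc (by omega)]
  omega

lemma walkP_prefix_mem {c : Finset V} (hc : c ∈ piecesF hT SF k) {j : ℕ}
    (hj : j + k + 1 ≤ dP T SF hSF c) : (walkP hT SF hSF c).getVert j ∈ c := by
  have hdP : dP T SF hSF c
      = T.dist (repP SF hSF c) (nearestS T SF hSF (repP SF hSF c)) := rfl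
  have hR : Rrel hT SF k (repP SF hSF c) ((walkP hT SF hSF c).getVert j) := by
    intro x hx
    have hdj : T.dist (repP SF hSF c) ((walkP hT SF hSF c).getVert j) = j :=
      (geod_dist_getVert hT _ _ (by omega)).1
    obtain ⟨n, hn, hnle⟩ := SimpleGraph.Walk.mem_support_iff_exists_getVert.1 hx
    have hnlen : (geod hT (repP SF hSF c) ((walkP hT SF hSF c).getVert j)).length = j := by
      rw [geod_length, hdj]
    have hpref : (geod hT (repP SF hSF c) ((walkP hT SF hSF c).getVert j)).getVert n
        = (walkP hT SF hSF c).getVert n := prefix_getVert hT (by omega) (by omega)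
    have hlev : levN T SF hSF x = dP T SF hSF c - n := by
      rw [← hn, hpref]
      exact lev_getVert_walkP hSF hc (by omega)
    rw [mem_DD_iff_lev hSF, hlev]
    omega
  have hmem := mem_clsF.2 hR
  rwa [← piece_eq_clsF hc (repP_mem hSF hc)] at hmem

lemma pad_step [DecidableRel T.Adj] (hSFdeg : ∀ v : V, 3 ≤ T.degree v → v ∈ SF)
    {c c' : Finset V} (hc : c ∈ piecesF hT SF k) (hc' : c' ∈ piecesF hT SF k)
    {ℓ : ℕ} (h1 : 1 ≤ ℓ) (h2 : ℓ ≤ k)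
    (h : padP hT SF hSF k c ℓ = padP hT SF hSF k c' ℓ) :
    (walkP hT SF hSF c).getVert (dP T SF hSF c - ℓ - 1)
      = (walkP hT SF hSF c').getVert (dP T SF hSF c' - ℓ - 1) := by
  by_contra hne
  have hd := dP_gt hSF hc
  have hd' := dP_gt hSF hc'
  have hwalklen : (walkP hT SF hSF c).length = dP T SF hSF c := geod_length hT _ _
  have hwalklen' : (walkP hT SF hSF c').length = dP T SF hSF c' := geod_length hT _ _
  set w := padP hT SF hSF k c ℓ with hwdef
  -- adjacencies
  have adj1 : T.Adj ((walkP hT SF hSF c).getVert (dP T SF hSF c - ℓ - 1)) w := by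
    have := (walkP hT SF hSF c).adj_getVert_succ
      (i := dP T SF hSF c - ℓ - 1) (by omega)
    rw [(by omega : dP T SF hSF c - ℓ - 1 + 1 = dP T SF hSF c - ℓ)] at this
    exact this
  have adj2 : T.Adj ((walkP hT SF hSF c').getVert (dP T SF hSF c' - ℓ - 1)) w := by
    have := (walkP hT SF hSF c').adj_getVert_succ
      (i := dP T SF hSF c' - ℓ - 1) (by omega)
    rw [(by omega : dP T SF hSF c' - ℓ - 1 + 1 = dP T SF hSF c' - ℓ)] at this
    have hgoal : padP hT SF hSF k c' ℓ
        = (walkP hT SF hSF c').getVert (dP T SF hSF c' - ℓ) := rfl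
    rw [h, hgoal]
    exact this
  have adj3 : T.Adj w ((walkP hT SF hSF c).getVert (dP T SF hSF c - ℓ + 1)) := by
    have := (walkP hT SF hSF c).adj_getVert_succ (i := dP T SF hSF c - ℓ) (by omega)
    exact this
  -- levels
  have lev1 : levN T SF hSF ((walkP hT SF hSF c).getVert (dP T SF hSF c - ℓ - 1)) = ℓ + 1 := by
    rw [lev_getVert_walkP hSF hc (by omega)]; omega
  have lev2 : levN T SF hSF ((walkP hT SF hSF c').getVert (dP T SF hSF c' - ℓ - 1)) = ℓ + 1 := by
    rw [lev_getVert_walkP hSF hc' (by omega)]; omega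
  have lev3 : levN T SF hSF ((walkP hT SF hSF c).getVert (dP T SF hSF c - ℓ + 1)) = ℓ - 1 := by
    rw [lev_getVert_walkP hSF hc (by omega)]; omega
  have levw : levN T SF hSF w = ℓ := pad_lev hSF hc h1 h2
  have hne13 : (walkP hT SF hSF c).getVert (dP T SF hSF c - ℓ - 1)
      ≠ (walkP hT SF hSF c).getVert (dP T SF hSF c - ℓ + 1) := by
    intro hcontra; rw [hcontra] at lev1; omega
  have hne23 : (walkP hT SF hSF c').getVert (dP T SF hSF c' - ℓ - 1)
      ≠ (walkP hT SF hSF c).getVert (dP T SF hSF c - ℓ + 1) := by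
    intro hcontra; rw [hcontra] at lev2; omega
  have hdeg : 3 ≤ T.degree w :=
    three_le_degree adj1.symm adj2.symm adj3 hne hne13 hne23
  have : levN T SF hSF w = 0 := (levN_eq_zero_iff hT hSF).2 (hSFdeg w hdeg)
  omega

lemma pad_inj_aux [DecidableRel T.Adj] (hSFdeg : ∀ v : V, 3 ≤ T.degree v → v ∈ SF) :
    ∀ (j ℓ : ℕ), ℓ + j = k → 1 ≤ ℓ → ∀ {c c' : Finset V}, c ∈ piecesF hT SF k →
      c' ∈ piecesF hT SF k → padP hT SF hSF k c ℓ = padP hT SF hSF k c' ℓ → c = c' := by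
  intro j
  induction j with
  | zero =>
    intro ℓ hjk h1 c c' hc hc' h
    have hlk : ℓ = k := by omega
    subst hlk
    have heq := pad_step hSF hSFdeg hc hc' h1 (le_refl ℓ) h
    have hd := dP_gt hSF hc
    have hd' := dP_gt hSF hc'
    have hmem : (walkP hT SF hSF c).getVert (dP T SF hSF c - ℓ - 1) ∈ c :=
      walkP_prefix_mem hSF hc (by omega)
    have hmem' : (walkP hT SF hSF c').getVert (dP T SF hSF c' - ℓ - 1) ∈ c' :=
      walkP_prefix_mem hSF hc' (by omega)
    rw [heq] at hmem
    exact piece_eq_of_inter hc hc' hmem hmem'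
  | succ j ih =>
    intro ℓ hjk h1 c c' hc hc' h
    have heq := pad_step hSF hSFdeg hc hc' h1 (by omega) h
    apply ih (ℓ + 1) (by omega) (by omega) hc hc'
    rw [padP, padP, (by omega : dP T SF hSF c - (ℓ + 1) = dP T SF hSF c - ℓ - 1),
      (by omega : dP T SF hSF c' - (ℓ + 1) = dP T SF hSF c' - ℓ - 1)]
    exact heq

end Count

section Count2
variable {V : Type*} [DecidableEq V] [Fintype V] {T : SimpleGraph V}

lemma sum_pieces_card (hT : T.IsTree) (SF : Finset V) (k : ℕ) :
    (DDset T SF k).card = ∑ c ∈ piecesF hT SF k, c.card := by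
  classical
  rw [Finset.card_eq_sum_card_fiberwise
    (f := clsF hT SF k) (t := piecesF hT SF k)
    (fun x hx => Finset.mem_image_of_mem _ hx)]
  apply Finset.sum_congr rfl
  intro c hc
  congr 1
  ext x
  simp only [Finset.mem_filter]
  constructor
  · rintro ⟨hxD, hcl⟩
    rw [← hcl]
    exact self_mem_clsF hxD
  · intro hx
    exact ⟨piecesF_sub hc hx, (piece_eq_clsF hc hx).symm⟩

lemma master_count [DecidableRel T.Adj] {hT : T.IsTree} {SF : Finset V} {k : ℕ}
    (hSF : SF.Nonempty) (hSFdeg : ∀ v : V, 3 ≤ T.degree v → v ∈ SF) :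
    SF.card + (piecesF hT SF k).card * k + (∑ c ∈ piecesF hT SF k, c.card)
      ≤ Fintype.card V := by
  classical
  have hmap : ∀ v : V, v ∈ Finset.univ →
      min (levN T SF hSF v) (k+1) ∈ Finset.range (k+2) :=
    fun v _ => Finset.mem_range.2 (by omega)
  have htot : Fintype.card V = ∑ ℓ ∈ Finset.range (k+2),
      (Finset.univ.filter (fun v => min (levN T SF hSF v) (k+1) = ℓ)).card := by
    rw [← Finset.card_univ]
    exact Finset.card_eq_sum_card_fiberwise hmap
  have hSFeq : (Finset.univ.filter (fun v => min (levN T SF hSF v) (k+1) = 0)) = SF := by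
    ext v
    simp only [Finset.mem_filter, Finset.mem_univ, true_and]
    rw [← levN_eq_zero_iff hT hSF]
    omega
  have hDDeq : (Finset.univ.filter (fun v => min (levN T SF hSF v) (k+1) = k+1))
      = DDset T SF k := by
    ext v
    simp only [Finset.mem_filter, Finset.mem_univ, true_and]
    rw [mem_DD_iff_lev hSF]
    omega
  have hmid : ∀ i, i < k → (piecesF hT SF k).card ≤
      (Finset.univ.filter (fun v => min (levN T SF hSF v) (k+1) = i+1)).card := by
    intro i hi
    apply Finset.card_le_card_of_injOn (fun c => padP hT SF hSF k c (i+1))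
    · intro c hc
      simp only [Finset.mem_coe, Finset.mem_filter, Finset.mem_univ, true_and]
      rw [pad_lev hSF hc (by omega) (by omega)]
      omega
    · intro c hc c' hc' h
      exact pad_inj_aux hSF hSFdeg (k - (i+1)) (i+1) (by omega) (by omega) hc hc' h
  have hsplit : ∑ ℓ ∈ Finset.range (k+2),
      (Finset.univ.filter (fun v => min (levN T SF hSF v) (k+1) = ℓ)).card
      = ((∑ i ∈ Finset.range k,
          (Finset.univ.filter (fun v => min (levN T SF hSF v) (k+1) = i+1)).card)
        + (Finset.univ.filter (fun v => min (levN T SF hSF v) (k+1) = 0)).card)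
        + (Finset.univ.filter (fun v => min (levN T SF hSF v) (k+1) = k+1)).card := by
    rw [Finset.sum_range_succ, Finset.sum_range_succ']
  have hmidsum : (piecesF hT SF k).card * k ≤ ∑ i ∈ Finset.range k,
      (Finset.univ.filter (fun v => min (levN T SF hSF v) (k+1) = i+1)).card := by
    calc (piecesF hT SF k).card * k
        = ∑ _i ∈ Finset.range k, (piecesF hT SF k).card := by
          rw [Finset.sum_const, Finset.card_range, smul_eq_mul, mul_comm]
      _ ≤ _ := Finset.sum_le_sum (fun i hi => hmid i (Finset.mem_range.1 hi))
  have hDDcard := sum_pieces_card hT SF k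
  rw [htot, hsplit, hSFeq, hDDeq, ← hDDcard]
  omega

lemma pieces_card_le_one_of_empty (hT : T.IsTree) (k : ℕ) :
    (piecesF hT (∅ : Finset V) k).card ≤ 1 := by
  classical
  rw [Finset.card_le_one]
  intro c hc c' hc'
  obtain ⟨v, hv, rfl⟩ := Finset.mem_image.1 hc
  obtain ⟨v', hv', rfl⟩ := Finset.mem_image.1 hc'
  apply clsF_eq_of_R
  intro x hx
  rw [mem_DDset]
  intro u hu
  exact absurd hu (Finset.notMem_empty u)

end Count2

section ListAux

lemma list_sum_getD (l : List (Finset ℕ)) : True := trivial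

lemma sum_range_getD {α : Type*} (l : List α) (d : α) (f : α → ℕ) :
    ∑ i ∈ Finset.range l.length, f (l.getD i d) = (l.map f).sum := by
  induction l with
  | nil => simp
  | cons a l ih =>
    rw [List.length_cons, Finset.sum_range_succ']
    simp only [List.getD_cons_succ, List.getD_cons_zero, List.map_cons, List.sum_cons]
    rw [ih]
    omega

end ListAux

section Main
variable {V : Type*} [DecidableEq V] [Fintype V] {T : SimpleGraph V}

theorem main_cover [DecidableRel T.Adj] [Nonempty V] (hT : T.IsTree)
    (k : ℕ) (hk1 : 1 ≤ k) (hk : Fintype.card V ≤ k * k)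
    (SF : Finset V) (hSFiff : ∀ v : V, v ∈ SF ↔ 3 ≤ T.degree v) :
    ∃ x : Fin (k + SF.card) → V, ∀ v : V, ∃ i : Fin (k + SF.card),
      T.dist (x i) v ≤ (k + SF.card) - 1 - (i : ℕ) := by
  classical
  have hSFdeg : ∀ v : V, 3 ≤ T.degree v → v ∈ SF := fun v h => (hSFiff v).2 h
  set s := SF.card with hs
  set m := k + s with hm
  set PL := (piecesF hT SF k).toList with hPL
  set t := PL.length with ht
  have htcard : t = (piecesF hT SF k).card := Finset.length_toList _
  set b : ℕ → ℕ := fun i => (PL.getD i ∅).card with hb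
  have hPLmem : ∀ i, i < t → PL.getD i ∅ ∈ piecesF hT SF k := by
    intro i hi
    rw [List.getD_eq_getElem _ _ hi]
    exact Finset.mem_toList.1 (List.getElem_mem _)
  have hbpos : ∀ i, i < t → 1 ≤ b i := by
    intro i hi
    exact Finset.card_pos.2 (piece_nonempty (hPLmem i hi))
  have hbsum : ∑ i ∈ Finset.range t, b i = ∑ c ∈ piecesF hT SF k, c.card := by
    rw [hb]
    rw [sum_range_getD PL ∅ Finset.card]
    exact Finset.sum_map_toList _ _
  have hfilt : ((Finset.range t).filter (fun i => b i ≠ 0)).card = t := by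
    rw [Finset.filter_true_of_mem, Finset.card_range]
    intro i hi
    have := hbpos i (Finset.mem_range.1 hi)
    omega
  have Hcore : (∑ i ∈ Finset.range t, b i) +
      (((Finset.range t).filter (fun i => b i ≠ 0)).card - 1) * k ≤ k * k := by
    rw [hfilt, hbsum]
    rcases Finset.eq_empty_or_nonempty SF with hSFe | hSFne
    · have ht1 : t ≤ 1 := by
        rw [htcard, hSFe]
        exact pieces_card_le_one_of_empty hT k
      have hsum_le : ∑ c ∈ piecesF hT SF k, c.card ≤ Fintype.card V := by
        rcases Nat.eq_zero_or_pos t with ht0 | htpos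
        · rw [htcard] at ht0
          rw [Finset.card_eq_zero.1 ht0]
          simp
        · have ht1' : (piecesF hT SF k).card = 1 := by omega
          obtain ⟨c, hc⟩ := Finset.card_eq_one.1 ht1'
          rw [hc, Finset.sum_singleton]
          exact Finset.card_le_card (Finset.subset_univ c) |>.trans (le_of_eq (Finset.card_univ))
      have he0 : (t - 1) * k = 0 := by
        have : t - 1 = 0 := by omega
        rw [this, Nat.zero_mul]
      rw [he0]
      omega
    · have hmc := master_count (hT := hT) (k := k) hSFne hSFdeg
      have h1 : (t - 1) * k ≤ t * k := Nat.mul_le_mul_right _ (by omega)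
      have h2 : t * k = (piecesF hT SF k).card * k := by rw [htcard]
      have hs1 : 1 ≤ s := by rw [hs]; exact Finset.card_pos.2 hSFne
      omega
  obtain ⟨g, hg⟩ := core_exists t k b Hcore
  have hYZex : ∀ c ∈ piecesF hT SF k, ∃ pr : V × V,
      (∀ x, x ∈ c ↔ x ∈ (geod hT pr.1 pr.2).support) ∧ T.dist pr.1 pr.2 + 1 = c.card := by
    intro c hc
    obtain ⟨y, z, h1, h2⟩ := piece_is_geodesic hSFdeg hc
    exact ⟨(y, z), h1, h2⟩
  set YZ : Finset V → V × V := fun c =>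
    if h : ∃ pr : V × V, ((∀ x, x ∈ c ↔ x ∈ (geod hT pr.1 pr.2).support)
        ∧ T.dist pr.1 pr.2 + 1 = c.card) then h.choose
    else (Classical.arbitrary V, Classical.arbitrary V) with hYZdef
  have hYZ : ∀ c ∈ piecesF hT SF k,
      (∀ x, x ∈ c ↔ x ∈ (geod hT (YZ c).1 (YZ c).2).support)
        ∧ T.dist (YZ c).1 (YZ c).2 + 1 = c.card := by
    intro c hc
    rw [hYZdef]
    simp only
    rw [dif_pos (hYZex c hc)]
    exact (hYZex c hc).choose_spec
  set SFL := SF.toList with hSFL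
  have hSFLlen : SFL.length = s := Finset.length_toList _
  set ctr : ℕ → V := fun r =>
    if h : (g r).1 < t ∧ (g r).2 < b (g r).1 then
      (geod hT (YZ (PL.getD (g r).1 ∅)).1 (YZ (PL.getD (g r).1 ∅)).2).getVert (g r).2
    else Classical.arbitrary V with hctrdef
  refine ⟨fun i =>
    if (i : ℕ) < s then SFL.getD (i : ℕ) (Classical.arbitrary V)
    else ctr (m - 1 - (i : ℕ)), ?_⟩
  intro v
  by_cases hvD : v ∈ DDset T SF k
  · -- covered by a piece ball
    have hc : clsF hT SF k v ∈ piecesF hT SF k := Finset.mem_image_of_mem _ hvD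
    set c := clsF hT SF k v with hcdef
    have hvc : v ∈ c := self_mem_clsF hvD
    have hcPL : c ∈ PL := Finset.mem_toList.2 hc
    set ip := PL.idxOf c with hipdef
    have hit : ip < t := List.idxOf_lt_length_iff.2 hcPL
    have hPLi : PL.getD ip ∅ = c := by
      rw [List.getD_eq_getElem _ _ hit]
      exact List.getElem_idxOf hit
    have hbi : b ip = c.card := by
      show (PL.getD ip ∅).card = c.card
      rw [hPLi]
    obtain ⟨hsupp, hcard⟩ := hYZ c hc
    obtain ⟨pos, hpos, hposle⟩ :=
      SimpleGraph.Walk.mem_support_iff_exists_getVert.1 ((hsupp v).1 hvc)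
    have hlen : (geod hT (YZ c).1 (YZ c).2).length = T.dist (YZ c).1 (YZ c).2 :=
      geod_length hT _ _
    have hposb : pos < b ip := by omega
    obtain ⟨r, hr, cp, hgr, hcp, hc1, hc2⟩ := hg ip hit pos hposb
    have hg1 : (g r).1 = ip := by rw [hgr]
    have hg2 : (g r).2 = cp := by rw [hgr]
    have hslotge : s ≤ m - 1 - r := by omega
    have hslotm : m - 1 - r < m := by omega
    refine ⟨⟨m - 1 - r, hslotm⟩, ?_⟩
    have hrr : m - 1 - (m - 1 - r) = r := by omega
    have hctr : ctr r = (geod hT (YZ c).1 (YZ c).2).getVert cp := by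
      show (if h : (g r).1 < t ∧ (g r).2 < b (g r).1 then
          (geod hT (YZ (PL.getD (g r).1 ∅)).1 (YZ (PL.getD (g r).1 ∅)).2).getVert (g r).2
        else Classical.arbitrary V) = _
      rw [dif_pos (by rw [hg1, hg2]; exact ⟨hit, hcp⟩), hg1, hg2, hPLi]
    have hdist : T.dist ((geod hT (YZ c).1 (YZ c).2).getVert cp) v ≤ r := by
      rw [← hpos]
      rcases le_total cp pos with hle | hle
      · have := dist_getVert_le hT (geod hT (YZ c).1 (YZ c).2) hle
        omega
      · have := dist_getVert_le hT (geod hT (YZ c).1 (YZ c).2) hle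
        rw [SimpleGraph.dist_comm]
        omega
    have hval : ((⟨m - 1 - r, hslotm⟩ : Fin m) : ℕ) = m - 1 - r := rfl
    simp only [hval]
    rw [if_neg (by omega), hrr, hctr]
    omega
  · -- covered by a branch-vertex ball
    obtain ⟨u, hu, hud⟩ : ∃ u ∈ SF, T.dist v u ≤ k := by
      by_contra h
      push_neg at h
      exact hvD (mem_DDset.2 (fun u hu => h u hu))
    have huL : u ∈ SFL := Finset.mem_toList.2 hu
    set j := SFL.idxOf u with hjdef
    have hjs : j < s := by rw [← hSFLlen]; exact List.idxOf_lt_length_iff.2 huL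
    have hjm : j < m := by omega
    refine ⟨⟨j, hjm⟩, ?_⟩
    have hval : ((⟨j, hjm⟩ : Fin m) : ℕ) = j := rfl
    simp only [hval]
    rw [if_pos hjs]
    rw [List.getD_eq_getElem _ _ (by omega : j < SFL.length)]
    rw [List.getElem_idxOf (by omega)]
    have hcm : T.dist u v = T.dist v u := SimpleGraph.dist_comm
    omega

end Main


theorem burning_tree_le_ceil_sqrt_add_high_degree {V : Type*} [Fintype V]
    (T : SimpleGraph V) [DecidableRel T.Adj] (hT : T.IsTree) (n3 : ℕ)
    (hn3 : {v : V | 3 ≤ T.degree v}.ncard = n3) :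
    burningNumber T ≤ ⌈Real.sqrt (Fintype.card V)⌉₊ + n3 := by
  classical
  rcases isEmpty_or_nonempty V with hV | hV
  · have h0 : 0 ∈ {k | ∃ x : Fin k → V, ∀ v : V, ∃ i : Fin k,
        v ∈ _root_.ball T (x i) (k - 1 - (i : ℕ))} :=
      ⟨Fin.elim0, fun v => (IsEmpty.false v).elim⟩
    exact le_trans (Nat.sInf_le h0) (Nat.zero_le _)
  · set n := Fintype.card V with hn
    set k := ⌈Real.sqrt n⌉₊ with hkdef
    have hk : n ≤ k * k := by
      have h1 : Real.sqrt n ≤ (k : ℝ) := Nat.le_ceil _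
      have h2 : (n : ℝ) ≤ (k : ℝ) * k := by
        have h3 := Real.sq_sqrt (by positivity : (0:ℝ) ≤ (n:ℝ))
        nlinarith [Real.sqrt_nonneg (n:ℝ)]
      exact_mod_cast h2
    have hk1 : 1 ≤ k := by
      have hn1 : 1 ≤ n := Fintype.card_pos
      by_contra h
      have hk0 : k = 0 := by omega
      rw [hk0] at hk
      omega
    set SF := Finset.univ.filter (fun v => 3 ≤ T.degree v) with hSFdef
    have hSFiff : ∀ v : V, v ∈ SF ↔ 3 ≤ T.degree v := by
      intro v; simp [hSFdef]
    obtain ⟨x, hx⟩ := main_cover hT k hk1 hk SF hSFiff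
    have hmem : (k + SF.card) ∈ {k' | ∃ x : Fin k' → V, ∀ v : V, ∃ i : Fin k',
        v ∈ _root_.ball T (x i) (k' - 1 - (i : ℕ))} := by
      refine ⟨x, fun v => ?_⟩
      obtain ⟨i, hi⟩ := hx v
      exact ⟨i, hT.isConnected.preconnected _ _, hi⟩
    have hcard : SF.card = n3 := by
      rw [← hn3, Set.ncard_eq_toFinset_card']
      congr 1
      ext v
      simp [hSFdef, Set.mem_toFinset]
    calc burningNumber T ≤ k + SF.card := Nat.sInf_le hmem
      _ = ⌈Real.sqrt n⌉₊ + n3 := by rw [hcard]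
end
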